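/- arXiv:1608.05666 — 2 statements merged into one kernel-verified Lean document; each statement's English description precedes it below -/
import Mathlib

section
/- Let S be a numerical semigroup of genus g with ew(S) ≤ g − 2 and ew(S) ≥ 1. Then there exists k ∈ S and a numerical semigroup S' of genus g − 1 such that S' = slide_k(S), S' is secundive, and ew(S') = ew(S) − 1. -/
/-- A numerical semigroup: a cofinite subset of ℕ containing 0 and closed under addition. -/
def IsNumericalSemigroup (S : Set ℕ) : Prop :=
  0 ∈ S ∧ {n : ℕ | n ∉ S}.Finite ∧ ∀ a ∈ S, ∀ b ∈ S, a + b ∈ S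

/-- The genus: number of gaps. -/
noncomputable def genus (S : Set ℕ) : ℕ := {n : ℕ | n ∉ S}.ncard

/-- A generator: a positive element of S not expressible as a sum of two positive elements of S. -/
def IsGenerator (S : Set ℕ) (a : ℕ) : Prop :=
  a ∈ S ∧ 0 < a ∧ ¬ ∃ x ∈ S, ∃ y ∈ S, 0 < x ∧ 0 < y ∧ x + y = a

/-- Effective weight: number of pairs (a,b), 0 < a < b, a a generator, b a gap. -/
noncomputable def ew (S : Set ℕ) : ℕ :=
  {p : ℕ × ℕ | p.1 < p.2 ∧ IsGenerator S p.1 ∧ p.2 ∉ S}.ncard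

/-- Weight: number of pairs (a,b), 0 < a < b, a ∈ S, b a gap. -/
noncomputable def wt (S : Set ℕ) : ℕ :=
  {p : ℕ × ℕ | 0 < p.1 ∧ p.1 < p.2 ∧ p.1 ∈ S ∧ p.2 ∉ S}.ncard

/-- Primitivity: every gap is less than the sum of any two positive elements of S. -/
def IsPrimitive (S : Set ℕ) : Prop :=
  ∀ b ∉ S, ∀ x ∈ S, 0 < x → ∀ y ∈ S, 0 < y → b < x + y

/-- Secundive: the largest gap is smaller than the sum of the two smallest generators. -/
def Secundive (S : Set ℕ) : Prop :=
  ∀ f m n : ℕ, f ∉ S →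
    IsGenerator S m → (∀ a, IsGenerator S a → m ≤ a) →
    IsGenerator S n → n ≠ m → (∀ a, IsGenerator S a → a ≠ m → n ≤ a) →
    f < m + n

/-- λ(S): number of gaps b such that b + a ∈ S for every positive a ∈ S. -/
noncomputable def lambdaS (S : Set ℕ) : ℕ :=
  {b : ℕ | b ∉ S ∧ ∀ a ∈ S, 0 < a → b + a ∈ S}.ncard

/-- The slide operation. -/
def slide (k s : ℕ) : ℕ :=
  if k ∣ s then s else if s % k = 1 then s - 2 else s - 1

namespace NSaux

variable {S : Set ℕ} {k : ℕ}

lemma mul_mem (hS : IsNumericalSemigroup S) (hk : k ∈ S) : ∀ j, j * k ∈ S := by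
  intro j
  induction j with
  | zero => simpa using hS.1
  | succ n ih => have := hS.2.2 _ ih _ hk; simpa [Nat.succ_mul] using this

lemma dvd_mem (hS : IsNumericalSemigroup S) (hk : k ∈ S) {n : ℕ} (h : k ∣ n) : n ∈ S := by
  obtain ⟨j, rfl⟩ := h
  simpa [Nat.mul_comm] using mul_mem hS hk j

/-- elements of S congruent to 1 mod k, with 1 ∉ S, are ≥ k+1 -/
lemma ge_of_mod_one (h1 : (1:ℕ) ∉ S) {s : ℕ} (hs : s ∈ S) (hm : s % k = 1) : k + 1 ≤ s := by
  have h2k : 1 < k := by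
    by_contra h
    push_neg at h
    interval_cases k
    · simp at hm; subst hm; exact h1 hs
    · simp [Nat.mod_one] at hm
  have hd := Nat.div_add_mod s k
  rcases Nat.eq_zero_or_pos (s / k) with h0 | h0
  · exfalso; apply h1; rw [h0] at hd; simp at hd; rwa [← hd, hm] at hs
  · have : k * 1 ≤ k * (s / k) := Nat.mul_le_mul_left k h0
    omega

lemma slide_self_of_dvd {n : ℕ} (h : k ∣ n) : slide k n = n := by simp [slide, h]

lemma mem_slide_dvd (hS : IsNumericalSemigroup S) (hk : k ∈ S) {n : ℕ} (h : k ∣ n) :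
    n ∈ slide k '' S :=
  ⟨n, dvd_mem hS hk h, slide_self_of_dvd h⟩

lemma mem_slide_mid (hS : IsNumericalSemigroup S) (hk : k ∈ S) (h2 : 2 ≤ k)
    (h1 : (1:ℕ) ∉ S) {n : ℕ} (hr0 : n % k ≠ 0) (hrt : n % k ≠ k - 1) :
    n ∈ slide k '' S ↔ n + 1 ∈ S := by
  have hd := Nat.div_add_mod n k
  have hrk : n % k < k := Nat.mod_lt _ (by omega)
  constructor
  · rintro ⟨s, hs, hsl⟩
    unfold slide at hsl
    split_ifs at hsl with hdvd hone
    · subst hsl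
      exact absurd (Nat.mod_eq_zero_of_dvd hdvd) hr0
    · -- s % k = 1, n = s - 2, so n % k = k - 1 : contradiction
      exfalso
      have hsk : k + 1 ≤ s := ge_of_mod_one h1 hs hone
      have hd2 := Nat.div_add_mod s k
      have hq : 1 ≤ s / k := by
        by_contra hcon
        push_neg at hcon
        have h0 : s / k = 0 := Nat.lt_one_iff.mp hcon
        rw [h0, Nat.mul_zero] at hd2
        omega
      obtain ⟨q, hqe⟩ : ∃ q, s / k = q + 1 := ⟨s / k - 1, by omega⟩
      rw [hqe, Nat.mul_succ] at hd2
      have hn : n = k * q + (k - 1) := by omega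
      have : n % k = k - 1 := by
        rw [hn, Nat.add_comm, Nat.add_mul_mod_self_left]
        exact Nat.mod_eq_of_lt (by omega)
      exact hrt this
    · have hs2 : 2 ≤ s := by
        rcases Nat.lt_or_ge s 2 with h | h
        · interval_cases s
          · exact absurd ⟨0, by simp⟩ hdvd
          · exact absurd hs h1
        · exact h
      have : s = n + 1 := by omega
      rwa [← this]
  · intro h
    refine ⟨n + 1, h, ?_⟩
    have hmod : (n + 1) % k = n % k + 1 := by
      conv_lhs => rw [← hd]
      rw [Nat.add_assoc, Nat.add_comm (k * (n/k)), Nat.add_mul_mod_self_left]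
      exact Nat.mod_eq_of_lt (by omega)
    have hnd : ¬ k ∣ (n + 1) := by
      intro hdvd
      have := Nat.mod_eq_zero_of_dvd hdvd
      omega
    have hn1 : (n + 1) % k ≠ 1 := by rw [hmod]; omega
    unfold slide
    rw [if_neg hnd, if_neg hn1]
    omega

lemma mem_slide_top (hS : IsNumericalSemigroup S) (hk : k ∈ S) (h2 : 2 ≤ k)
    (h1 : (1:ℕ) ∉ S) {n : ℕ} (hrt : n % k = k - 1) :
    n ∈ slide k '' S ↔ n + 2 ∈ S := by
  have hd := Nat.div_add_mod n k
  constructor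
  · rintro ⟨s, hs, hsl⟩
    unfold slide at hsl
    split_ifs at hsl with hdvd hone
    · subst hsl
      have := Nat.mod_eq_zero_of_dvd hdvd
      omega
    · have hsk : k + 1 ≤ s := ge_of_mod_one h1 hs hone
      have : s = n + 2 := by omega
      rwa [← this]
    · -- n = s - 1 with s % k ∉ {0,1}; then n % k = s % k - 1 ≠ k - 1 : contradiction
      exfalso
      have hmod0 : s % k ≠ 0 := fun h => hdvd (Nat.dvd_of_mod_eq_zero h)
      have hs1 : 1 ≤ s := by
        rcases Nat.eq_zero_or_pos s with rfl | h
        · simp at hmod0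
        · exact h
      have hd2 := Nat.div_add_mod s k
      have hsmk : s % k < k := Nat.mod_lt _ (by omega)
      have hn : n = k * (s / k) + (s % k - 1) := by omega
      have : n % k = s % k - 1 := by
        rw [hn, Nat.add_comm, Nat.add_mul_mod_self_left]
        exact Nat.mod_eq_of_lt (by omega)
      omega
  · intro h
    refine ⟨n + 2, h, ?_⟩
    have hrk : n % k < k := Nat.mod_lt _ (by omega)
    have hmod : (n + 2) % k = 1 := by
      have : n + 2 = k * (n / k) + (k - 1) + 2 := by omega
      rw [this]
      have : k * (n / k) + (k - 1) + 2 = 1 + k * (n / k + 1) := by ring_nf; omega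
      rw [this, Nat.add_mul_mod_self_left]
      exact Nat.mod_eq_of_lt (by omega)
    unfold slide
    rw [if_neg, if_pos hmod]
    · omega
    · intro hdvd; have := Nat.mod_eq_zero_of_dvd hdvd; omega

end NSaux

namespace NSaux

variable {S : Set ℕ} {k : ℕ}

/-- the gap/element sliding map -/
def gmap (k b : ℕ) : ℕ := if b % k = 1 then b - 2 else b - 1

lemma mod_one_facts (h2 : 2 ≤ k) {b : ℕ} (hb : b % k = 1) (hb1 : b ≠ 1) :
    k + 1 ≤ b ∧ (b - 2) % k = k - 1 := by
  have hd := Nat.div_add_mod b k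
  have hq : 1 ≤ b / k := by
    by_contra hcon
    push_neg at hcon
    have h0 : b / k = 0 := Nat.lt_one_iff.mp hcon
    rw [h0, Nat.mul_zero] at hd
    omega
  obtain ⟨q, hqe⟩ : ∃ q, b / k = q + 1 := ⟨b / k - 1, by omega⟩
  rw [hqe, Nat.mul_succ] at hd
  have hge : k + 1 ≤ b := by omega
  refine ⟨hge, ?_⟩
  have : b - 2 = k * q + (k - 1) := by omega
  rw [this, Nat.add_comm, Nat.add_mul_mod_self_left]
  exact Nat.mod_eq_of_lt (by omega)

lemma mod_mid_facts (h2 : 2 ≤ k) {b : ℕ} (hb0 : b % k ≠ 0) (hb1 : b % k ≠ 1) :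
    2 ≤ b ∧ (b - 1) % k = b % k - 1 := by
  have hd := Nat.div_add_mod b k
  have hrk : b % k < k := Nat.mod_lt _ (by omega)
  have h2b : 2 ≤ b % k := by omega
  refine ⟨by omega, ?_⟩
  have : b - 1 = k * (b / k) + (b % k - 1) := by omega
  rw [this, Nat.add_comm, Nat.add_mul_mod_self_left]
  exact Nat.mod_eq_of_lt (by omega)

lemma mod_top_plus2 (h2 : 2 ≤ k) {n : ℕ} (hn : n % k = k - 1) : (n + 2) % k = 1 := by
  have hd := Nat.div_add_mod n k
  have : n + 2 = 1 + k * (n / k + 1) := by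
    rw [Nat.mul_succ]; omega
  rw [this, Nat.add_mul_mod_self_left]
  exact Nat.mod_eq_of_lt (by omega)

lemma mod_mid_plus1 (h2 : 2 ≤ k) {n : ℕ} (hn0 : n % k ≠ 0) (hnt : n % k ≠ k - 1) :
    (n + 1) % k = n % k + 1 := by
  have hd := Nat.div_add_mod n k
  have hrk : n % k < k := Nat.mod_lt _ (by omega)
  have : n + 1 = k * (n / k) + (n % k + 1) := by omega
  rw [this, Nat.add_comm, Nat.add_mul_mod_self_left]
  exact Nat.mod_eq_of_lt (by omega)

/-- membership in T for n with both n+1 and n+2 in S -/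
lemma mem_T_of_both (hS : IsNumericalSemigroup S) (hk : k ∈ S) (h2 : 2 ≤ k)
    (h1 : (1:ℕ) ∉ S) {n : ℕ} (hn1 : n + 1 ∈ S) (hn2 : n + 2 ∈ S) : n ∈ slide k '' S := by
  by_cases h0 : n % k = 0
  · exact mem_slide_dvd hS hk (Nat.dvd_of_mod_eq_zero h0)
  · by_cases ht : n % k = k - 1
    · exact (mem_slide_top hS hk h2 h1 ht).mpr hn2
    · exact (mem_slide_mid hS hk h2 h1 h0 ht).mpr hn1

lemma gapsT_eq (hS : IsNumericalSemigroup S) (hk : k ∈ S) (h2 : 2 ≤ k)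
    (h1 : (1:ℕ) ∉ S) :
    {n : ℕ | n ∉ slide k '' S} = gmap k '' ({n : ℕ | n ∉ S} \ {1}) := by
  ext n
  simp only [Set.mem_setOf_eq, Set.mem_image, Set.mem_diff, Set.mem_singleton_iff]
  constructor
  · intro hn
    have hr0 : n % k ≠ 0 := by
      intro h0
      exact hn (mem_slide_dvd hS hk (Nat.dvd_of_mod_eq_zero h0))
    by_cases ht : n % k = k - 1
    · have h2S : n + 2 ∉ S := fun h => hn ((mem_slide_top hS hk h2 h1 ht).mpr h)
      refine ⟨n + 2, ⟨h2S, by omega⟩, ?_⟩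
      unfold gmap
      rw [if_pos (mod_top_plus2 h2 ht)]
      omega
    · have h1S : n + 1 ∉ S := fun h => hn ((mem_slide_mid hS hk h2 h1 hr0 ht).mpr h)
      refine ⟨n + 1, ⟨h1S, by have := Nat.mod_le n k; omega⟩, ?_⟩
      have hrk : n % k < k := Nat.mod_lt _ (by omega)
      unfold gmap
      rw [if_neg (by rw [mod_mid_plus1 h2 hr0 ht]; omega)]
      omega
  · rintro ⟨b, ⟨hbS, hb1⟩, rfl⟩
    have hbk : b % k ≠ 0 := by
      intro h0
      exact hbS (dvd_mem hS hk (Nat.dvd_of_mod_eq_zero h0))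
    by_cases hb : b % k = 1
    · obtain ⟨hge, hmod⟩ := mod_one_facts h2 hb hb1
      unfold gmap
      rw [if_pos hb]
      intro hmem
      have h' := (mem_slide_top hS hk h2 h1 hmod).mp hmem
      rw [show b - 2 + 2 = b from by omega] at h'
      exact hbS h' 
    · obtain ⟨hge, hmod⟩ := mod_mid_facts h2 hbk hb
      have hrk : b % k < k := Nat.mod_lt _ (by omega)
      unfold gmap
      rw [if_neg hb]
      intro hmem
      have h' := (mem_slide_mid hS hk h2 h1 (n := b - 1) (by omega) (by omega)).mp hmem
      rw [show b - 1 + 1 = b from by omega] at h'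
      exact hbS h' 

lemma gmap_injOn (hS : IsNumericalSemigroup S) (hk : k ∈ S) (h2 : 2 ≤ k) :
    Set.InjOn (gmap k) ({n : ℕ | n ∉ S} \ {1}) := by
  rintro b ⟨hbS, hb1⟩ b' ⟨hbS', hb1'⟩ heq
  simp only [Set.mem_singleton_iff] at hb1 hb1'
  have hbk : b % k ≠ 0 := fun h0 => hbS (dvd_mem hS hk (Nat.dvd_of_mod_eq_zero h0))
  have hbk' : b' % k ≠ 0 := fun h0 => hbS' (dvd_mem hS hk (Nat.dvd_of_mod_eq_zero h0))
  unfold gmap at heq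
  by_cases hb : b % k = 1 <;> by_cases hb' : b' % k = 1
  · obtain ⟨hge, _⟩ := mod_one_facts h2 hb hb1
    obtain ⟨hge', _⟩ := mod_one_facts h2 hb' hb1'
    rw [if_pos hb, if_pos hb'] at heq
    omega
  · obtain ⟨hge, hmod⟩ := mod_one_facts h2 hb hb1
    obtain ⟨hge', hmod'⟩ := mod_mid_facts h2 hbk' hb'
    rw [if_pos hb, if_neg hb'] at heq
    rw [heq] at hmod
    have hrk' : b' % k < k := Nat.mod_lt _ (by omega)
    omega
  · obtain ⟨hge, hmod⟩ := mod_mid_facts h2 hbk hb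
    obtain ⟨hge', hmod'⟩ := mod_one_facts h2 hb' hb1'
    rw [if_neg hb, if_pos hb'] at heq
    rw [← heq] at hmod'
    have hrk : b % k < k := Nat.mod_lt _ (by omega)
    omega
  · rw [if_neg hb, if_neg hb'] at heq
    obtain ⟨hge, _⟩ := mod_mid_facts h2 hbk hb
    obtain ⟨hge', _⟩ := mod_mid_facts h2 hbk' hb'
    omega

lemma genus_slide (hS : IsNumericalSemigroup S) (hk : k ∈ S) (h2 : 2 ≤ k)
    (h1 : (1:ℕ) ∉ S) : genus (slide k '' S) = genus S - 1 := by
  unfold genus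
  rw [gapsT_eq hS hk h2 h1, Set.ncard_image_of_injOn (gmap_injOn hS hk h2)]
  exact Set.ncard_diff_singleton_of_mem (by exact h1)

lemma gapsT_finite (hS : IsNumericalSemigroup S) (hk : k ∈ S) (h2 : 2 ≤ k)
    (h1 : (1:ℕ) ∉ S) : {n : ℕ | n ∉ slide k '' S}.Finite := by
  rw [gapsT_eq hS hk h2 h1]
  exact Set.Finite.image _ (Set.Finite.diff hS.2.1)

end NSaux

namespace NSaux

variable {S : Set ℕ} {F m : ℕ}

lemma one_not_mem (hS : IsNumericalSemigroup S) (hg : 1 ≤ genus S) : (1:ℕ) ∉ S := by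
  intro h1
  have hall : ∀ n, n ∈ S := by
    intro n
    have := mul_mem hS h1 n
    simpa using this
  have : {n : ℕ | n ∉ S} = ∅ := by
    ext n; simp [hall n]
  unfold genus at hg
  rw [this] at hg
  simp at hg

lemma isGen_of_small (hS : IsNumericalSemigroup S)
    (hmmin : ∀ x ∈ S, 0 < x → m ≤ x) {a : ℕ}
    (ha : a ∈ S) (ha0 : 0 < a) (ha2 : a < 2 * m) : IsGenerator S a := by
  refine ⟨ha, ha0, ?_⟩
  rintro ⟨x, hx, y, hy, hx0, hy0, hxy⟩
  have := hmmin x hx hx0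
  have := hmmin y hy hy0
  omega

lemma pairs_finite (hS : IsNumericalSemigroup S)
    (hFmax : ∀ b, b ∉ S → b ≤ F) :
    {p : ℕ × ℕ | p.1 < p.2 ∧ IsGenerator S p.1 ∧ p.2 ∉ S}.Finite := by
  apply Set.Finite.subset (Set.Finite.prod (Set.finite_Iic F) hS.2.1)
  rintro ⟨a, b⟩ ⟨hab, _, hb⟩
  exact ⟨Set.mem_Iic.mpr (le_trans (le_of_lt hab) (hFmax b hb)), hb⟩

lemma gaps_eq (hS : IsNumericalSemigroup S) (hm : m ∈ S)
    (hmmin : ∀ x ∈ S, 0 < x → m ≤ x) :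
    {n : ℕ | n ∉ S} = Set.Icc 1 (m-1) ∪ {b | b ∉ S ∧ m < b} := by
  ext b
  simp only [Set.mem_setOf_eq, Set.mem_union, Set.mem_Icc]
  constructor
  · intro hb
    rcases Nat.lt_trichotomy b m with h | h | h
    · left
      constructor
      · rcases Nat.eq_zero_or_pos b with rfl | h0
        · exact absurd hS.1 hb
        · exact h0
      · omega
    · exact absurd (h ▸ hm) hb
    · exact Or.inr ⟨hb, h⟩
  · rintro (⟨h1, h2⟩ | ⟨h1, _⟩)
    · intro hbS
      have := hmmin b hbS (by omega)
      have hm0 : 0 < m := lt_of_lt_of_le h1 (by omega)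
      omega
    · exact h1

lemma genus_decomp (hS : IsNumericalSemigroup S) (hm : m ∈ S)
    (hmmin : ∀ x ∈ S, 0 < x → m ≤ x) :
    genus S = (m - 1) + {b | b ∉ S ∧ m < b}.ncard := by
  unfold genus
  have hdisj : Disjoint (Set.Icc 1 (m-1)) {b | b ∉ S ∧ m < b} := by
    rw [Set.disjoint_left]
    rintro b hb ⟨_, hb2⟩
    simp only [Set.mem_Icc] at hb
    omega
  have hfin2 : {b | b ∉ S ∧ m < b}.Finite := Set.Finite.subset hS.2.1 (fun b hb => hb.1)
  rw [gaps_eq hS hm hmmin, Set.ncard_union_eq hdisj (Set.finite_Icc 1 (m-1)) hfin2]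
  have hIcc : (Set.Icc 1 (m-1)).ncard = m - 1 := by
    rw [← Finset.coe_Icc, Set.ncard_coe_finset, Nat.card_Icc]
    omega
  omega

lemma mpairs_sub (hS : IsNumericalSemigroup S) (hm : m ∈ S) (hm0 : 0 < m)
    (hmmin : ∀ x ∈ S, 0 < x → m ≤ x) :
    (fun b => ((m : ℕ), b)) '' {b | b ∉ S ∧ m < b} ⊆
      {p : ℕ × ℕ | p.1 < p.2 ∧ IsGenerator S p.1 ∧ p.2 ∉ S} := by
  rintro p ⟨b', ⟨hb1, hb2⟩, rfl⟩
  exact ⟨hb2, isGen_of_small (a := m) hS hmmin hm hm0 (by omega), hb1⟩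

lemma gt_gaps_ncard_le_ew (hS : IsNumericalSemigroup S) (hm : m ∈ S) (hm0 : 0 < m)
    (hmmin : ∀ x ∈ S, 0 < x → m ≤ x) (hFmax : ∀ b, b ∉ S → b ≤ F) :
    {b | b ∉ S ∧ m < b}.ncard ≤ ew S := by
  unfold ew
  calc {b | b ∉ S ∧ m < b}.ncard
      = ((fun b => ((m:ℕ), b)) '' {b | b ∉ S ∧ m < b}).ncard := by
        rw [Set.ncard_image_of_injOn]
        intro x _ y _ h
        injection h
    _ ≤ _ := Set.ncard_le_ncard (mpairs_sub hS hm hm0 hmmin) (pairs_finite hS hFmax)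

lemma m_lt_F (hS : IsNumericalSemigroup S) (hm : m ∈ S) (hm0 : 0 < m)
    (hmmin : ∀ x ∈ S, 0 < x → m ≤ x) (hF : F ∉ S) (hFmax : ∀ b, b ∉ S → b ≤ F)
    (h1 : 1 ≤ ew S) : m < F := by
  rcases Nat.lt_or_ge m F with h | h
  · exact h
  exfalso
  have hPS : {p : ℕ × ℕ | p.1 < p.2 ∧ IsGenerator S p.1 ∧ p.2 ∉ S} = ∅ := by
    ext ⟨a, b⟩
    simp only [Set.mem_setOf_eq, Set.mem_empty_iff_false, iff_false]
    rintro ⟨hab, ⟨haS, ha0, _⟩, hb⟩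
    have h1 := hmmin a haS ha0
    have h2 := hFmax b hb
    omega
  unfold ew at h1
  rw [hPS] at h1
  simp at h1

lemma m_ge_three (hS : IsNumericalSemigroup S) (hm : m ∈ S) (hm0 : 0 < m)
    (hmmin : ∀ x ∈ S, 0 < x → m ≤ x) (hF : F ∉ S) (hFmax : ∀ b, b ∉ S → b ≤ F)
    (h2 : ew S + 2 ≤ genus S) : 3 ≤ m := by
  have hkey := gt_gaps_ncard_le_ew (F := F) hS hm hm0 hmmin hFmax
  have hgen := genus_decomp hS hm hmmin
  omega

end NSaux

namespace NSaux

variable {S : Set ℕ} {F m : ℕ}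

lemma mod_add_cancel {x y c t : ℕ} (hm0 : 0 < m) (h0 : x % m = 0) (hxy : x + y = c)
    (hc : c % m = t) : y % m = t := by
  rw [← hc, ← hxy, Nat.add_mod, h0, Nat.zero_add, Nat.mod_mod_of_dvd y dvd_rfl]

lemma struct (hS : IsNumericalSemigroup S) (hm : m ∈ S) (hm0 : 0 < m)
    (hmmin : ∀ x ∈ S, 0 < x → m ≤ x) (hF : F ∉ S) (hFmax : ∀ b, b ∉ S → b ≤ F)
    (h2e : ew S + 2 ≤ genus S) :
    ∀ a ∈ S, ¬ m ∣ a → a + m ≤ F → False := by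
  intro a0 ha0 hnd0 hle0
  classical
  have hm3 : 3 ≤ m := m_ge_three hS hm hm0 hmmin hF hFmax h2e
  have hPex : ∃ v, v ∈ S ∧ ¬ m ∣ v ∧ v + m ≤ F := ⟨a0, ha0, hnd0, hle0⟩
  obtain ⟨v, ⟨hvS, hvnd, hvle⟩, hvmin⟩ :
      ∃ v, (v ∈ S ∧ ¬ m ∣ v ∧ v + m ≤ F) ∧
        ∀ x, x < v → ¬ (x ∈ S ∧ ¬ m ∣ x ∧ x + m ≤ F) :=
    ⟨Nat.find hPex, Nat.find_spec hPex, fun x hx => Nat.find_min hPex hx⟩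
  have hv0 : 0 < v := by
    rcases Nat.eq_zero_or_pos v with h | h
    · subst h; exact absurd (dvd_zero m) hvnd
    · exact h
  have hvm : m < v := by
    have h1 := hmmin v hvS hv0
    rcases Nat.eq_or_lt_of_le h1 with h | h
    · subst h; exact absurd dvd_rfl hvnd
    · exact h
  have hvgen : IsGenerator S v := by
    refine ⟨hvS, hv0, ?_⟩
    rintro ⟨x, hx, y, hy, hx0, hy0, hxy⟩
    have hxm := hmmin x hx hx0
    have hym := hmmin y hy hy0
    have hor : ¬ m ∣ x ∨ ¬ m ∣ y := by
      by_contra h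
      push_neg at h
      refine hvnd ?_
      rw [← hxy]
      exact Nat.dvd_add h.1 h.2
    rcases hor with h | h
    · exact hvmin x (by omega) ⟨hx, h, by omega⟩
    · exact hvmin y (by omega) ⟨hy, h, by omega⟩
  have hct : ∀ t : ℕ, ∃ x, x ∈ S ∧ x % m = t % m := by
    intro t
    refine ⟨t % m + (F + 1) * m, ?_, ?_⟩
    · by_contra hc
      have h1 := hFmax _ hc
      have h2 : F + 1 ≤ (F + 1) * m := Nat.le_mul_of_pos_right _ hm0
      omega
    · rw [Nat.add_mul_mod_self_right]
      exact Nat.mod_eq_of_lt (Nat.mod_lt _ hm0)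
  set cf : ℕ → ℕ := fun t => Nat.find (hct t) with hcfdef
  have hcfS : ∀ t, cf t ∈ S ∧ cf t % m = t % m := fun t => Nat.find_spec (hct t)
  have hcfmin : ∀ t x, x < cf t → ¬ (x ∈ S ∧ x % m = t % m) :=
    fun t x hx => Nat.find_min (hct t) hx
  set q : ℕ → ℕ × ℕ := fun t =>
    if cf t ≤ v + m then (cf t, F) else (v, cf t - m)
    with hqdef
  have hvmod : 1 ≤ v % m := by
    rcases Nat.eq_zero_or_pos (v % m) with h | h
    · exact absurd (Nat.dvd_of_mod_eq_zero h) hvnd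
    · exact h
  have hkey : ∀ t, 1 ≤ t → t ≤ m - 1 → t ≠ v % m →
      (q t ∈ {p : ℕ × ℕ | p.1 < p.2 ∧ IsGenerator S p.1 ∧ p.2 ∉ S} ∧ (q t).1 ≠ m ∧
        (((q t).1 ≠ v ∧ (q t).1 % m = t) ∨ ((q t).1 = v ∧ (q t).2 % m = t))) := by
    intro t ht1 ht2 htv
    have htm : t % m = t := Nat.mod_eq_of_lt (by omega)
    obtain ⟨hcS, hcmod⟩ := hcfS t
    have hcnd : ¬ m ∣ cf t := by
      intro hd
      have := Nat.mod_eq_zero_of_dvd hd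
      omega
    have hc0 : 0 < cf t := by
      rcases Nat.eq_zero_or_pos (cf t) with h | h
      · rw [h, Nat.zero_mod] at hcmod; omega
      · exact h
    have hcm : m < cf t := by
      have h1 := hmmin (cf t) hcS hc0
      rcases Nat.eq_or_lt_of_le h1 with h | h
      · rw [← h] at hcnd; exact absurd dvd_rfl hcnd
      · exact h
    have hcv : cf t ≠ v := by
      intro h
      rw [h] at hcmod
      omega
    by_cases hcle : cf t ≤ v + m
    · -- cf t is an effective generator; use pair (cf t, F)
      have hcgen : IsGenerator S (cf t) := by
        refine ⟨hcS, hc0, ?_⟩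
        rintro ⟨x, hx, y, hy, hx0, hy0, hxy⟩
        have hxm := hmmin x hx hx0
        have hym := hmmin y hy hy0
        by_cases hdx : m ∣ x
        · have h0 : x % m = 0 := Nat.mod_eq_zero_of_dvd hdx
          have hymod : y % m = t % m := mod_add_cancel hm0 h0 hxy hcmod
          exact hcfmin t y (by omega) ⟨hy, hymod⟩
        · by_cases hdy : m ∣ y
          · have h0 : y % m = 0 := Nat.mod_eq_zero_of_dvd hdy
            have hxmod : x % m = t % m := mod_add_cancel hm0 h0 (by omega : y + x = cf t) hcmod
            exact hcfmin t x (by omega) ⟨hx, hxmod⟩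
          · have hxv : v ≤ x := by
              by_contra hcon
              push_neg at hcon
              exact hvmin x hcon ⟨hx, hdx, by omega⟩
            have hyv : v ≤ y := by
              by_contra hcon
              push_neg at hcon
              exact hvmin y hcon ⟨hy, hdy, by omega⟩
            omega
      have hcF : cf t < F := by
        have : cf t ≠ F := fun h => hF (h ▸ hcS)
        omega
      have hq : q t = (cf t, F) := by
        simp only [hqdef]
        rw [if_pos hcle]
      rw [hq]
      refine ⟨⟨hcF, hcgen, hF⟩, ?_, Or.inl ⟨?_, ?_⟩⟩
      · simp only
        omega
      · simpa using hcv
      · simp only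
        omega
    · -- gap cf t - m above v; use pair (v, cf t - m)
      push_neg at hcle
      have hgap : cf t - m ∉ S := by
        intro hmem
        have hmod : (cf t - m) % m = t % m := by
          have heq : cf t - m + m = cf t := by omega
          rw [← hcmod]
          conv_rhs => rw [← heq]
          rw [Nat.add_mod_right]
        exact hcfmin t (cf t - m) (by omega) ⟨hmem, hmod⟩
      have hq : q t = (v, cf t - m) := by
        simp only [hqdef]
        rw [if_neg (by omega)]
      rw [hq]
      refine ⟨⟨by simp only; omega, hvgen, hgap⟩, by simp only; omega, Or.inr ⟨rfl, ?_⟩⟩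
      simp only
      have heq : cf t - m + m = cf t := by omega
      have hmod : (cf t - m) % m = t % m := by
        rw [← hcmod]
        conv_rhs => rw [← heq]
        rw [Nat.add_mod_right]
      omega
  -- assemble the counting contradiction
  set I : Set ℕ := Set.Icc 1 (m - 1) \ {v % m} with hIdef
  have hIfin : I.Finite := Set.Finite.diff (Set.finite_Icc _ _)
  have hIcard : I.ncard = m - 2 := by
    have hmv : v % m ∈ Set.Icc 1 (m - 1) := by
      simp only [Set.mem_Icc]
      have := Nat.mod_lt v hm0
      omega
    rw [hIdef, Set.ncard_diff_singleton_of_mem hmv, ← Finset.coe_Icc,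
      Set.ncard_coe_finset, Nat.card_Icc]
    omega
  have hmemI : ∀ t ∈ I, 1 ≤ t ∧ t ≤ m - 1 ∧ t ≠ v % m := by
    intro t ht
    rw [hIdef] at ht
    obtain ⟨ht1, ht2⟩ := ht
    simp only [Set.mem_Icc] at ht1
    simp only [Set.mem_singleton_iff] at ht2
    exact ⟨ht1.1, ht1.2, ht2⟩
  have hQinj : Set.InjOn q I := by
    intro t ht t' ht' heq
    obtain ⟨h1, h2, h3⟩ := hmemI t ht
    obtain ⟨h1', h2', h3'⟩ := hmemI t' ht'
    obtain ⟨_, _, hd⟩ := hkey t h1 h2 h3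
    obtain ⟨_, _, hd'⟩ := hkey t' h1' h2' h3'
    rcases hd with ⟨hne, hmod⟩ | ⟨he, hmod⟩ <;> rcases hd' with ⟨hne', hmod'⟩ | ⟨he', hmod'⟩
    · rw [← hmod, ← hmod', heq]
    · rw [heq, he'] at hne; exact absurd rfl hne
    · rw [← heq, he] at hne'; exact absurd rfl hne'
    · rw [← hmod, ← hmod', heq]
  have hQsub : q '' I ⊆ {p : ℕ × ℕ | p.1 < p.2 ∧ IsGenerator S p.1 ∧ p.2 ∉ S} := by
    rintro p ⟨t, ht, rfl⟩
    obtain ⟨h1, h2, h3⟩ := hmemI t ht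
    exact (hkey t h1 h2 h3).1
  have hdisj : Disjoint (q '' I) ((fun b => ((m:ℕ), b)) '' {b | b ∉ S ∧ m < b}) := by
    rw [Set.disjoint_left]
    rintro p ⟨t, ht, rfl⟩ ⟨b, hb, hpb⟩
    obtain ⟨h1, h2, h3⟩ := hmemI t ht
    have := (hkey t h1 h2 h3).2.1
    rw [← hpb] at this
    exact this rfl
  have hA : ((fun b => ((m:ℕ), b)) '' {b | b ∉ S ∧ m < b}).ncard = {b | b ∉ S ∧ m < b}.ncard := by
    rw [Set.ncard_image_of_injOn]
    intro x _ y _ h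
    injection h
  have hAfin : ((fun b => ((m:ℕ), b)) '' {b | b ∉ S ∧ m < b}).Finite :=
    Set.Finite.image _ (Set.Finite.subset hS.2.1 (fun b hb => hb.1))
  have hsub : (q '' I) ∪ ((fun b => ((m:ℕ), b)) '' {b | b ∉ S ∧ m < b}) ⊆
      {p : ℕ × ℕ | p.1 < p.2 ∧ IsGenerator S p.1 ∧ p.2 ∉ S} :=
    Set.union_subset hQsub (mpairs_sub hS hm hm0 hmmin)
  have hle : (m - 2) + {b | b ∉ S ∧ m < b}.ncard ≤ ew S := by
    have h1 : ((q '' I) ∪ ((fun b => ((m:ℕ), b)) '' {b | b ∉ S ∧ m < b})).ncard =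
        (m - 2) + {b | b ∉ S ∧ m < b}.ncard := by
      rw [Set.ncard_union_eq hdisj (Set.Finite.image _ hIfin) hAfin,
        Set.ncard_image_of_injOn hQinj, hIcard, hA]
    calc (m - 2) + {b | b ∉ S ∧ m < b}.ncard
        = ((q '' I) ∪ ((fun b => ((m:ℕ), b)) '' {b | b ∉ S ∧ m < b})).ncard := h1.symm
      _ ≤ _ := Set.ncard_le_ncard hsub (pairs_finite hS hFmax)
  have hgen := genus_decomp hS hm hmmin
  omega

end NSaux

namespace NSaux

variable {S : Set ℕ} {k : ℕ}

lemma mem_slide_elim (hS : IsNumericalSemigroup S) (hk : k ∈ S) (h2 : 2 ≤ k)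
    (h1 : (1:ℕ) ∉ S) {x : ℕ} (hx : x ∈ slide k '' S) :
    (k ∣ x) ∨ (x % k ≠ 0 ∧ x % k ≠ k - 1 ∧ x + 1 ∈ S) ∨ (x % k = k - 1 ∧ x + 2 ∈ S) := by
  by_cases h0 : x % k = 0
  · exact Or.inl (Nat.dvd_of_mod_eq_zero h0)
  · by_cases ht : x % k = k - 1
    · exact Or.inr (Or.inr ⟨ht, (mem_slide_top hS hk h2 h1 ht).mp hx⟩)
    · exact Or.inr (Or.inl ⟨h0, ht, (mem_slide_mid hS hk h2 h1 h0 ht).mp hx⟩)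

lemma gmap_inj_aux (h2 : 2 ≤ k) {x y : ℕ} (hx0 : x % k ≠ 0) (hx1 : x ≠ 1)
    (hy0 : y % k ≠ 0) (hy1 : y ≠ 1) (heq : gmap k x = gmap k y) : x = y := by
  unfold gmap at heq
  by_cases hx : x % k = 1 <;> by_cases hy : y % k = 1
  · obtain ⟨hge, _⟩ := mod_one_facts h2 hx hx1
    obtain ⟨hge', _⟩ := mod_one_facts h2 hy hy1
    rw [if_pos hx, if_pos hy] at heq
    omega
  · obtain ⟨hge, hmod⟩ := mod_one_facts h2 hx hx1
    obtain ⟨hge', hmod'⟩ := mod_mid_facts h2 hy0 hy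
    rw [if_pos hx, if_neg hy] at heq
    rw [heq] at hmod
    have hrk' : y % k < k := Nat.mod_lt _ (by omega)
    omega
  · obtain ⟨hge, hmod⟩ := mod_mid_facts h2 hx0 hx
    obtain ⟨hge', hmod'⟩ := mod_one_facts h2 hy hy1
    rw [if_neg hx, if_pos hy] at heq
    rw [← heq] at hmod'
    have hrk : x % k < k := Nat.mod_lt _ (by omega)
    omega
  · rw [if_neg hx, if_neg hy] at heq
    obtain ⟨hge, _⟩ := mod_mid_facts h2 hx0 hx
    obtain ⟨hge', _⟩ := mod_mid_facts h2 hy0 hy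
    omega

lemma gmap_gap_not_mem (hS : IsNumericalSemigroup S) (hk : k ∈ S) (h2 : 2 ≤ k)
    (h1 : (1:ℕ) ∉ S) {b : ℕ} (hb : b ∉ S) (hb1 : b ≠ 1) : gmap k b ∉ slide k '' S := by
  have : gmap k b ∈ {n : ℕ | n ∉ slide k '' S} := by
    rw [gapsT_eq hS hk h2 h1]
    exact ⟨b, ⟨hb, hb1⟩, rfl⟩
  exact this

lemma gap_T_rep (hS : IsNumericalSemigroup S) (hk : k ∈ S) (h2 : 2 ≤ k)
    (h1 : (1:ℕ) ∉ S) {b' : ℕ} (hb' : b' ∉ slide k '' S) :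
    ∃ b, b ∉ S ∧ b ≠ 1 ∧ gmap k b = b' := by
  have : b' ∈ {n : ℕ | n ∉ slide k '' S} := hb'
  rw [gapsT_eq hS hk h2 h1] at this
  obtain ⟨b, ⟨hb, hb1⟩, hgb⟩ := this
  exact ⟨b, hb, hb1, hgb⟩

lemma ncard_trick {α β : Type*} {A : Set α} {B : Set β} {f : α → β} {p : α}
    (hA : A.Finite) (hp : p ∈ A) (him : B = f '' (A \ {p})) (hinj : Set.InjOn f (A \ {p})) :
    B.ncard = A.ncard - 1 := by
  rw [him, Set.ncard_image_of_injOn hinj, Set.ncard_diff_singleton_of_mem hp]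

end NSaux

namespace NSaux

variable {S : Set ℕ} {F m : ℕ}

lemma twom_mem (hS : IsNumericalSemigroup S) (hm : m ∈ S) (hm0 : 0 < m)
    (hmmin : ∀ x ∈ S, 0 < x → m ≤ x) (hF : F ∉ S) (hFmax : ∀ b, b ∉ S → b ≤ F)
    (h2e : ew S + 2 ≤ genus S) (hm3 : 3 ≤ m) (hmF : m < F) (hm1 : m + 1 ∈ S)
    (hF2m : F = 2 * m - 1) : 2 * m - 2 ∈ S := by
  by_contra hcon
  set GT := {b | b ∉ S ∧ m < b} with hGTdef
  have hGTfin : GT.Finite := Set.Finite.subset hS.2.1 (fun b hb => hb.1)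
  set P := {x | x ∈ S ∧ m < x ∧ x < F} with hPdef
  have hPfin : P.Finite := Set.Finite.subset (Set.finite_Ioo m F) (fun x hx => ⟨hx.2.1, hx.2.2⟩)
  have hm1P : m + 1 ∈ P := ⟨hm1, by omega, by have : m + 1 ≠ F := fun h => hF (h ▸ hm1); omega⟩
  -- partition of Icc (m+1) F
  have hpart : Set.Icc (m+1) F = P ∪ GT := by
    ext x
    simp only [Set.mem_Icc, Set.mem_union, hPdef, hGTdef, Set.mem_setOf_eq]
    constructor
    · rintro ⟨h1, h2⟩
      by_cases hx : x ∈ S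
      · have : x ≠ F := fun h => hF (h ▸ hx)
        exact Or.inl ⟨hx, by omega, by omega⟩
      · exact Or.inr ⟨hx, by omega⟩
    · rintro (⟨h1, h2, h3⟩ | ⟨h1, h2⟩)
      · omega
      · exact ⟨by omega, hFmax x h1⟩
  have hdisjPG : Disjoint P GT := by
    rw [Set.disjoint_left]
    rintro x ⟨hx, _, _⟩ ⟨hx', _⟩
    exact hx' hx
  have hcount : P.ncard + GT.ncard = F - m := by
    have h1 : (Set.Icc (m+1) F).ncard = F - m := by
      rw [← Finset.coe_Icc, Set.ncard_coe_finset, Nat.card_Icc]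
      omega
    rw [← h1, hpart, Set.ncard_union_eq hdisjPG hPfin hGTfin]
  -- the four pair families
  have hgen_small : ∀ v ∈ S, 0 < v → v < F → IsGenerator S v := by
    intro v hv h0 hvF
    exact isGen_of_small hS hmmin hv h0 (by omega)
  set A := (fun b => ((m:ℕ), b)) '' GT with hAdef
  set B := (fun b => ((m+1:ℕ), b)) '' GT with hBdef
  set C1 := (fun v => (v, 2*m-2)) '' (P \ {m+1}) with hC1def
  set C2 := (fun v => (v, 2*m-1)) '' (P \ {m+1}) with hC2def
  have hPelt : ∀ v ∈ P \ {m+1}, m + 2 ≤ v ∧ v ≤ 2*m - 3 ∧ IsGenerator S v := by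
    rintro v ⟨⟨hvS, hvm, hvF⟩, hvne⟩
    simp only [Set.mem_singleton_iff] at hvne
    have h1 : m + 2 ≤ v := by omega
    have h2 : v ≠ 2*m - 2 := fun h => hcon (h ▸ hvS)
    exact ⟨h1, by omega, hgen_small v hvS (by omega) hvF⟩
  have hsubA : A ⊆ {p : ℕ × ℕ | p.1 < p.2 ∧ IsGenerator S p.1 ∧ p.2 ∉ S} := by
    rintro p ⟨b, ⟨hb1, hb2⟩, rfl⟩
    exact ⟨hb2, hgen_small m hm hm0 hmF, hb1⟩
  have hsubB : B ⊆ {p : ℕ × ℕ | p.1 < p.2 ∧ IsGenerator S p.1 ∧ p.2 ∉ S} := by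
    rintro p ⟨b, ⟨hb1, hb2⟩, rfl⟩
    have hbne : b ≠ m + 1 := fun h => hb1 (h ▸ hm1)
    refine ⟨by simp only; omega, hgen_small (m+1) hm1 (by omega) (by omega), hb1⟩
  have hsubC1 : C1 ⊆ {p : ℕ × ℕ | p.1 < p.2 ∧ IsGenerator S p.1 ∧ p.2 ∉ S} := by
    rintro p ⟨v, hv, rfl⟩
    obtain ⟨h1, h2, h3⟩ := hPelt v hv
    exact ⟨by simp only; omega, h3, hcon⟩
  have hsubC2 : C2 ⊆ {p : ℕ × ℕ | p.1 < p.2 ∧ IsGenerator S p.1 ∧ p.2 ∉ S} := by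
    rintro p ⟨v, hv, rfl⟩
    obtain ⟨h1, h2, h3⟩ := hPelt v hv
    refine ⟨by simp only; omega, h3, by rw [← hF2m]; exact hF⟩
  -- cardinalities
  have hcA : A.ncard = GT.ncard := Set.ncard_image_of_injOn (by intro x _ y _ h; injection h)
  have hcB : B.ncard = GT.ncard := Set.ncard_image_of_injOn (by intro x _ y _ h; injection h)
  have hcC1 : C1.ncard = (P \ {m+1}).ncard :=
    Set.ncard_image_of_injOn (by intro x _ y _ h; injection h)
  have hcC2 : C2.ncard = (P \ {m+1}).ncard :=
    Set.ncard_image_of_injOn (by intro x _ y _ h; injection h)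
  have hcP1 : (P \ {m+1}).ncard = P.ncard - 1 := Set.ncard_diff_singleton_of_mem hm1P
  have hP1 : 1 ≤ P.ncard := (Set.ncard_pos hPfin).mpr ⟨m+1, hm1P⟩
  -- disjointness via coordinates
  have hfst : ∀ p ∈ A, p.1 = m := by rintro p ⟨b, _, rfl⟩; rfl
  have hfstB : ∀ p ∈ B, p.1 = m + 1 := by rintro p ⟨b, _, rfl⟩; rfl
  have hfstC1 : ∀ p ∈ C1, m + 2 ≤ p.1 ∧ p.2 = 2*m-2 := by
    rintro p ⟨v, hv, rfl⟩; exact ⟨(hPelt v hv).1, rfl⟩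
  have hfstC2 : ∀ p ∈ C2, m + 2 ≤ p.1 ∧ p.2 = 2*m-1 := by
    rintro p ⟨v, hv, rfl⟩; exact ⟨(hPelt v hv).1, rfl⟩
  have hdAB : Disjoint A B := by
    rw [Set.disjoint_left]
    intro p hpA hpB
    have := hfst p hpA
    have := hfstB p hpB
    omega
  have hdAC1 : Disjoint (A ∪ B) C1 := by
    rw [Set.disjoint_left]
    rintro p (hp | hp) hpC
    · have := hfst p hp; have := (hfstC1 p hpC).1; omega
    · have := hfstB p hp; have := (hfstC1 p hpC).1; omega
  have hdC12 : Disjoint (A ∪ B ∪ C1) C2 := by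
    rw [Set.disjoint_left]
    rintro p ((hp | hp) | hp) hpC
    · have := hfst p hp; have := (hfstC2 p hpC).1; omega
    · have := hfstB p hp; have := (hfstC2 p hpC).1; omega
    · have := (hfstC1 p hp).2; have := (hfstC2 p hpC).2; omega
  have hAfin : A.Finite := Set.Finite.image _ hGTfin
  have hBfin : B.Finite := Set.Finite.image _ hGTfin
  have hC1fin : C1.Finite := Set.Finite.image _ (Set.Finite.diff hPfin)
  have hC2fin : C2.Finite := Set.Finite.image _ (Set.Finite.diff hPfin)
  have hU : (A ∪ B ∪ C1 ∪ C2).ncard =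
      GT.ncard + GT.ncard + (P.ncard - 1) + (P.ncard - 1) := by
    rw [Set.ncard_union_eq hdC12 (((hAfin.union hBfin).union hC1fin)) hC2fin,
      Set.ncard_union_eq hdAC1 (hAfin.union hBfin) hC1fin,
      Set.ncard_union_eq hdAB hAfin hBfin, hcA, hcB, hcC1, hcC2, hcP1]
  have hle : GT.ncard + GT.ncard + (P.ncard - 1) + (P.ncard - 1) ≤ ew S := by
    rw [← hU]
    exact Set.ncard_le_ncard
      (Set.union_subset (Set.union_subset (Set.union_subset hsubA hsubB) hsubC1) hsubC2)
      (pairs_finite hS hFmax)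
  have hgen := genus_decomp hS hm hmmin
  rw [← hGTdef] at hgen
  omega

end NSaux


theorem stmt17 (S : Set ℕ) (hS : IsNumericalSemigroup S)
    (h1 : 1 ≤ ew S) (h2 : ew S + 2 ≤ genus S) :
    ∃ k ∈ S, IsNumericalSemigroup (slide k '' S) ∧
      genus (slide k '' S) = genus S - 1 ∧
      Secundive (slide k '' S) ∧
      ew (slide k '' S) = ew S - 1 := by
  classical
  have hgfin := hS.2.1
  have h1S : (1:ℕ) ∉ S := NSaux.one_not_mem hS (by omega)
  have hgne : hgfin.toFinset.Nonempty := by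
    rw [Set.Finite.toFinset_nonempty]
    by_contra h
    rw [Set.not_nonempty_iff_eq_empty] at h
    have hz : genus S = 0 := by unfold genus; rw [h]; simp
    omega
  set F := hgfin.toFinset.max' hgne with hFdef
  have hF : F ∉ S := by
    have := hgfin.toFinset.max'_mem hgne
    rwa [Set.Finite.mem_toFinset] at this
  have hFmax : ∀ b, b ∉ S → b ≤ F := fun b hb =>
    Finset.le_max' _ b (hgfin.mem_toFinset.mpr hb)
  have hSbig : ∀ x, F < x → x ∈ S := by
    intro x hx
    by_contra h
    have := hFmax x h
    omega
  have hmex : ∃ x, x ∈ S ∧ 0 < x := ⟨F+1, hSbig _ (by omega), by omega⟩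
  obtain ⟨m, ⟨hmS, hm0⟩, hmmin'⟩ : ∃ m, (m ∈ S ∧ 0 < m) ∧ ∀ x, x < m → ¬(x ∈ S ∧ 0 < x) :=
    ⟨Nat.find hmex, Nat.find_spec hmex, fun x hx => Nat.find_min hmex hx⟩
  have hmmin : ∀ x ∈ S, 0 < x → m ≤ x := by
    intro x hx h0
    by_contra h
    push_neg at h
    exact hmmin' x h ⟨hx, h0⟩
  have hm3 : 3 ≤ m := NSaux.m_ge_three hS hmS hm0 hmmin hF hFmax h2
  have hmF : m < F := NSaux.m_lt_F hS hmS hm0 hmmin hF hFmax h1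
  have hstruct : ∀ a ∈ S, ¬ m ∣ a → F < a + m := by
    intro a ha hnd
    by_contra h
    push_neg at h
    exact NSaux.struct hS hmS hm0 hmmin hF hFmax h2 a ha hnd h
  have hFnd : ¬ m ∣ F := fun h => hF (NSaux.dvd_mem hS hmS h)
  by_cases hcase : m + 1 ∈ S
  · -- Case 2 : m+1 ∈ S, slide at the largest effective generator
    have hndm1 : ¬ m ∣ (m+1) := by
      intro h
      have hd1 : m ∣ 1 := (Nat.dvd_add_right dvd_rfl).mp h
      have := Nat.le_of_dvd (by omega) hd1
      omega
    have hFle : F ≤ 2*m - 1 := by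
      have hh := hstruct (m+1) hcase hndm1
      have hne : F ≠ 2*m := fun h => hFnd (h ▸ ⟨2, Nat.mul_comm 2 m⟩)
      omega
    have hm1F : m + 1 < F := by
      have : m + 1 ≠ F := fun h => hF (h ▸ hcase)
      omega
    have hPfin : {x | x ∈ S ∧ m < x ∧ x < F}.Finite :=
      Set.Finite.subset (Set.finite_Ioo m F) (fun x hx => ⟨hx.2.1, hx.2.2⟩)
    have hPne : hPfin.toFinset.Nonempty :=
      ⟨m+1, by rw [Set.Finite.mem_toFinset]; exact ⟨hcase, by omega, hm1F⟩⟩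
    set k := hPfin.toFinset.max' hPne with hkdef
    obtain ⟨hkS, hkm, hkF⟩ : k ∈ S ∧ m < k ∧ k < F := by
      have := hPfin.toFinset.max'_mem hPne
      rwa [Set.Finite.mem_toFinset] at this
    have hkmax : ∀ x ∈ S, m < x → x < F → x ≤ k := fun x hx hx1 hx2 =>
      Finset.le_max' _ x (hPfin.mem_toFinset.mpr ⟨hx, hx1, hx2⟩)
    have hk2 : 2 ≤ k := by omega
    have habove : ∀ x, k < x → x ≤ F → x ∉ S := by
      intro x hx1 hx2 hxS
      have hne : x ≠ F := fun h => hF (h ▸ hxS)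
      have := hkmax x hxS (by omega) (by omega)
      omega
    have hk1 : k + 1 ∉ S := habove (k+1) (by omega) (by omega)
    have hk2m : F = 2*m - 1 → k = 2*m - 2 := by
      intro hF2
      have h22 : 2*m-2 ∈ S := NSaux.twom_mem hS hmS hm0 hmmin hF hFmax h2 hm3 hmF hcase hF2
      have := hkmax (2*m-2) h22 (by omega) (by omega)
      omega
    have hposT : ∀ x ∈ slide k '' S, 0 < x → m - 1 ≤ x := by
      intro x hx h0
      rcases NSaux.mem_slide_elim hS hkS hk2 h1S hx with hd | ⟨_, _, hx1⟩ | ⟨hxt, hx2⟩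
      · have := Nat.le_of_dvd h0 hd; omega
      · have := hmmin (x+1) hx1 (by omega); omega
      · have : x % k ≤ x := Nat.mod_le x k; omega
    have hclosed : ∀ x ∈ slide k '' S, ∀ y ∈ slide k '' S, x + y ∈ slide k '' S := by
      intro x hx y hy
      rcases Nat.eq_zero_or_pos x with rfl | hx0
      · simpa using hy
      rcases Nat.eq_zero_or_pos y with rfl | hy0
      · simpa using hx
      have hxm := hposT x hx hx0
      have hym := hposT y hy hy0
      by_cases h0 : (x+y) % k = 0
      · exact NSaux.mem_slide_dvd hS hkS (Nat.dvd_of_mod_eq_zero h0)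
      by_cases ht : (x+y) % k = k - 1
      · exact (NSaux.mem_slide_top hS hkS hk2 h1S ht).mpr (hSbig _ (by omega))
      · refine (NSaux.mem_slide_mid hS hkS hk2 h1S h0 ht).mpr ?_
        rcases Nat.lt_or_ge F (x+y+1) with h | h
        · exact hSbig _ h
        · exfalso
          have hF2 : F = 2*m-1 := by omega
          have hk22 := hk2m hF2
          have hxyk : x + y = k := by omega
          rw [hxyk, Nat.mod_self] at h0
          exact h0 rfl
    have hT : IsNumericalSemigroup (slide k '' S) :=
      ⟨⟨0, hS.1, NSaux.slide_self_of_dvd (dvd_zero k)⟩,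
        NSaux.gapsT_finite hS hkS hk2 h1S, hclosed⟩
    have hgenus := NSaux.genus_slide hS hkS hk2 h1S
    have hbigT : ∀ n, F ≤ n → n ∈ slide k '' S := fun n hn =>
      NSaux.mem_T_of_both hS hkS hk2 h1S (hSbig _ (by omega)) (hSbig _ (by omega))
    have hm1T : m - 1 ∈ slide k '' S := by
      refine (NSaux.mem_slide_mid hS hkS hk2 h1S ?_ ?_).mpr
        (by rw [show m-1+1 = m by omega]; exact hmS)
      · rw [Nat.mod_eq_of_lt (by omega)]; omega
      · rw [Nat.mod_eq_of_lt (by omega)]; omega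
    have hgenm1 : IsGenerator (slide k '' S) (m-1) := by
      refine ⟨hm1T, by omega, ?_⟩
      rintro ⟨x, hx, y, hy, hx0, hy0, hxy⟩
      have := hposT x hx hx0
      have := hposT y hy hy0
      omega
    have hsec : Secundive (slide k '' S) := by
      intro f mg ng hf hmg hmgmin hng hne hngmin
      have hfF : f < F := by
        by_contra hcon
        push_neg at hcon
        exact hf (hbigT f hcon)
      have hmg1 : mg = m - 1 := by
        have h1' := hmgmin (m-1) hgenm1
        have h2' := hposT mg hmg.1 hmg.2.1
        omega
      have hng1 : m ≤ ng := by
        have := hposT ng hng.1 hng.2.1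
        omega
      omega
    -- ew computation for case 2
    have hew : ew (slide k '' S) = ew S - 1 := by
      have hgm1 : ∀ x, 0 < x → x ≠ 1 → x < k → NSaux.gmap k x = x - 1 := by
        intro x h0 hx1 hxk
        unfold NSaux.gmap
        rw [Nat.mod_eq_of_lt hxk, if_neg (by omega)]
      have hgmk1 : NSaux.gmap k (k+1) = k - 1 := by
        unfold NSaux.gmap
        have hmd : (k+1) % k = 1 := by
          rw [Nat.add_comm, Nat.add_mod_right]
          exact Nat.mod_eq_of_lt (by omega)
        rw [if_pos hmd]
        omega
      have hgm3 : ∀ x, k+2 ≤ x → x ≤ F → NSaux.gmap k x = x - 1 := by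
        intro x hx1 hx2
        unfold NSaux.gmap
        have hlt : x - k < k := by omega
        have hmd : x % k = x - k := by
          conv_lhs => rw [show x = k + (x - k) by omega]
          rw [Nat.add_mod_left]
          exact Nat.mod_eq_of_lt hlt
        rw [if_neg (by omega)]
      have hbval : ∀ b, b ∉ S → b ≠ 1 → (b < k ∧ 2 ≤ b ∧ NSaux.gmap k b = b - 1) ∨
          (b = k+1 ∧ NSaux.gmap k b = k - 1) ∨
          (k+2 ≤ b ∧ b ≤ F ∧ NSaux.gmap k b = b - 1) := by
        intro b hb hb1
        have hb0 : b ≠ 0 := fun h => hb (h ▸ hS.1)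
        have hbF : b ≤ F := hFmax b hb
        have hbk : b ≠ k := fun h => hb (h ▸ hkS)
        rcases Nat.lt_trichotomy b k with h | h | h
        · exact Or.inl ⟨h, by omega, hgm1 b (by omega) hb1 h⟩
        · omega
        · rcases Nat.eq_or_lt_of_le (by omega : k + 1 ≤ b) with h' | h'
          · refine Or.inr (Or.inl ⟨h'.symm, ?_⟩)
            rw [← h']
            exact hgmk1
          · exact Or.inr (Or.inr ⟨by omega, hbF, hgm3 b (by omega) hbF⟩)
      have hQmem : ∀ v, v ∈ S → m < v → v < k → v - 1 ∈ slide k '' S := by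
        intro v hv h1' h2'
        refine (NSaux.mem_slide_mid hS hkS hk2 h1S ?_ ?_).mpr
          (by rw [show v - 1 + 1 = v by omega]; exact hv)
        · rw [Nat.mod_eq_of_lt (by omega)]; omega
        · rw [Nat.mod_eq_of_lt (by omega)]; omega
      have hgenT_small : ∀ a', a' ∈ slide k '' S → 0 < a' → a' < 2*m - 2 →
          IsGenerator (slide k '' S) a' := by
        intro a' ha' h0 hsm
        refine ⟨ha', h0, ?_⟩
        rintro ⟨x, hx, y, hy, hx0, hy0, hxy⟩
        have := hposT x hx hx0
        have := hposT y hy hy0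
        omega
      have hkT : k ∈ slide k '' S := NSaux.mem_slide_dvd hS hkS dvd_rfl
      have hgenSchar : ∀ a, IsGenerator S a → a < F → a = m ∨ (m < a ∧ a ≤ k) := by
        intro a hg haF
        have h1' := hmmin a hg.1 hg.2.1
        rcases Nat.eq_or_lt_of_le h1' with h | h
        · exact Or.inl h.symm
        · exact Or.inr ⟨h, hkmax a hg.1 h haF⟩
      have hgenTchar : ∀ a', IsGenerator (slide k '' S) a' → a' + 2 ≤ F →
          a' = m - 1 ∨ a' = k ∨ (a'+1 ∈ S ∧ m < a'+1 ∧ a'+1 < k) := by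
        intro a' hg hle
        have ha'0 := hg.2.1
        rcases NSaux.mem_slide_elim hS hkS hk2 h1S hg.1 with hd | ⟨h0', ht', hx1⟩ | ⟨ht', hx2⟩
        · obtain ⟨j, hj⟩ := hd
          have hj1 : j = 1 := by
            rcases Nat.eq_zero_or_pos j with rfl | hj0
            · rw [Nat.mul_zero] at hj; omega
            rcases Nat.lt_or_ge j 2 with h | h
            · omega
            · exfalso
              have : k * 2 ≤ k * j := Nat.mul_le_mul_left k h
              omega
          rw [hj1, Nat.mul_one] at hj
          exact Or.inr (Or.inl hj)
        · have hm1 : m ≤ a' + 1 := hmmin _ hx1 (by omega)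
          rcases Nat.eq_or_lt_of_le hm1 with h | h
          · exact Or.inl (by omega)
          · right; right
            refine ⟨hx1, h, ?_⟩
            have hle' : a' + 1 ≤ k := by
              by_contra hcon
              push_neg at hcon
              exact (habove (a'+1) (by omega) (by omega)) hx1
            rcases Nat.eq_or_lt_of_le hle' with h' | h'
            · exfalso
              have : a' % k = a' := Nat.mod_eq_of_lt (by omega)
              omega
            · exact h'
        · exfalso
          have hd := Nat.div_add_mod a' k
          have hq0 : a' / k = 0 := by
            by_contra hcon
            have h1' : 1 ≤ a' / k := Nat.one_le_iff_ne_zero.mpr hcon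
            have : k * 1 ≤ k * (a' / k) := Nat.mul_le_mul_left k h1'
            omega
          rw [hq0, Nat.mul_zero] at hd
          have : a' = k - 1 := by omega
          rw [show a' + 2 = k + 1 by omega] at hx2
          exact hk1 hx2
      set Psi : ℕ × ℕ → ℕ × ℕ :=
        fun p => (if p.1 = k then k else NSaux.gmap k p.1, NSaux.gmap k p.2) with hPsidef
      have hkpair : ((k, k+1) : ℕ × ℕ) ∈
          {p : ℕ × ℕ | p.1 < p.2 ∧ IsGenerator S p.1 ∧ p.2 ∉ S} :=
        ⟨by omega, NSaux.isGen_of_small hS hmmin hkS (by omega) (by omega), hk1⟩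
      have hgapT : ∀ b, b ∉ S → b ≠ 1 → NSaux.gmap k b ∉ slide k '' S :=
        fun b hb hb1 => NSaux.gmap_gap_not_mem hS hkS hk2 h1S hb hb1
      have him : {p : ℕ × ℕ | p.1 < p.2 ∧ IsGenerator (slide k '' S) p.1 ∧ p.2 ∉ slide k '' S} =
          Psi '' ({p : ℕ × ℕ | p.1 < p.2 ∧ IsGenerator S p.1 ∧ p.2 ∉ S} \ {(k, k+1)}) := by
        ext ⟨a', b'⟩
        simp only [Set.mem_setOf_eq, Set.mem_image, Set.mem_diff, Set.mem_singleton_iff]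
        constructor
        · rintro ⟨hab', hga', hgb'⟩
          obtain ⟨b, hbS, hb1, hgb⟩ := NSaux.gap_T_rep hS hkS hk2 h1S hgb'
          have hbF : b ≤ F := hFmax b hbS
          have hb'F : b' + 1 ≤ F := by
            rcases hbval b hbS hb1 with ⟨h1', h2', h3'⟩ | ⟨h1', h3'⟩ | ⟨h1', h2', h3'⟩ <;> omega
          have hchar := hgenTchar a' hga' (by omega)
          rcases hchar with rfl | rfl | ⟨haS, ham, hak⟩
          · -- a' = m - 1, preimage (m, b)
            refine ⟨⟨m, b⟩, ⟨⟨?_, NSaux.isGen_of_small hS hmmin hmS hm0 (by omega), hbS⟩, ?_⟩, ?_⟩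
            · -- m < b
              have hbm1 : b ≠ m + 1 := fun h => hbS (h ▸ hcase)
              rcases hbval b hbS hb1 with ⟨h1', h2', h3'⟩ | ⟨h1', h3'⟩ | ⟨h1', h2', h3'⟩ <;> omega
            · intro hcc
              simp only [Prod.mk.injEq] at hcc
              omega
            · simp only [hPsidef, Prod.mk.injEq]
              rw [if_neg (by omega), hgm1 m hm0 (by omega) hkm]
              exact ⟨rfl, hgb⟩
          · -- a' = k, preimage (k, b)
            have hbk1 : b ≠ k + 1 := by
              intro h
              subst h
              rw [hgmk1] at hgb
              omega
            have hbk2 : k + 2 ≤ b := by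
              rcases hbval b hbS hb1 with ⟨h1', h2', h3'⟩ | ⟨h1', h3'⟩ | ⟨h1', h2', h3'⟩ <;> omega
            refine ⟨⟨k, b⟩, ⟨⟨by omega, NSaux.isGen_of_small hS hmmin hkS (by omega) (by omega), hbS⟩, ?_⟩, ?_⟩
            · intro hcc
              simp only [Prod.mk.injEq] at hcc
              omega
            · simp only [hPsidef, Prod.mk.injEq]
              exact ⟨by simp, hgb⟩
          · -- middle generator, preimage (a'+1, b)
            refine ⟨⟨a'+1, b⟩, ⟨⟨?_, NSaux.isGen_of_small hS hmmin haS (by omega) (by omega), hbS⟩, ?_⟩, ?_⟩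
            · -- a'+1 < b
              rcases hbval b hbS hb1 with ⟨h1', h2', h3'⟩ | ⟨h1', h3'⟩ | ⟨h1', h2', h3'⟩ <;> omega
            · intro hcc
              simp only [Prod.mk.injEq] at hcc
              omega
            · simp only [hPsidef, Prod.mk.injEq]
              rw [if_neg (by omega), hgm1 (a'+1) (by omega) (by omega) hak]
              exact ⟨by omega, hgb⟩
        · rintro ⟨⟨a, b⟩, ⟨⟨hab, hga, hbS⟩, hne⟩, heqPsi⟩
          simp only [hPsidef, Prod.mk.injEq] at heqPsi
          obtain ⟨heq1, heq2⟩ := heqPsi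
          replace hab : a < b := hab
          replace hga : IsGenerator S a := hga
          replace hbS : b ∉ S := hbS
          have hbF : b ≤ F := hFmax b hbS
          have hb1 : b ≠ 1 := by
            have := hmmin a hga.1 hga.2.1
            omega
          have haF : a < F := by omega
          have hgb' : b' ∉ slide k '' S := by
            rw [← heq2]
            exact hgapT b hbS hb1
          by_cases hak : a = k
          · have hbk1 : b ≠ k + 1 := by
              intro h
              exact hne (by rw [hak, h])
            have hbk2 : k + 2 ≤ b := by
              rcases hbval b hbS hb1 with ⟨h1', h2', h3'⟩ | ⟨h1', h3'⟩ | ⟨h1', h2', h3'⟩ <;> omega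
            have ha' : a' = k := by
              rw [← heq1, if_pos hak]
            have hb'v : b' = b - 1 := by
              rw [← heq2]
              exact hgm3 b hbk2 hbF
            refine ⟨by omega, ?_, hgb'⟩
            rw [ha']
            exact hgenT_small k hkT (by omega) (by omega)
          · rcases hgenSchar a hga haF with ham | ⟨ham, hak'⟩
            · -- a = m
              have ha' : a' = m - 1 := by
                rw [← heq1, if_neg hak, ham, hgm1 m hm0 (by omega) hkm]
              have hbm1 : b ≠ m + 1 := fun h => hbS (h ▸ hcase)
              have hb'v : m - 1 < b' := by
                rcases hbval b hbS hb1 with ⟨h1', h2', h3'⟩ | ⟨h1', h3'⟩ | ⟨h1', h2', h3'⟩ <;> omega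
              refine ⟨by omega, ?_, hgb'⟩
              rw [ha']
              exact hgenm1
            · -- m < a < k
              have hakk : a < k := by omega
              have ha' : a' = a - 1 := by
                rw [← heq1, if_neg hak, hgm1 a (by omega) (by omega) hakk]
              have hb'v : a - 1 < b' := by
                rcases hbval b hbS hb1 with ⟨h1', h2', h3'⟩ | ⟨h1', h3'⟩ | ⟨h1', h2', h3'⟩ <;> omega
              refine ⟨by omega, ?_, hgb'⟩
              rw [ha']
              exact hgenT_small (a-1) (hQmem a hga.1 ham hakk) (by omega) (by omega)
      have hinj : Set.InjOn Psi
          ({p : ℕ × ℕ | p.1 < p.2 ∧ IsGenerator S p.1 ∧ p.2 ∉ S} \ {(k, k+1)}) := by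
        rintro ⟨a, b⟩ ⟨⟨hab, hga, hbS⟩, hne⟩ ⟨a2, b2⟩ ⟨⟨hab2, hga2, hbS2⟩, hne2⟩ heq
        simp only [hPsidef, Prod.mk.injEq] at heq
        obtain ⟨heq1, heq2⟩ := heq
        have hbF := hFmax b hbS
        have hbF2 := hFmax b2 hbS2
        have hb1 : b ≠ 1 := by have := hmmin a hga.1 hga.2.1; omega
        have hb12 : b2 ≠ 1 := by have := hmmin a2 hga2.1 hga2.2.1; omega
        have hbk : b % k ≠ 0 := by
          intro h0
          exact hbS (NSaux.dvd_mem hS hkS (Nat.dvd_of_mod_eq_zero h0))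
        have hbk2 : b2 % k ≠ 0 := by
          intro h0
          exact hbS2 (NSaux.dvd_mem hS hkS (Nat.dvd_of_mod_eq_zero h0))
        have hbb : b = b2 := NSaux.gmap_inj_aux hk2 hbk hb1 hbk2 hb12 heq2
        have haa : a = a2 := by
          by_cases h1' : a = k <;> by_cases h2' : a2 = k
          · rw [h1', h2']
          · exfalso
            rw [if_pos h1', if_neg h2'] at heq1
            rcases hgenSchar a2 hga2 (by omega) with rfl | ⟨ham, hak'⟩
            · rw [hgm1 a2 hm0 (by omega) hkm] at heq1; omega
            · rw [hgm1 a2 (by omega) (by omega) (by omega)] at heq1; omega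
          · exfalso
            rw [if_neg h1', if_pos h2'] at heq1
            rcases hgenSchar a hga (by omega) with rfl | ⟨ham, hak'⟩
            · rw [hgm1 a hm0 (by omega) hkm] at heq1; omega
            · rw [hgm1 a (by omega) (by omega) (by omega)] at heq1; omega
          · rw [if_neg h1', if_neg h2'] at heq1
            have hma := hmmin a hga.1 hga.2.1
            have hma2 := hmmin a2 hga2.1 hga2.2.1
            have hka : a < k := by
              rcases hgenSchar a hga (by omega) with rfl | ⟨h', h''⟩ <;> omega
            have hka2 : a2 < k := by
              rcases hgenSchar a2 hga2 (by omega) with rfl | ⟨h', h''⟩ <;> omega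
            exact NSaux.gmap_inj_aux hk2
              (by rw [Nat.mod_eq_of_lt hka]; omega) (by omega)
              (by rw [Nat.mod_eq_of_lt hka2]; omega) (by omega) heq1
        rw [haa, hbb]
      exact NSaux.ncard_trick (NSaux.pairs_finite hS hFmax) hkpair him hinj
    exact ⟨k, hkS, hT, hgenus, hsec, hew⟩
  · -- Case 1 : m+1 ∉ S, slide at the multiplicity m
    have hm2 : 2 ≤ m := by omega
    have hclass1' : ∀ b, b % m = 1 → b ≠ 1 → b ≠ m + 1 → 2*m+1 ≤ b := by
      intro b hb h1' h2'
      have hd := Nat.div_add_mod b m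
      have hq : 2 ≤ b / m := by
        rcases Nat.eq_zero_or_pos (b / m) with h | h
        · rw [h, Nat.mul_zero] at hd; omega
        rcases Nat.eq_or_lt_of_le h with h' | h'
        · rw [← h', Nat.mul_one] at hd; omega
        · omega
      have := Nat.mul_le_mul_left m hq
      omega
    have hclass1 : ∀ x ∈ S, x % m = 1 → 2*m + 1 ≤ x := by
      intro x hx hxm
      exact hclass1' x hxm (fun h => h1S (h ▸ hx)) (fun h => hcase (h ▸ hx))
    have hposS : ∀ x ∈ S, ¬ m ∣ x → m + 2 ≤ x := by
      intro x hx hnd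
      have hx0 : 0 < x := by
        rcases Nat.eq_zero_or_pos x with rfl | h
        · exact absurd (dvd_zero m) hnd
        · exact h
      have h1' := hmmin x hx hx0
      have h2' : x ≠ m := fun h => hnd (h ▸ dvd_rfl)
      have h3' : x ≠ m + 1 := fun h => hcase (h ▸ hx)
      omega
    have hposT1 : ∀ x ∈ slide m '' S, x % m ≠ 0 → x % m ≠ m - 1 → (m + 1 ≤ x ∧ F ≤ x + m) := by
      intro x hx h0 ht
      have hx1 : x + 1 ∈ S := (NSaux.mem_slide_mid hS hmS hm2 h1S h0 ht).mp hx
      have hnd : ¬ m ∣ (x+1) := by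
        intro hd
        have hz := Nat.mod_eq_zero_of_dvd hd
        rw [NSaux.mod_mid_plus1 hm2 h0 ht] at hz
        omega
      have h2' := hposS (x+1) hx1 hnd
      have h3' := hstruct (x+1) hx1 hnd
      omega
    have hposT2 : ∀ x ∈ slide m '' S, x % m = m - 1 → (2*m - 1 ≤ x ∧ F ≤ x + m + 1) := by
      intro x hx ht
      have hx2 : x + 2 ∈ S := (NSaux.mem_slide_top hS hmS hm2 h1S ht).mp hx
      have hmod : (x+2) % m = 1 := NSaux.mod_top_plus2 hm2 ht
      have h2' := hclass1 (x+2) hx2 hmod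
      have hnd : ¬ m ∣ (x+2) := by
        intro hd
        have := Nat.mod_eq_zero_of_dvd hd
        omega
      have h3' := hstruct (x+2) hx2 hnd
      omega
    have hposT : ∀ x ∈ slide m '' S, 0 < x → m ≤ x := by
      intro x hx h0
      by_cases hd : x % m = 0
      · have := Nat.le_of_dvd h0 (Nat.dvd_of_mod_eq_zero hd)
        omega
      by_cases ht : x % m = m - 1
      · have := (hposT2 x hx ht).1; omega
      · have := (hposT1 x hx hd ht).1; omega
    have hTnm_lb : ∀ x ∈ slide m '' S, x % m ≠ 0 → F ≤ x + m + 1 := by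
      intro x hx h0
      by_cases ht : x % m = m - 1
      · exact (hposT2 x hx ht).2
      · have := (hposT1 x hx h0 ht).2; omega
    have hmodeq0 : ∀ x y : ℕ, x % m = 0 → (x + y) % m = y % m := by
      intro x y h
      rw [Nat.add_mod, h, Nat.zero_add, Nat.mod_mod_of_dvd y dvd_rfl]
    have hclosed : ∀ x ∈ slide m '' S, ∀ y ∈ slide m '' S, x + y ∈ slide m '' S := by
      intro x hx y hy
      rcases Nat.eq_zero_or_pos x with rfl | hx0
      · simpa using hy
      rcases Nat.eq_zero_or_pos y with rfl | hy0
      · simpa using hx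
      by_cases h0 : (x + y) % m = 0
      · exact NSaux.mem_slide_dvd hS hmS (Nat.dvd_of_mod_eq_zero h0)
      by_cases ht : (x + y) % m = m - 1
      · -- need x + y + 2 ∈ S
        refine (NSaux.mem_slide_top hS hmS hm2 h1S ht).mpr ?_
        by_cases hdx : x % m = 0
        · have hxS : x ∈ S := NSaux.dvd_mem hS hmS (Nat.dvd_of_mod_eq_zero hdx)
          have hy' : y % m = m - 1 := by rw [← hmodeq0 x y hdx]; exact ht
          have hy2 : y + 2 ∈ S := (NSaux.mem_slide_top hS hmS hm2 h1S hy').mp hy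
          have := hS.2.2 x hxS (y+2) hy2
          rw [show x + (y+2) = x + y + 2 by omega] at this
          exact this
        by_cases hdy : y % m = 0
        · have hyS : y ∈ S := NSaux.dvd_mem hS hmS (Nat.dvd_of_mod_eq_zero hdy)
          have hx' : x % m = m - 1 := by
            rw [← hmodeq0 y x hdy, Nat.add_comm]; exact ht
          have hx2 : x + 2 ∈ S := (NSaux.mem_slide_top hS hmS hm2 h1S hx').mp hx
          have := hS.2.2 (x+2) hx2 y hyS
          rw [show x + 2 + y = x + y + 2 by omega] at this
          exact this
        · -- both non-multiples
          by_cases htx : x % m = m - 1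
          · have h1' := (hposT2 x hx htx).1
            have h2' := hTnm_lb y hy hdy
            exact hSbig _ (by omega)
          by_cases hty : y % m = m - 1
          · have h1' := (hposT2 y hy hty).1
            have h2' := hTnm_lb x hx hdx
            exact hSbig _ (by omega)
          · -- both mid: (x+1) + (y+1) ∈ S
            have hx1 : x + 1 ∈ S := (NSaux.mem_slide_mid hS hmS hm2 h1S hdx htx).mp hx
            have hy1 : y + 1 ∈ S := (NSaux.mem_slide_mid hS hmS hm2 h1S hdy hty).mp hy
            have := hS.2.2 (x+1) hx1 (y+1) hy1
            rw [show x + 1 + (y+1) = x + y + 2 by omega] at this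
            exact this
      · -- need x + y + 1 ∈ S
        refine (NSaux.mem_slide_mid hS hmS hm2 h1S h0 ht).mpr ?_
        by_cases hdx : x % m = 0
        · have hxS : x ∈ S := NSaux.dvd_mem hS hmS (Nat.dvd_of_mod_eq_zero hdx)
          have hy' := hmodeq0 x y hdx
          by_cases hty : y % m = m - 1
          · exact absurd (by rw [hy']; exact hty) ht
          · have hdy : y % m ≠ 0 := by rw [← hy']; exact h0
            have hy1 : y + 1 ∈ S := (NSaux.mem_slide_mid hS hmS hm2 h1S hdy hty).mp hy
            have := hS.2.2 x hxS (y+1) hy1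
            rw [show x + (y+1) = x + y + 1 by omega] at this
            exact this
        by_cases hdy : y % m = 0
        · have hyS : y ∈ S := NSaux.dvd_mem hS hmS (Nat.dvd_of_mod_eq_zero hdy)
          have hx' : (x + y) % m = x % m := by rw [Nat.add_comm]; exact hmodeq0 y x hdy
          by_cases htx : x % m = m - 1
          · exact absurd (by rw [hx']; exact htx) ht
          · have hdx' : x % m ≠ 0 := by rw [← hx']; exact h0
            have hx1 : x + 1 ∈ S := (NSaux.mem_slide_mid hS hmS hm2 h1S hdx' htx).mp hx
            have := hS.2.2 (x+1) hx1 y hyS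
            rw [show x + 1 + y = x + y + 1 by omega] at this
            exact this
        · -- both nonmultiples: size argument
          have h3' := hTnm_lb y hy hdy
          have h4' : m + 1 ≤ x := by
            by_cases htx : x % m = m - 1
            · have := (hposT2 x hx htx).1; omega
            · exact (hposT1 x hx hdx htx).1
          exact hSbig _ (by omega)
    have hT : IsNumericalSemigroup (slide m '' S) :=
      ⟨⟨0, hS.1, NSaux.slide_self_of_dvd (dvd_zero m)⟩,
        NSaux.gapsT_finite hS hmS hm2 h1S, hclosed⟩
    have hgenus := NSaux.genus_slide hS hmS hm2 h1S
    have hbigT : ∀ n, F ≤ n → n ∈ slide m '' S := fun n hn =>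
      NSaux.mem_T_of_both hS hmS hm2 h1S (hSbig _ (by omega)) (hSbig _ (by omega))
    have hmT : m ∈ slide m '' S := NSaux.mem_slide_dvd hS hmS dvd_rfl
    have hgenmT : IsGenerator (slide m '' S) m := by
      refine ⟨hmT, by omega, ?_⟩
      rintro ⟨x, hx, y, hy, hx0, hy0, hxy⟩
      have := hposT x hx hx0
      have := hposT y hy hy0
      omega
    have hsec : Secundive (slide m '' S) := by
      intro f mg ng hf hmg hmgmin hng hne hngmin
      have hfF : f < F := by
        by_contra hcon
        push_neg at hcon
        exact hf (hbigT f hcon)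
      have hmg1 : mg = m := by
        have h1' := hmgmin m hgenmT
        have h2' := hposT mg hmg.1 hmg.2.1
        omega
      have hngF : F ≤ ng + m := by
        have hngT := hng.1
        have hng0 := hng.2.1
        by_cases hd : ng % m = 0
        · exfalso
          have hdvd := Nat.dvd_of_mod_eq_zero hd
          have hge := hposT ng hngT hng0
          have hne' : ng ≠ m := by rw [hmg1] at hne; exact hne
          have hge2 : 2*m ≤ ng := by
            obtain ⟨j, hj⟩ := hdvd
            have hj2 : 2 ≤ j := by
              rcases Nat.eq_zero_or_pos j with rfl | h
              · rw [Nat.mul_zero] at hj; omega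
              rcases Nat.eq_or_lt_of_le h with h' | h'
              · rw [← h', Nat.mul_one] at hj; omega
              · omega
            have := Nat.mul_le_mul_left m hj2
            omega
          refine hng.2.2 ⟨m, hmT, ng - m, ?_, by omega, by omega, by omega⟩
          exact NSaux.mem_slide_dvd hS hmS (Nat.dvd_sub hdvd dvd_rfl)
        by_cases htt : ng % m = m - 1
        · obtain ⟨hge, hle⟩ := hposT2 ng hngT htt
          rcases Nat.eq_or_lt_of_le hle with hEq | hlt
          · exfalso
            apply hFnd
            have hd2 := Nat.div_add_mod ng m
            refine ⟨ng / m + 2, ?_⟩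
            rw [Nat.mul_add]
            omega
          · omega
        · exact (hposT1 ng hngT hd htt).2
      omega
    have hew : ew (slide m '' S) = ew S - 1 := by
      have hgv1 : ∀ x, x % m = 1 → NSaux.gmap m x = x - 2 := by
        intro x h
        unfold NSaux.gmap
        rw [if_pos h]
      have hgv2 : ∀ x, x % m ≠ 1 → NSaux.gmap m x = x - 1 := by
        intro x h
        unfold NSaux.gmap
        rw [if_neg h]
      have hm1mod : (m+1) % m = 1 := by
        rw [Nat.add_comm, Nat.add_mod_right]
        exact Nat.mod_eq_of_lt (by omega)
      have hgenS_nm : ∀ v ∈ S, ¬ m ∣ v → v ≤ F → IsGenerator S v := by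
        intro v hv hnd hvF
        have hv0 : 0 < v := by
          rcases Nat.eq_zero_or_pos v with rfl | h
          · exact absurd (dvd_zero m) hnd
          · exact h
        refine ⟨hv, hv0, ?_⟩
        rintro ⟨x, hx, y, hy, hx0, hy0, hxy⟩
        have hxm := hmmin x hx hx0
        have hym := hmmin y hy hy0
        have hor : ¬ m ∣ x ∨ ¬ m ∣ y := by
          by_contra h
          push_neg at h
          refine hnd ?_
          rw [← hxy]
          exact Nat.dvd_add h.1 h.2
        rcases hor with h | h
        · have := hstruct x hx h
          omega
        · have := hstruct y hy h
          omega
      have hgenSchar1 : ∀ a, IsGenerator S a → a ≠ m → ¬ m ∣ a := by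
        intro a hg hnem hd
        have ha0 := hg.2.1
        have h2m : 2*m ≤ a := by
          obtain ⟨j, hj⟩ := hd
          have hj2 : 2 ≤ j := by
            rcases Nat.eq_zero_or_pos j with rfl | h
            · rw [Nat.mul_zero] at hj; omega
            rcases Nat.eq_or_lt_of_le h with h' | h'
            · rw [← h', Nat.mul_one] at hj; omega
            · omega
          have := Nat.mul_le_mul_left m hj2
          omega
        refine hg.2.2 ⟨m, hmS, a - m, ?_, by omega, by omega, by omega⟩
        exact NSaux.dvd_mem hS hmS (Nat.dvd_sub hd dvd_rfl)
      have hgmap_mem : ∀ v ∈ S, ¬ m ∣ v → NSaux.gmap m v ∈ slide m '' S := by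
        intro v hv hnd
        have h0 : v % m ≠ 0 := fun h => hnd (Nat.dvd_of_mod_eq_zero h)
        have hv1 : v ≠ 1 := fun h => h1S (h ▸ hv)
        by_cases h1' : v % m = 1
        · obtain ⟨hge, hmod⟩ := NSaux.mod_one_facts hm2 h1' hv1
          rw [hgv1 v h1']
          refine (NSaux.mem_slide_top hS hmS hm2 h1S hmod).mpr ?_
          rw [show v - 2 + 2 = v by omega]
          exact hv
        · obtain ⟨hge, hmod⟩ := NSaux.mod_mid_facts hm2 h0 h1'
          rw [hgv2 v h1']
          have hrk : v % m < m := Nat.mod_lt _ (by omega)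
          refine (NSaux.mem_slide_mid hS hmS hm2 h1S ?_ ?_).mpr ?_
          · rw [hmod]; omega
          · rw [hmod]; omega
          · rw [show v - 1 + 1 = v by omega]
            exact hv
      have hgmap_ub : ∀ v, 0 < v → NSaux.gmap m v ≤ v - 1 := by
        intro v h0
        by_cases h1' : v % m = 1
        · rw [hgv1 v h1']; omega
        · rw [hgv2 v h1']
      have hgenT_nm : ∀ v ∈ S, ¬ m ∣ v → v < F → IsGenerator (slide m '' S) (NSaux.gmap m v) := by
        intro v hv hnd hvF
        have h0 : v % m ≠ 0 := fun h => hnd (Nat.dvd_of_mod_eq_zero h)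
        have hge := hposS v hv hnd
        have hub : NSaux.gmap m v ≤ v - 1 := hgmap_ub v (by omega)
        have hlb : v - 2 ≤ NSaux.gmap m v := by
          by_cases h1' : v % m = 1
          · rw [hgv1 v h1']
          · rw [hgv2 v h1']; omega
        refine ⟨hgmap_mem v hv hnd, by omega, ?_⟩
        rintro ⟨x, hx, y, hy, hx0, hy0, hxy⟩
        have hxm := hposT x hx hx0
        have hym := hposT y hy hy0
        have hstr := hstruct v hv hnd
        have hor : x % m ≠ 0 ∨ y % m ≠ 0 := by
          by_contra h
          push_neg at h
          have hres : (x + y) % m = 0 := by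
            rw [Nat.add_mod, h.1, h.2]
            simp
          -- but gmap m v is not a multiple of m
          have hv1 : v ≠ 1 := fun h' => h1S (h' ▸ hv)
          by_cases h1' : v % m = 1
          · obtain ⟨hge', hmod⟩ := NSaux.mod_one_facts hm2 h1' hv1
            rw [hgv1 v h1'] at hxy
            rw [hxy] at hres
            omega
          · obtain ⟨hge', hmod⟩ := NSaux.mod_mid_facts hm2 h0 h1'
            rw [hgv2 v h1'] at hxy
            rw [hxy] at hres
            have : v % m < m := Nat.mod_lt _ (by omega)
            omega
        rcases hor with h | h
        · have := hTnm_lb x hx h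
          omega
        · have := hTnm_lb y hy h
          omega
      have hgenTchar : ∀ a', IsGenerator (slide m '' S) a' → a' + 2 ≤ F →
          a' = m ∨ (a' % m ≠ 0 ∧ a' % m ≠ m-1 ∧ a'+1 ∈ S ∧ NSaux.gmap m (a'+1) = a') ∨
          (a' % m = m-1 ∧ a'+2 ∈ S ∧ NSaux.gmap m (a'+2) = a') := by
        intro a' hg hle
        have ha'0 := hg.2.1
        rcases NSaux.mem_slide_elim hS hmS hm2 h1S hg.1 with hd | ⟨h0', ht', h1'⟩ | ⟨ht', h2'⟩
        · left
          by_contra hnem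
          have h2m : 2*m ≤ a' := by
            obtain ⟨j, hj⟩ := hd
            have hj2 : 2 ≤ j := by
              rcases Nat.eq_zero_or_pos j with rfl | h
              · rw [Nat.mul_zero] at hj; omega
              rcases Nat.eq_or_lt_of_le h with h' | h'
              · rw [← h', Nat.mul_one] at hj; omega
              · omega
            have := Nat.mul_le_mul_left m hj2
            omega
          refine hg.2.2 ⟨m, hmT, a' - m, ?_, by omega, by omega, by omega⟩
          exact NSaux.mem_slide_dvd hS hmS (Nat.dvd_sub hd dvd_rfl)
        · right; left
          refine ⟨h0', ht', h1', ?_⟩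
          have hmod := NSaux.mod_mid_plus1 hm2 h0' ht'
          rw [hgv2 (a'+1) (by omega)]
          omega
        · right; right
          refine ⟨ht', h2', ?_⟩
          have hmod := NSaux.mod_top_plus2 hm2 ht'
          rw [hgv1 (a'+2) hmod]
          omega
      set Psi : ℕ × ℕ → ℕ × ℕ :=
        fun p => (if p.1 = m then m else NSaux.gmap m p.1, NSaux.gmap m p.2) with hPsidef
      have hmpair : ((m, m+1) : ℕ × ℕ) ∈
          {p : ℕ × ℕ | p.1 < p.2 ∧ IsGenerator S p.1 ∧ p.2 ∉ S} :=
        ⟨by omega, NSaux.isGen_of_small hS hmmin hmS hm0 (by omega), hcase⟩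
      have hgapT : ∀ b, b ∉ S → b ≠ 1 → NSaux.gmap m b ∉ slide m '' S :=
        fun b hb hb1 => NSaux.gmap_gap_not_mem hS hmS hm2 h1S hb hb1
      -- gap values
      have hbval : ∀ b, b ∉ S → 1 < b → b ≠ m + 1 →
          (b % m = 1 ∧ 2*m+1 ≤ b ∧ NSaux.gmap m b = b - 2) ∨
          (b % m ≠ 1 ∧ b % m ≠ 0 ∧ 2 ≤ b ∧ NSaux.gmap m b = b - 1) := by
        intro b hb hb1 hbm1
        have hb0 : b % m ≠ 0 := fun h => hb (NSaux.dvd_mem hS hmS (Nat.dvd_of_mod_eq_zero h))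
        by_cases h1' : b % m = 1
        · exact Or.inl ⟨h1', hclass1' b h1' (by omega) hbm1, hgv1 b h1'⟩
        · exact Or.inr ⟨h1', hb0, by omega, hgv2 b h1'⟩
      have him : {p : ℕ × ℕ | p.1 < p.2 ∧ IsGenerator (slide m '' S) p.1 ∧ p.2 ∉ slide m '' S} =
          Psi '' ({p : ℕ × ℕ | p.1 < p.2 ∧ IsGenerator S p.1 ∧ p.2 ∉ S} \ {(m, m+1)}) := by
        ext ⟨a', b'⟩
        simp only [Set.mem_setOf_eq, Set.mem_image, Set.mem_diff, Set.mem_singleton_iff]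
        constructor
        · rintro ⟨hab', hga', hgb'⟩
          obtain ⟨b, hbS, hb1, hgb⟩ := NSaux.gap_T_rep hS hmS hm2 h1S hgb'
          have hbF : b ≤ F := hFmax b hbS
          have hb2 : 1 < b := by
            rcases Nat.lt_or_ge 1 b with h | h
            · exact h
            · interval_cases b
              · exact absurd hS.1 hbS
              · exact absurd rfl hb1
          have hb'ub : b' ≤ b - 1 := by
            rw [← hgb]
            exact hgmap_ub b (by omega)
          have hchar := hgenTchar a' hga' (by omega)
          rcases hchar with ham | ⟨h0', ht', haS, hgma⟩ | ⟨ht', haS, hgma⟩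
          · -- a' = m : preimage (m, b)
            have hbm1 : b ≠ m + 1 := by
              intro h
              rw [h, hgv1 (m+1) hm1mod] at hgb
              omega
            refine ⟨⟨m, b⟩, ⟨⟨?_, NSaux.isGen_of_small hS hmmin hmS hm0 (by omega), hbS⟩, ?_⟩, ?_⟩
            · -- m < b
              rcases hbval b hbS hb2 hbm1 with ⟨h1', h2', h3'⟩ | ⟨h1', h2', h3', h4'⟩ <;> omega
            · intro hcc
              simp only [Prod.mk.injEq] at hcc
              omega
            · simp only [hPsidef, Prod.mk.injEq]
              exact ⟨by simp [ham], hgb⟩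
          · -- mid generator : preimage (a'+1, b)
            have hanm : ¬ m ∣ (a'+1) := by
              intro hd
              have hz := Nat.mod_eq_zero_of_dvd hd
              rw [NSaux.mod_mid_plus1 hm2 h0' ht'] at hz
              omega
            have hne : a' + 1 ≠ m := fun h => hanm (h ▸ dvd_rfl)
            have hbm1 : b ≠ m + 1 := by
              intro h
              rw [h, hgv1 (m+1) hm1mod] at hgb
              have := (hposT1 a' hga'.1 h0' ht').1
              omega
            refine ⟨⟨a'+1, b⟩, ⟨⟨?_, hgenS_nm (a'+1) haS hanm (by omega), hbS⟩, ?_⟩, ?_⟩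
            · -- a'+1 < b
              have hage := hposS (a'+1) haS hanm
              rcases hbval b hbS hb2 hbm1 with
                ⟨h1', h2', h3'⟩ | ⟨h1', h2', h3', h4'⟩ <;> omega
            · intro hcc
              simp only [Prod.mk.injEq] at hcc
              omega
            · simp only [hPsidef, Prod.mk.injEq]
              rw [if_neg hne]
              exact ⟨hgma, hgb⟩
          · -- top generator : preimage (a'+2, b)
            have hmod : (a'+2) % m = 1 := NSaux.mod_top_plus2 hm2 ht'
            have hanm : ¬ m ∣ (a'+2) := by
              intro hd
              have hz := Nat.mod_eq_zero_of_dvd hd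
              omega
            have hne : a' + 2 ≠ m := fun h => hanm (h ▸ dvd_rfl)
            have haF : a' + 2 < F := by
              have : a' + 2 ≠ F := fun h => hF (h ▸ haS)
              omega
            have hbm1 : b ≠ m + 1 := by
              intro h
              rw [h, hgv1 (m+1) hm1mod] at hgb
              have := (hposT2 a' hga'.1 ht').1
              omega
            refine ⟨⟨a'+2, b⟩, ⟨⟨?_, hgenS_nm (a'+2) haS hanm (by omega), hbS⟩, ?_⟩, ?_⟩
            · -- a'+2 < b
              have hbne : b ≠ a' + 2 := fun h => hbS (h ▸ haS)
              have hage := hclass1 (a'+2) haS hmod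
              rcases hbval b hbS hb2 hbm1 with
                ⟨h1', h2', h3'⟩ | ⟨h1', h2', h3', h4'⟩ <;> omega
            · intro hcc
              simp only [Prod.mk.injEq] at hcc
              omega
            · simp only [hPsidef, Prod.mk.injEq]
              rw [if_neg hne]
              exact ⟨hgma, hgb⟩
        · rintro ⟨⟨a, b⟩, ⟨⟨hab, hga, hbS⟩, hne⟩, heqPsi⟩
          simp only [hPsidef, Prod.mk.injEq] at heqPsi
          obtain ⟨heq1, heq2⟩ := heqPsi
          replace hab : a < b := hab
          replace hga : IsGenerator S a := hga
          replace hbS : b ∉ S := hbS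
          have hbF : b ≤ F := hFmax b hbS
          have hb1 : b ≠ 1 := by
            have := hmmin a hga.1 hga.2.1
            omega
          have hb2 : 1 < b := by
            have := hmmin a hga.1 hga.2.1
            omega
          have haF : a < F := by omega
          have hgb' : b' ∉ slide m '' S := by
            rw [← heq2]
            exact hgapT b hbS hb1
          by_cases hak : a = m
          · -- a = m
            have hbm1 : b ≠ m + 1 := by
              intro h
              exact hne (by rw [hak, h])
            have hb'm : m < b' := by
              rcases hbval b hbS hb2 hbm1 with ⟨h1', h2', h3'⟩ | ⟨h1', h2', h3', h4'⟩
              · rw [← heq2, h3']; omega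
              · rw [← heq2, h4']
                have : m < b := by rw [← hak]; omega
                have : b ≠ m + 1 := hbm1
                omega
            have ha' : a' = m := by rw [← heq1, if_pos hak]
            refine ⟨by omega, ?_, hgb'⟩
            rw [ha']
            exact hgenmT
          · have hanm : ¬ m ∣ a := hgenSchar1 a hga hak
            have hage := hposS a hga.1 hanm
            have ha' : a' = NSaux.gmap m a := by rw [← heq1, if_neg hak]
            have hbm1 : b ≠ m + 1 := by omega
            have hb'a : NSaux.gmap m a < b' := by
              have h0a : a % m ≠ 0 := fun h => hanm (Nat.dvd_of_mod_eq_zero h)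
              by_cases h1a : a % m = 1 <;> by_cases h1b : b % m = 1
              · have hca := hclass1 a hga.1 h1a
                rw [← heq2, hgv1 a h1a, hgv1 b h1b]
                omega
              · rw [← heq2, hgv1 a h1a, hgv2 b h1b]
                have hca := hclass1 a hga.1 h1a
                omega
              · have hba2 : a + 2 ≤ b := by
                  rcases Nat.eq_or_lt_of_le (show a + 1 ≤ b by omega) with h' | h'
                  · exfalso
                    by_cases hta : a % m = m - 1
                    · have hd := Nat.div_add_mod a m
                      have hz : (a+1) % m = 0 := by
                        have hh : a + 1 = m * (a/m + 1) := by
                          rw [Nat.mul_add, Nat.mul_one]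
                          omega
                        rw [hh, Nat.mul_comm, Nat.mul_mod_left]
                      rw [← h'] at h1b
                      omega
                    · have := NSaux.mod_mid_plus1 hm2 h0a hta
                      rw [← h'] at h1b
                      omega
                  · omega
                have hcb := hclass1' b h1b (by omega) hbm1
                rw [← heq2, hgv2 a h1a, hgv1 b h1b]
                omega
              · rw [← heq2, hgv2 a h1a, hgv2 b h1b]
                omega
            refine ⟨by rw [ha']; exact hb'a, ?_, hgb'⟩
            rw [ha']
            exact hgenT_nm a hga.1 hanm haF
      have hinj : Set.InjOn Psi
          ({p : ℕ × ℕ | p.1 < p.2 ∧ IsGenerator S p.1 ∧ p.2 ∉ S} \ {(m, m+1)}) := by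
        rintro ⟨a, b⟩ ⟨⟨hab, hga, hbS⟩, hne⟩ ⟨a2, b2⟩ ⟨⟨hab2, hga2, hbS2⟩, hne2⟩ heq
        simp only [hPsidef, Prod.mk.injEq] at heq
        obtain ⟨heq1, heq2⟩ := heq
        replace hab : a < b := hab
        replace hab2 : a2 < b2 := hab2
        replace hga : IsGenerator S a := hga
        replace hga2 : IsGenerator S a2 := hga2
        replace hbS : b ∉ S := hbS
        replace hbS2 : b2 ∉ S := hbS2
        have hma := hmmin a hga.1 hga.2.1
        have hma2 := hmmin a2 hga2.1 hga2.2.1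
        have hbk : b % m ≠ 0 := fun h0 =>
          hbS (NSaux.dvd_mem hS hmS (Nat.dvd_of_mod_eq_zero h0))
        have hbk2 : b2 % m ≠ 0 := fun h0 =>
          hbS2 (NSaux.dvd_mem hS hmS (Nat.dvd_of_mod_eq_zero h0))
        have hbb : b = b2 :=
          NSaux.gmap_inj_aux hm2 hbk (by omega) hbk2 (by omega) heq2
        have hmglt : ∀ a3, IsGenerator S a3 → a3 ≠ m → m < NSaux.gmap m a3 := by
          intro a3 hg3 hne3
          have hnm3 : ¬ m ∣ a3 := hgenSchar1 a3 hg3 hne3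
          have h03 : a3 % m ≠ 0 := fun h => hnm3 (Nat.dvd_of_mod_eq_zero h)
          have hge3 := hposS a3 hg3.1 hnm3
          by_cases h13 : a3 % m = 1
          · have := hclass1 a3 hg3.1 h13
            rw [hgv1 a3 h13]
            omega
          · rw [hgv2 a3 h13]
            have : a3 ≠ m + 1 := fun h => hcase (h ▸ hg3.1)
            omega
        have haa : a = a2 := by
          by_cases h1' : a = m <;> by_cases h2' : a2 = m
          · rw [h1', h2']
          · exfalso
            rw [if_pos h1', if_neg h2'] at heq1
            have := hmglt a2 hga2 h2'
            omega
          · exfalso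
            rw [if_neg h1', if_pos h2'] at heq1
            have := hmglt a hga h1'
            omega
          · rw [if_neg h1', if_neg h2'] at heq1
            have hnm : ¬ m ∣ a := hgenSchar1 a hga h1'
            have hnm2 : ¬ m ∣ a2 := hgenSchar1 a2 hga2 h2'
            exact NSaux.gmap_inj_aux hm2
              (fun h => hnm (Nat.dvd_of_mod_eq_zero h)) (by omega)
              (fun h => hnm2 (Nat.dvd_of_mod_eq_zero h)) (by omega) heq1
        rw [haa, hbb]
      exact NSaux.ncard_trick (NSaux.pairs_finite hS hFmax) hmpair him hinj
    exact ⟨m, hmS, hT, hgenus, hsec, hew⟩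
end

section
/- Let S be a numerical semigroup of genus g with ew(S) = g − 1. Then either S = {0, m, m+1} ∪ {n : n ≥ 2m} for some m ≥ 4, or there exists k ∈ S such that slide_k(S) is a secundive numerical semigroup of genus g − 1 with effective weight g − 2. -/
namespace NS

/-- inverse of slide on ℕ \ {1} -/
def phi (k y : ℕ) : ℕ :=
  if k ∣ y then y else if y % k = k - 1 then y + 2 else y + 1

lemma slide_of_dvd {k s : ℕ} (h : k ∣ s) : slide k s = s := by simp [slide, h]

lemma slide_of_one {k s : ℕ} (h : ¬ k ∣ s) (h1 : s % k = 1) : slide k s = s - 2 := by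
  simp [slide, h, h1]

lemma slide_of_other {k s : ℕ} (h : ¬ k ∣ s) (h1 : s % k ≠ 1) : slide k s = s - 1 := by
  simp [slide, h, h1]

lemma sub_two_mod {k s : ℕ} (hk : 2 ≤ k) (h1 : s % k = 1) (hs : s ≠ 1) :
    (s - 2) % k = k - 1 ∧ ¬ k ∣ (s - 2) ∧ k + 1 ≤ s := by
  have hkpos : 0 < k := by omega
  have hq := Nat.div_add_mod s k
  have hq1 : 1 ≤ s / k := by
    rcases Nat.eq_zero_or_pos (s / k) with h' | h'
    · rw [h', Nat.mul_zero] at hq; omega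
    · exact h'
  set q := s / k - 1 with hqdef
  have hq2 : s / k = q + 1 := by omega
  rw [hq2] at hq
  have hmul : k * (q + 1) = k * q + k := by ring
  have hs2 : k + 1 ≤ s := by omega
  have key : s - 2 = k * q + (k - 1) := by omega
  have hmod : (s - 2) % k = k - 1 := by
    rw [key, Nat.mul_add_mod]
    exact Nat.mod_eq_of_lt (by omega)
  refine ⟨hmod, ?_, hs2⟩
  intro hdd
  rw [Nat.dvd_iff_mod_eq_zero] at hdd
  omega

lemma sub_one_mod {k s : ℕ} (hk : 2 ≤ k) (h0 : s % k ≠ 0) (h1 : s % k ≠ 1) :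
    (s - 1) % k = s % k - 1 ∧ ¬ k ∣ (s - 1) ∧ 2 ≤ s := by
  have hkpos : 0 < k := by omega
  have hq := Nat.div_add_mod s k
  have hmlt := Nat.mod_lt s hkpos
  have hs1 : 2 ≤ s % k := by omega
  have hsge : 2 ≤ s := le_trans hs1 (Nat.mod_le s k)
  have key : s - 1 = k * (s / k) + (s % k - 1) := by omega
  have hmod : (s - 1) % k = s % k - 1 := by
    rw [key, Nat.mul_add_mod]
    exact Nat.mod_eq_of_lt (by omega)
  refine ⟨hmod, ?_, hsge⟩
  intro hdd
  rw [Nat.dvd_iff_mod_eq_zero] at hdd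
  omega

lemma phi_slide {k : ℕ} (hk : 2 ≤ k) {s : ℕ} (hs : s ≠ 1) : phi k (slide k s) = s := by
  have hkpos : 0 < k := by omega
  by_cases hd : k ∣ s
  · simp [slide, phi, hd]
  · have hsk : s % k ≠ 0 := fun hc => hd (Nat.dvd_of_mod_eq_zero hc)
    by_cases h1 : s % k = 1
    · obtain ⟨hmod, hnd, hs2⟩ := sub_two_mod hk h1 hs
      rw [slide_of_one hd h1]
      unfold phi
      rw [if_neg hnd, if_pos hmod]
      omega
    · obtain ⟨hmod, hnd, hsge⟩ := sub_one_mod hk hsk h1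
      have hmlt := Nat.mod_lt s hkpos
      rw [slide_of_other hd h1]
      unfold phi
      rw [if_neg hnd, if_neg (show ¬ (s-1) % k = k - 1 by omega)]
      omega

lemma add_two_facts {k y : ℕ} (hk : 2 ≤ k) (h1 : y % k = k - 1) :
    (y + 2) % k = 1 ∧ ¬ k ∣ (y + 2) := by
  have hkpos : 0 < k := by omega
  have hq := Nat.div_add_mod y k
  have key : y + 2 = k * (y / k + 1) + 1 := by
    have : k * (y / k + 1) = k * (y / k) + k := by ring
    omega
  have hmod : (y + 2) % k = 1 := by
    rw [key, Nat.mul_add_mod]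
    exact Nat.mod_eq_of_lt (by omega)
  refine ⟨hmod, ?_⟩
  intro hdd
  rw [Nat.dvd_iff_mod_eq_zero] at hdd
  omega

lemma add_one_facts {k y : ℕ} (hk : 2 ≤ k) (h0 : y % k ≠ 0) (h1 : y % k ≠ k - 1) :
    (y + 1) % k = y % k + 1 ∧ ¬ k ∣ (y + 1) ∧ (y+1) % k ≠ 1 := by
  have hkpos : 0 < k := by omega
  have hq := Nat.div_add_mod y k
  have hmlt := Nat.mod_lt y hkpos
  have key : y + 1 = k * (y / k) + (y % k + 1) := by omega
  have hmod : (y + 1) % k = y % k + 1 := by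
    rw [key, Nat.mul_add_mod]
    exact Nat.mod_eq_of_lt (by omega)
  refine ⟨hmod, ?_, by omega⟩
  intro hdd
  rw [Nat.dvd_iff_mod_eq_zero] at hdd
  omega

lemma slide_phi {k : ℕ} (hk : 2 ≤ k) (y : ℕ) : slide k (phi k y) = y := by
  have hkpos : 0 < k := by omega
  by_cases hd : k ∣ y
  · simp [phi, slide, hd]
  · have hyk : y % k ≠ 0 := fun hc => hd (Nat.dvd_of_mod_eq_zero hc)
    by_cases h1 : y % k = k - 1
    · have hphi : phi k y = y + 2 := by simp [phi, hd, h1]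
      obtain ⟨hmod, hnd⟩ := add_two_facts hk h1
      rw [hphi, slide_of_one hnd hmod]
      omega
    · have hphi : phi k y = y + 1 := by simp [phi, hd, h1]
      obtain ⟨hmod, hnd, hne1⟩ := add_one_facts hk hyk h1
      rw [hphi, slide_of_other hnd hne1]
      omega

lemma mem_slide_image {k : ℕ} (hk : 2 ≤ k) {S : Set ℕ} (h1 : 1 ∉ S) (y : ℕ) :
    y ∈ slide k '' S ↔ phi k y ∈ S := by
  constructor
  · rintro ⟨s, hs, rfl⟩
    have hs1 : s ≠ 1 := fun hc => h1 (hc ▸ hs)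
    rw [phi_slide hk hs1]; exact hs
  · intro hphi
    exact ⟨phi k y, hphi, slide_phi hk y⟩

lemma phi_ne_one {k : ℕ} (hk : 2 ≤ k) (y : ℕ) : phi k y ≠ 1 := by
  intro hc
  have h2 : slide k (phi k y) = y := slide_phi hk y
  rw [hc] at h2
  have hnd : ¬ k ∣ 1 := by
    intro hdd
    have := Nat.le_of_dvd (by omega) hdd
    omega
  have h1m : (1 : ℕ) % k = 1 := Nat.mod_eq_of_lt (by omega)
  rw [slide_of_one hnd h1m] at h2
  have hy0 : y = 0 := by omega
  rw [hy0] at hc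
  simp [phi, Nat.dvd_zero] at hc

/-- the genus drops by exactly one under any slide, if 1 is a gap. -/
lemma genus_slide {k : ℕ} (hk : 2 ≤ k) {S : Set ℕ} (h1 : 1 ∉ S)
    (hfin : {n : ℕ | n ∉ S}.Finite) :
    {n : ℕ | n ∉ slide k '' S}.ncard + 1 = {n : ℕ | n ∉ S}.ncard := by
  have hphiinj : ∀ a b : ℕ, phi k a = phi k b → a = b := by
    intro a b hab
    have := congrArg (slide k) hab
    rwa [slide_phi hk, slide_phi hk] at this
  have hinj : Set.InjOn (phi k) {n : ℕ | n ∉ slide k '' S} :=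
    fun a _ b _ hab => hphiinj a b hab
  have himg : phi k '' {n : ℕ | n ∉ slide k '' S} = {n : ℕ | n ∉ S} \ {1} := by
    ext z
    constructor
    · rintro ⟨y, hy, rfl⟩
      have hy' : y ∉ slide k '' S := hy
      rw [mem_slide_image hk h1] at hy'
      exact ⟨hy', phi_ne_one hk y⟩
    · rintro ⟨hz, hz1⟩
      have hz1' : z ≠ 1 := hz1
      refine ⟨slide k z, ?_, phi_slide hk hz1'⟩
      show slide k z ∉ slide k '' S
      rw [mem_slide_image hk h1, phi_slide hk hz1']
      exact hz
  have hfinT : {n : ℕ | n ∉ slide k '' S}.Finite := by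
    have hsub : {n : ℕ | n ∉ slide k '' S} ⊆ phi k ⁻¹' ({n : ℕ | n ∉ S} \ {1}) := by
      intro y hy
      have : phi k y ∈ phi k '' {n : ℕ | n ∉ slide k '' S} := ⟨y, hy, rfl⟩
      rwa [himg] at this
    have hpre : (phi k ⁻¹' ({n : ℕ | n ∉ S} \ {1})).Finite :=
      Set.Finite.preimage (fun a _ b _ hab => hphiinj a b hab) hfin.diff
    exact hpre.subset hsub
  have h2 : {n : ℕ | n ∉ slide k '' S}.ncard = ({n : ℕ | n ∉ S} \ {1}).ncard := by
    rw [← himg]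
    exact (Set.ncard_image_of_injOn hinj).symm
  rw [h2]
  have h1mem : (1:ℕ) ∈ {n : ℕ | n ∉ S} := h1
  rw [Set.ncard_diff_singleton_of_mem h1mem]
  have : 1 ≤ {n : ℕ | n ∉ S}.ncard := by
    rw [Nat.one_le_iff_ne_zero]
    intro hc
    rw [Set.ncard_eq_zero hfin] at hc
    have : (1:ℕ) ∈ (∅ : Set ℕ) := hc ▸ h1mem
    exact this
  omega

/-- image of a tail [c,∞) under slide. -/
lemma slide_image_Ici {k c : ℕ} (hk : 2 ≤ k) (hc : 1 ≤ c) (hnd : ¬ k ∣ (c - 1)) :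
    slide k '' Set.Ici c = Set.Ici (c - 1) := by
  ext y
  simp only [Set.mem_image, Set.mem_Ici]
  constructor
  · rintro ⟨s, hs, rfl⟩
    by_cases hd : k ∣ s
    · rw [slide_of_dvd hd]; omega
    · by_cases h1 : s % k = 1
      · rw [slide_of_one hd h1]
        rcases Nat.lt_or_ge (c+1) (s+1) with h' | h'
        · omega
        · have hsc : s = c := by omega
          exfalso
          apply hnd
          rw [← hsc]
          have hq := Nat.div_add_mod s k
          exact ⟨s / k, by omega⟩
      · rw [slide_of_other hd h1]; omega
  · intro hy
    by_cases hd : k ∣ y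
    · refine ⟨y, ?_, slide_of_dvd hd⟩
      rcases Nat.lt_or_ge y c with h' | h'
      · exfalso; apply hnd; have : y = c - 1 := by omega
        rwa [← this]
      · exact h'
    · have hyk : y % k ≠ 0 := fun hc' => hd (Nat.dvd_of_mod_eq_zero hc')
      have hkpos : 0 < k := by omega
      have hmlt := Nat.mod_lt y hkpos
      by_cases h1 : y % k = k - 1
      · obtain ⟨hmod, hnd2⟩ := add_two_facts hk h1
        refine ⟨y + 2, by omega, ?_⟩
        rw [slide_of_one hnd2 hmod]; omega
      · obtain ⟨hmod, hnd2, hne1⟩ := add_one_facts hk hyk h1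
        refine ⟨y + 1, by omega, ?_⟩
        rw [slide_of_other hnd2 hne1]; omega

lemma ncard_Ico (a b : ℕ) : (Set.Ico a b).ncard = b - a := by
  rw [← Finset.coe_Ico, Set.ncard_coe_finset, Nat.card_Ico]

lemma ncard_Icc (a b : ℕ) : (Set.Icc a b).ncard = b + 1 - a := by
  rw [← Finset.coe_Icc, Set.ncard_coe_finset, Nat.card_Icc]

def Eset (S : Set ℕ) (m : ℕ) : Set (ℕ × ℕ) :=
  {p : ℕ × ℕ | m < p.1 ∧ p.1 < p.2 ∧ IsGenerator S p.1 ∧ p.2 ∉ S}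

lemma gen_mult {S : Set ℕ} (m : ℕ) (hm : m ∈ S) (hm0 : 0 < m)
    (hmin : ∀ s ∈ S, 0 < s → m ≤ s) : IsGenerator S m := by
  refine ⟨hm, hm0, ?_⟩
  rintro ⟨x, hx, y, hy, hx0, hy0, hxy⟩
  have h1 := hmin x hx hx0
  have h2 := hmin y hy hy0
  omega

lemma mult_composite {S : Set ℕ} {m j : ℕ} (hm : 0 < m) (hj : 2 ≤ j)
    (hmul : ∀ i : ℕ, m * i ∈ S) : ¬ IsGenerator S (m * j) := by
  rintro ⟨_, _, hno⟩
  apply hno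
  refine ⟨m * 1, hmul 1, m * (j - 1), hmul (j - 1), by simpa using hm,
    Nat.mul_pos hm (by omega), ?_⟩
  rw [← Nat.mul_add]
  congr 1
  omega

/-- Decomposition of ew. -/
lemma decomp {S : Set ℕ} (hS : IsNumericalSemigroup S) (m : ℕ)
    (hm : m ∈ S) (hm2 : 2 ≤ m) (hmin : ∀ s ∈ S, 0 < s → m ≤ s) :
    ew S + (m - 1) = genus S + (Eset S m).ncard := by
  obtain ⟨h0S, hfin, hadd⟩ := hS
  obtain ⟨N, hN⟩ : ∃ N, ∀ b ∈ {n : ℕ | n ∉ S}, b < N := by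
    obtain ⟨ub, hub⟩ := hfin.bddAbove
    exact ⟨ub + 1, fun b hb => Nat.lt_succ_of_le (hub hb)⟩
  have hgenm : IsGenerator S m := gen_mult m hm (by omega) hmin
  set G₂ : Set ℕ := {b | m < b ∧ b ∉ S} with hG₂
  set P₁ : Set (ℕ × ℕ) := {p | p.1 = m ∧ m < p.2 ∧ p.2 ∉ S} with hP₁
  have hfinG₂ : G₂.Finite := hfin.subset (fun b hb => hb.2)
  have hfinP : {p : ℕ × ℕ | p.1 < p.2 ∧ IsGenerator S p.1 ∧ p.2 ∉ S}.Finite := by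
    apply Set.Finite.subset ((Set.finite_Iio N).prod hfin)
    rintro ⟨a, b⟩ ⟨hab, _, hb⟩
    exact ⟨lt_trans hab (hN b hb), hb⟩
  have hfinP₁ : P₁.Finite := by
    apply hfinP.subset
    rintro ⟨a, b⟩ ⟨ha, hab, hb⟩
    exact ⟨by simp only at ha ⊢; omega, by rw [ha]; exact hgenm, hb⟩
  have hfinE : (Eset S m).Finite := by
    apply hfinP.subset
    rintro ⟨a, b⟩ ⟨_, hab, hgen, hb⟩
    exact ⟨hab, hgen, hb⟩
  have hsplit : {p : ℕ × ℕ | p.1 < p.2 ∧ IsGenerator S p.1 ∧ p.2 ∉ S} = P₁ ∪ Eset S m := by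
    ext ⟨a, b⟩
    simp only [Set.mem_setOf_eq, Set.mem_union, hP₁, Eset]
    constructor
    · rintro ⟨hab, hgen, hb⟩
      have ha := hmin a hgen.1 hgen.2.1
      rcases eq_or_lt_of_le ha with he | hl
      · exact Or.inl ⟨he.symm, by omega, hb⟩
      · exact Or.inr ⟨hl, hab, hgen, hb⟩
    · rintro (⟨ha, hab, hb⟩ | ⟨ha, hab, hgen, hb⟩)
      · exact ⟨by omega, by rw [ha]; exact hgenm, hb⟩
      · exact ⟨hab, hgen, hb⟩
  have hdisj : Disjoint P₁ (Eset S m) := by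
    rw [Set.disjoint_left]
    rintro ⟨a, b⟩ ⟨ha, _, _⟩ ⟨ha', _, _, _⟩
    simp only at ha ha'
    omega
  have hewsplit : ew S = P₁.ncard + (Eset S m).ncard := by
    rw [ew, hsplit, Set.ncard_union_eq hdisj hfinP₁ hfinE]
  have hP₁card : P₁.ncard = G₂.ncard := by
    have : P₁ = (fun b => (m, b)) '' G₂ := by
      ext ⟨a, b⟩
      simp only [hP₁, hG₂, Set.mem_setOf_eq, Set.mem_image, Prod.mk.injEq]
      constructor
      · rintro ⟨ha, hb1, hb2⟩
        exact ⟨b, ⟨hb1, hb2⟩, ha.symm, rfl⟩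
      · rintro ⟨x, ⟨hx1, hx2⟩, hma, hxb⟩
        subst hma; subst hxb
        exact ⟨rfl, hx1, hx2⟩
    rw [this]
    apply Set.ncard_image_of_injOn
    intro x _ y _ hxy
    simpa using hxy
  have hgsplit : genus S = (m - 1) + G₂.ncard := by
    have hG : {n : ℕ | n ∉ S} = Set.Ico 1 m ∪ G₂ := by
      ext b
      simp only [Set.mem_setOf_eq, Set.mem_union, Set.mem_Ico, hG₂]
      constructor
      · intro hb
        have hb0 : b ≠ 0 := fun hc => hb (hc ▸ h0S)
        have hbm : b ≠ m := fun hc => hb (hc ▸ hm)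
        rcases Nat.lt_or_ge b m with h' | h'
        · exact Or.inl ⟨by omega, h'⟩
        · exact Or.inr ⟨by omega, hb⟩
      · rintro (⟨hb1, hb2⟩ | ⟨_, hb⟩)
        · intro hb
          have := hmin b hb (by omega)
          omega
        · exact hb
    have hdisj2 : Disjoint (Set.Ico 1 m) G₂ := by
      rw [Set.disjoint_left]
      rintro b ⟨_, hb2⟩ ⟨hb3, _⟩
      omega
    rw [genus, hG, Set.ncard_union_eq hdisj2 (Set.finite_Ico 1 m) hfinG₂, ncard_Ico]
  rw [hewsplit, hP₁card, hgsplit]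
  omega

def bandSet (m c : ℕ) (A : Set ℕ) : Set ℕ := {s | m ∣ s} ∪ A ∪ Set.Ici c

def pairsSet (m c : ℕ) (A : Set ℕ) : Set (ℕ × ℕ) :=
  {p : ℕ × ℕ | p.1 ∈ A ∧ p.1 < p.2 ∧ p.2 < c ∧ ¬ m ∣ p.2 ∧ p.2 ∉ A}

/-- All hypotheses for a band-form semigroup. -/
structure BandHyp (m c : ℕ) (A : Set ℕ) : Prop where
  hm : 2 ≤ m
  hc : m < c
  hA : ∀ a ∈ A, m < a ∧ a + 2 ≤ c ∧ c ≤ a + m ∧ ¬ m ∣ a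

namespace BandHyp

variable {m c : ℕ} {A : Set ℕ} (H : BandHyp m c A)

lemma mem_iff (s : ℕ) : s ∈ bandSet m c A ↔ (m ∣ s ∨ s ∈ A ∨ c ≤ s) := by
  simp [bandSet, Set.mem_union, Set.mem_Ici, or_assoc]

include H

lemma not_mem_iff (s : ℕ) : s ∉ bandSet m c A ↔ (¬ m ∣ s ∧ s ∉ A ∧ s < c) := by
  rw [mem_iff]
  push_neg
  constructor
  · rintro ⟨h1, h2, h3⟩; exact ⟨h1, h2, by omega⟩
  · rintro ⟨h1, h2, h3⟩; exact ⟨h1, h2, by omega⟩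

lemma ns : IsNumericalSemigroup (bandSet m c A) := by
  refine ⟨Or.inl (Or.inl (dvd_zero m)), ?_, ?_⟩
  · apply Set.Finite.subset (Set.finite_Iio c)
    intro n hn
    have hn' : n ∉ bandSet m c A := hn
    rw [H.not_mem_iff] at hn'
    exact hn'.2.2
  · intro a ha b hb
    rw [mem_iff] at ha hb ⊢
    have hm0 : 0 < m := by have := H.hm; omega
    rcases ha with ha | ha | ha
    · rcases hb with hb | hb | hb
      · exact Or.inl (Nat.dvd_add ha hb)
      · -- a multiple, b ∈ A
        rcases Nat.eq_zero_or_pos a with ha0 | ha0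
        · subst ha0; rw [Nat.zero_add]; exact Or.inr (Or.inl hb)
        · have hma : m ≤ a := Nat.le_of_dvd ha0 ha
          have := H.hA b hb
          exact Or.inr (Or.inr (by omega))
      · exact Or.inr (Or.inr (by omega))
    · rcases hb with hb | hb | hb
      · rcases Nat.eq_zero_or_pos b with hb0 | hb0
        · subst hb0; rw [Nat.add_zero]; exact Or.inr (Or.inl ha)
        · have hmb : m ≤ b := Nat.le_of_dvd hb0 hb
          have := H.hA a ha
          exact Or.inr (Or.inr (by omega))
      · have h1 := H.hA a ha
        have h2 := H.hA b hb
        exact Or.inr (Or.inr (by omega))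
      · have h1 := H.hA a ha
        exact Or.inr (Or.inr (by omega))
    · have : c ≤ a + b := by omega
      exact Or.inr (Or.inr this)

lemma mult_mem : m ∈ bandSet m c A := Or.inl (Or.inl dvd_rfl)

lemma mult_min : ∀ s ∈ bandSet m c A, 0 < s → m ≤ s := by
  intro s hs hs0
  rw [mem_iff] at hs
  rcases hs with hs | hs | hs
  · exact Nat.le_of_dvd hs0 hs
  · exact le_of_lt (H.hA s hs).1
  · have := H.hc; omega

lemma one_not_mem : 1 ∉ bandSet m c A := by
  rw [H.not_mem_iff]
  have hm := H.hm
  have hc := H.hc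
  refine ⟨?_, ?_, by omega⟩
  · intro hd
    have := Nat.le_of_dvd (by omega) hd
    omega
  · intro h1
    have := (H.hA 1 h1).1
    omega

lemma gen_A : ∀ a ∈ A, IsGenerator (bandSet m c A) a := by
  intro a ha
  obtain ⟨ha1, ha2, ha3, ha4⟩ := H.hA a ha
  refine ⟨Or.inl (Or.inr ha), by omega, ?_⟩
  rintro ⟨x, hx, y, hy, hx0, hy0, hxy⟩
  rw [mem_iff] at hx hy
  have hm := H.hm
  -- any positive non-multiple element is ≥ c - m; any positive element ≥ m
  have key : ∀ z, (m ∣ z ∨ z ∈ A ∨ c ≤ z) → 0 < z → (m ≤ z ∧ (¬ m ∣ z → c ≤ z + m ∧ m < z)) := by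
    intro z hz hz0
    rcases hz with hz | hz | hz
    · exact ⟨Nat.le_of_dvd hz0 hz, fun hc' => absurd hz hc'⟩
    · obtain ⟨h1, h2, h3, h4⟩ := H.hA z hz
      exact ⟨by omega, fun _ => ⟨h3, h1⟩⟩
    · have := H.hc
      exact ⟨by omega, fun _ => ⟨by omega, by omega⟩⟩
  have hxf := key x hx hx0
  have hyf := key y hy hy0
  by_cases hdx : m ∣ x
  · by_cases hdy : m ∣ y
    · exact ha4 (hxy ▸ Nat.dvd_add hdx hdy)
    · obtain ⟨hy1, hy2⟩ := hyf
      obtain ⟨hy3, hy4⟩ := hy2 hdy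
      have hx1 := hxf.1
      omega
  · obtain ⟨hx1, hx2⟩ := hxf
    obtain ⟨hx3, hx4⟩ := hx2 hdx
    have hy1 := hyf.1
    omega

lemma gaps_lt : ∀ b ∉ bandSet m c A, b < c := by
  intro b hb
  rw [H.not_mem_iff] at hb
  exact hb.2.2

lemma eset_eq : Eset (bandSet m c A) m = pairsSet m c A := by
  ext ⟨a, b⟩
  simp only [Eset, pairsSet, Set.mem_setOf_eq]
  constructor
  · rintro ⟨hma, hab, hgen, hb⟩
    rw [H.not_mem_iff] at hb
    obtain ⟨hb1, hb2, hb3⟩ := hb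
    have haA : a ∈ A := by
      have haS := hgen.1
      rw [mem_iff] at haS
      rcases haS with hd | hA' | hc'
      · -- a is a multiple > m : not a generator
        exfalso
        obtain ⟨j, hj⟩ := hd
        have hm2 := H.hm
        have hj2 : 2 ≤ j := by
          rcases j with _ | j
          · simp at hj; omega
          · rcases j with _ | j
            · simp at hj; omega
            · omega
        rw [hj] at hgen
        exact mult_composite (by omega) hj2
          (fun i => Or.inl (Or.inl ⟨i, rfl⟩)) hgen
      · exact hA'
      · omega
    exact ⟨haA, hab, hb3, hb1, hb2⟩
  · rintro ⟨haA, hab, hb3, hb1, hb2⟩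
    have := H.hA a haA
    refine ⟨this.1, hab, H.gen_A a haA, ?_⟩
    rw [H.not_mem_iff]
    exact ⟨hb1, hb2, hb3⟩

/-- The main band conclusion: if the pair count is m - 2 then ew + 1 = genus. -/
lemma ew_genus (hpairs : (pairsSet m c A).ncard + 1 = m - 1) :
    ew (bandSet m c A) + 1 = genus (bandSet m c A) := by
  have hd := decomp H.ns m H.mult_mem H.hm (H.mult_min)
  rw [H.eset_eq] at hd
  -- genus ≥ m - 1 : gaps include Ico 1 m... we can get this from hd itself? no.
  -- from hd : ew + (m-1) = genus + pairs, pairs + 1 = m - 1 :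
  have hm := H.hm
  omega

lemma secundive : Secundive (bandSet m c A) := by
  intro f n₁ n₂ hf hgen1 hmin1 hgen2 hne hmin2
  have hf' := H.gaps_lt f hf
  have h1 : n₁ = m := by
    have h1a := hmin1 m (gen_mult m H.mult_mem (by have := H.hm; omega) H.mult_min)
    have h1b := H.mult_min n₁ hgen1.1 hgen1.2.1
    omega
  -- n₂ is a generator ≠ m; show n₂ + m ≥ c
  have h2 : c ≤ n₂ + m := by
    have hn2 := hgen2.1
    rw [mem_iff] at hn2
    rcases hn2 with hd | hA' | hc'
    · -- n₂ multiple of m, ≠ m, positive → composite, contradiction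
      exfalso
      obtain ⟨j, hj⟩ := hd
      have hm := H.hm
      have hpos := hgen2.2.1
      have hnem := hne
      rw [h1] at hnem
      have hj2 : 2 ≤ j := by
        rcases j with _ | j
        · simp at hj; omega
        · rcases j with _ | j
          · simp at hj
            exact absurd hj hnem
          · omega
      rw [hj] at hgen2
      exact mult_composite (by omega) hj2
        (fun i => Or.inl (Or.inl ⟨i, rfl⟩)) hgen2
    · exact (H.hA n₂ hA').2.2.1.trans (by omega)
    · have := H.hc; omega
  omega

end BandHyp

lemma Eset_finite {S : Set ℕ} (hfin : {n : ℕ | n ∉ S}.Finite) (m : ℕ) :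
    (Eset S m).Finite := by
  obtain ⟨N, hN⟩ : ∃ N, ∀ b ∈ {n : ℕ | n ∉ S}, b < N := by
    obtain ⟨ub, hub⟩ := hfin.bddAbove
    exact ⟨ub + 1, fun b hb => Nat.lt_succ_of_le (hub hb)⟩
  apply Set.Finite.subset ((Set.finite_Iio N).prod hfin)
  rintro ⟨a, b⟩ ⟨_, hab, _, hb⟩
  exact ⟨lt_trans hab (hN b hb), hb⟩

/-- The key structural lemma: if the E-count is m - 2, then every non-multiple
element of S below the Frobenius number F is within m of F. -/
lemma star {S : Set ℕ} (hS : IsNumericalSemigroup S) {m F : ℕ}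
    (hm2 : 2 ≤ m) (hmS : m ∈ S) (hmin : ∀ s ∈ S, 0 < s → m ≤ s)
    (hF : F ∉ S) (hFmax : ∀ b, b ∉ S → b ≤ F)
    (hE : (Eset S m).ncard + 1 = m - 1) :
    ∀ s ∈ S, ¬ m ∣ s → F < s + m := by
  obtain ⟨h0S, hfin, hadd⟩ := hS
  by_contra hcon
  push_neg at hcon
  obtain ⟨s₀, hs₀S, hs₀nd, hs₀F⟩ := hcon
  -- x : the least non-multiple element of S
  set NE : Set ℕ := {s | s ∈ S ∧ ¬ m ∣ s} with hNE
  have hNEne : NE.Nonempty := ⟨s₀, hs₀S, hs₀nd⟩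
  set x := sInf NE with hxdef
  have hxNE : x ∈ NE := Nat.sInf_mem hNEne
  obtain ⟨hxS, hxnd⟩ := hxNE
  have hxmin : ∀ s ∈ NE, x ≤ s := fun s hs => Nat.sInf_le hs
  have hx0 : 0 < x := by
    rcases Nat.eq_zero_or_pos x with h | h
    · exfalso; apply hxnd; rw [h]; exact dvd_zero m
    · exact h
  have hxm : m < x := by
    have := hmin x hxS hx0
    rcases eq_or_lt_of_le this with he | hl
    · exfalso; apply hxnd; rw [← he]
    · exact hl
  have hxF : x + m ≤ F := le_trans (by have := hxmin s₀ ⟨hs₀S, hs₀nd⟩; omega) hs₀F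
  -- x is a generator
  have hxgen : IsGenerator S x := by
    refine ⟨hxS, hx0, ?_⟩
    rintro ⟨u, hu, v, hv, hu0, hv0, huv⟩
    by_cases hdu : m ∣ u
    · by_cases hdv : m ∣ v
      · exact hxnd (huv ▸ Nat.dvd_add hdu hdv)
      · have := hxmin v ⟨hv, hdv⟩; omega
    · have := hxmin u ⟨hu, hdu⟩; omega
  have hFm : F - m ∉ S := by
    intro hc
    have : (F - m) + m ∈ S := hadd _ hc _ hmS
    have hFge : m ≤ F := by omega
    rw [Nat.sub_add_cancel hFge] at this
    exact hF this
  set ρ := x % m with hρdef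
  have hρ : ρ ≠ 0 := by
    intro hc
    exact hxnd (Nat.dvd_of_mod_eq_zero hc)
  have hρlt : ρ < m := Nat.mod_lt x (by omega)
  -- least element of S in residue class r
  have hWne : ∀ r, r < m → {s | s ∈ S ∧ s % m = r}.Nonempty := by
    intro r hr
    refine ⟨m * (F + 1) + r, ?_, ?_⟩
    · by_contra hc
      have := hFmax _ hc
      nlinarith
    · rw [Nat.mul_add_mod]
      exact Nat.mod_eq_of_lt hr
  set w : ℕ → ℕ := fun r => sInf {s | s ∈ S ∧ s % m = r} with hwdef
  have hwmem : ∀ r, r < m → w r ∈ S ∧ (w r) % m = r := fun r hr => Nat.sInf_mem (hWne r hr)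
  have hwmin : ∀ r, ∀ s ∈ S, s % m = r → w r ≤ s := fun r s hs hsr => Nat.sInf_le ⟨hs, hsr⟩
  have hwx : ∀ r, r < m → r ≠ 0 → r ≠ ρ → x < w r := by
    intro r hr hr0 hrρ
    obtain ⟨hwS, hwr⟩ := hwmem r hr
    have hwnd : ¬ m ∣ w r := by
      intro hc
      rw [Nat.dvd_iff_mod_eq_zero] at hc
      rw [hwr] at hc
      exact hr0 hc
    have h1 : x ≤ w r := hxmin _ ⟨hwS, hwnd⟩
    have h2 : x ≠ w r := by
      intro hc
      apply hrρ
      rw [← hwr, ← hc]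
    omega
  have hwndl : ∀ r, r < m → r ≠ 0 → ¬ m ∣ w r := by
    intro r hr hr0 hc
    rw [Nat.dvd_iff_mod_eq_zero] at hc
    rw [(hwmem r hr).2] at hc
    exact hr0 hc
  have hhigh : ∀ r, r < m → r ≠ 0 → x + m < w r → w r - m ∉ S := by
    intro r hr hr0 hwr hc
    obtain ⟨hwS, hwrm⟩ := hwmem r hr
    have hge : m ≤ w r := by omega
    have hsum : (w r - m) + m = w r := Nat.sub_add_cancel hge
    have hmod : (w r - m) % m = r := by
      rw [← Nat.add_mod_right (w r - m) m, hsum, hwrm]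
    have := hwmin r _ hc hmod
    omega
  have hlow : ∀ r, r < m → r ≠ 0 → r ≠ ρ → w r ≤ x + m → IsGenerator S (w r) := by
    intro r hr hr0 hrρ hle
    obtain ⟨hwS, hwrm⟩ := hwmem r hr
    have hxw := hwx r hr hr0 hrρ
    refine ⟨hwS, by omega, ?_⟩
    rintro ⟨u, hu, v, hv, hu0, hv0, huv⟩
    by_cases hdu : m ∣ u
    · by_cases hdv : m ∣ v
      · have hdw : m ∣ w r := huv ▸ Nat.dvd_add hdu hdv
        rw [Nat.dvd_iff_mod_eq_zero] at hdw
        omega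
      · have hvx := hxmin v ⟨hv, hdv⟩
        have hum : m ≤ u := Nat.le_of_dvd hu0 hdu
        have hux : v = x ∧ u = m := by omega
        apply hrρ
        rw [← hwrm, ← huv, hux.1, hux.2, Nat.add_mod_left]
    · have hux := hxmin u ⟨hu, hdu⟩
      by_cases hdv : m ∣ v
      · have hvm : m ≤ v := Nat.le_of_dvd hv0 hdv
        have huxe : u = x ∧ v = m := by omega
        apply hrρ
        rw [← hwrm, ← huv, huxe.1, huxe.2, Nat.add_mod_right]
      · have hvx := hxmin v ⟨hv, hdv⟩
        omega
  have hxneF : x ≠ F - m := fun hc => hFm (hc ▸ hxS)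
  set ι : ℕ → ℕ × ℕ := fun r =>
    if r = ρ then (x, F - m) else if x + m < w r then (x, w r - m) else (w r, F) with hιdef
  have hmemE : ∀ r ∈ Set.Icc 1 (m-1), ι r ∈ Eset S m := by
    intro r hr
    simp only [Set.mem_Icc] at hr
    have hrm : r < m := by omega
    have hr0 : r ≠ 0 := by omega
    by_cases hrρ : r = ρ
    · simp only [hιdef, if_pos hrρ]
      exact ⟨hxm, by omega, hxgen, hFm⟩
    · obtain ⟨hwS, hwrm⟩ := hwmem r hrm
      have hxw := hwx r hrm hr0 hrρ
      by_cases hh : x + m < w r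
      · simp only [hιdef, if_neg hrρ, if_pos hh]
        exact ⟨hxm, by omega, hxgen, hhigh r hrm hr0 hh⟩
      · simp only [hιdef, if_neg hrρ, if_neg hh]
        push_neg at hh
        have hwgen := hlow r hrm hr0 hrρ hh
        have hwneF : w r ≠ F := fun hc => hF (hc ▸ hwS)
        exact ⟨by omega, by omega, hwgen, hF⟩
  have hinj : Set.InjOn ι (Set.Icc 1 (m-1)) := by
    intro r hr r' hr' heq
    simp only [Set.mem_Icc] at hr hr'
    have hrm : r < m := by omega
    have hr'm : r' < m := by omega
    by_cases h1 : r = ρ <;> by_cases h2 : r' = ρ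
    · omega
    · exfalso
      obtain ⟨hwS', hwrm'⟩ := hwmem r' hr'm
      have hxw' := hwx r' hr'm (by omega) h2
      by_cases hh : x + m < w r'
      · simp only [hιdef, if_pos h1, if_neg h2, if_pos hh, Prod.mk.injEq] at heq
        have hwF : w r' = F := by omega
        exact hF (hwF ▸ hwS')
      · simp only [hιdef, if_pos h1, if_neg h2, if_neg hh, Prod.mk.injEq] at heq
        omega
    · exfalso
      obtain ⟨hwS', hwrm'⟩ := hwmem r hrm
      have hxw' := hwx r hrm (by omega) h1
      by_cases hh : x + m < w r
      · simp only [hιdef, if_neg h1, if_pos h2, if_pos hh, Prod.mk.injEq] at heq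
        have hwF : w r = F := by omega
        exact hF (hwF ▸ hwS')
      · simp only [hιdef, if_neg h1, if_pos h2, if_neg hh, Prod.mk.injEq] at heq
        omega
    · obtain ⟨hwS1, hwrm1⟩ := hwmem r hrm
      obtain ⟨hwS2, hwrm2⟩ := hwmem r' hr'm
      have hxw1 := hwx r hrm (by omega) h1
      have hxw2 := hwx r' hr'm (by omega) h2
      by_cases hh1 : x + m < w r <;> by_cases hh2 : x + m < w r'
      · simp only [hιdef, if_neg h1, if_neg h2, if_pos hh1, if_pos hh2, Prod.mk.injEq] at heq
        have hww : w r = w r' := by omega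
        rw [← hwrm1, ← hwrm2, hww]
      · simp only [hιdef, if_neg h1, if_neg h2, if_pos hh1, if_neg hh2, Prod.mk.injEq] at heq
        omega
      · simp only [hιdef, if_neg h1, if_neg h2, if_neg hh1, if_pos hh2, Prod.mk.injEq] at heq
        omega
      · simp only [hιdef, if_neg h1, if_neg h2, if_neg hh1, if_neg hh2, Prod.mk.injEq] at heq
        have hww : w r = w r' := heq.1
        rw [← hwrm1, ← hwrm2, hww]
  have himgsub : ι '' (Set.Icc 1 (m-1)) ⊆ Eset S m := by
    rintro p ⟨r, hr, rfl⟩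
    exact hmemE r hr
  have hEfin := Eset_finite hfin m
  have hcard : (ι '' (Set.Icc 1 (m-1))).ncard = m - 1 := by
    rw [Set.ncard_image_of_injOn hinj, ncard_Icc]
    omega
  have hle := Set.ncard_le_ncard himgsub hEfin
  omega

lemma dvd_eq_of_close {m u v : ℕ} (hm : 0 < m) (hu : m ∣ u) (hv : m ∣ v)
    (h1 : u < v + m) (h2 : v < u + m) : u = v := by
  rcases le_total u v with h | h
  · have hd : m ∣ v - u := Nat.dvd_sub hv hu
    have := Nat.eq_zero_of_dvd_of_lt hd (show v - u < m by omega)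
    omega
  · have hd : m ∣ u - v := Nat.dvd_sub hu hv
    have := Nat.eq_zero_of_dvd_of_lt hd (show u - v < m by omega)
    omega

/-- Case 1 of the main theorem: m + 1 ∉ A, slide by the multiplicity m. -/
lemma case1 {m c : ℕ} {A : Set ℕ} (H : BandHyp m c A) (hc2 : m + 2 ≤ c)
    (hnd : ¬ m ∣ (c - 1)) (hm1 : m + 1 ∉ A)
    (hpairs : (pairsSet m c A).ncard + 1 = m - 1) :
    ∃ B : Set ℕ, slide m '' (bandSet m c A) = bandSet m (c-1) B ∧ BandHyp m (c-1) B ∧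
      (pairsSet m (c-1) B).ncard + 1 = m - 1 := by
  have hm := H.hm
  have hqm := Nat.div_add_mod (c-1) m
  have hmodlt : (c-1) % m < m := Nat.mod_lt _ (by omega)
  set M := m * ((c-1)/m) with hMdef
  have hMdvd : m ∣ M := Dvd.intro _ rfl
  have hMle : M ≤ c - 1 := by omega
  have hMge : c ≤ M + m := by omega
  have hMne : M ≠ c - 1 := fun hcc => hnd (hcc ▸ hMdvd)
  have hMle2 : M ≤ c - 2 := by omega
  have hM0 : 0 < M := by omega
  have hMm : m ≤ M := Nat.le_of_dvd hM0 hMdvd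
  have huniq : ∀ v, m ∣ v → c ≤ v + 1 + m → v ≤ c - 2 → v = M := by
    intro v hv h1 h2
    exact dvd_eq_of_close (by omega) hv hMdvd (by omega) (by omega)
  set f : ℕ → ℕ := fun v => if v = M + 1 then M - 1 else v - 1 with hfdef
  -- membership band predicate
  have hnm : ∀ v, c ≤ v + m → v ≤ c - 1 → ¬ m ∣ v → ¬ m ∣ f v := by
    intro v h1 h2 h3
    by_cases hv : v = M + 1
    · simp only [hfdef, if_pos hv]
      intro hdd
      have : m ∣ M - (M - 1) := Nat.dvd_sub hMdvd hdd
      have he : M - (M - 1) = 1 := by omega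
      rw [he] at this
      have := Nat.le_of_dvd (by omega) this
      omega
    · simp only [hfdef, if_neg hv]
      intro hdd
      have h4 : v - 1 = M := huniq (v-1) hdd (by omega) (by omega)
      exact hv (by omega)
  have hlt : ∀ u v, c ≤ u + m → u ≤ c - 1 → ¬ m ∣ u → c ≤ v + m → v ≤ c - 1 → ¬ m ∣ v →
      (u < v ↔ f u < f v) := by
    intro u v hu1 hu2 hu3 hv1 hv2 hv3
    have huM : u ≠ M := fun hcc => hu3 (hcc ▸ hMdvd)
    have hvM : v ≠ M := fun hcc => hv3 (hcc ▸ hMdvd)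
    by_cases h1 : u = M + 1 <;> by_cases h2 : v = M + 1
    · simp only [hfdef, if_pos h1, if_pos h2]; omega
    · simp only [hfdef, if_pos h1, if_neg h2]; omega
    · simp only [hfdef, if_neg h1, if_pos h2]; omega
    · simp only [hfdef, if_neg h1, if_neg h2]; omega
  have hfinj : ∀ u v, c ≤ u + m → u ≤ c - 1 → ¬ m ∣ u → c ≤ v + m → v ≤ c - 1 → ¬ m ∣ v →
      f u = f v → u = v := by
    intro u v hu1 hu2 hu3 hv1 hv2 hv3 heq
    rcases Nat.lt_trichotomy u v with h | h | h
    · rw [hlt u v hu1 hu2 hu3 hv1 hv2 hv3] at h; omega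
    · exact h
    · rw [hlt v u hv1 hv2 hv3 hu1 hu2 hu3] at h; omega
  have hAband : ∀ a ∈ A, c ≤ a + m ∧ a ≤ c - 1 ∧ ¬ m ∣ a := by
    intro a ha
    obtain ⟨h1, h2, h3, h4⟩ := H.hA a ha
    exact ⟨h3, by omega, h4⟩
  have hslide : ∀ a ∈ A, slide m a = f a := by
    intro a ha
    obtain ⟨ha1, ha2, ha3, ha4⟩ := H.hA a ha
    by_cases hM1 : a = M + 1
    · have hmod : a % m = 1 := by
        rw [hM1, hMdef, Nat.mul_add_mod]
        exact Nat.mod_eq_of_lt (by omega)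
      rw [slide_of_one ha4 hmod]
      simp only [hfdef, if_pos hM1]
      omega
    · have hmod : a % m ≠ 1 := by
        intro hcc
        have hqa := Nat.div_add_mod a m
        have he : a - 1 = m * (a / m) := by omega
        have ha1' : a - 1 = M := huniq (a-1) ⟨a/m, he⟩ (by omega) (by omega)
        exact hM1 (by omega)
      rw [slide_of_other ha4 hmod]
      simp only [hfdef, if_neg hM1]
  refine ⟨f '' A, ?_, ?_, ?_⟩
  · -- the image computation
    have h1 : bandSet m c A = {s | m ∣ s} ∪ A ∪ Set.Ici c := rfl
    rw [h1, Set.image_union, Set.image_union]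
    have h2 : slide m '' {s | m ∣ s} = {s | m ∣ s} := by
      ext y
      constructor
      · rintro ⟨s, hs, rfl⟩
        rw [slide_of_dvd hs]; exact hs
      · intro hy
        exact ⟨y, hy, slide_of_dvd hy⟩
    have h3 : slide m '' A = f '' A := by
      apply Set.image_congr
      intro a ha
      exact hslide a ha
    have h4 : slide m '' Set.Ici c = Set.Ici (c-1) :=
      slide_image_Ici (by omega) (by omega) hnd
    rw [h2, h3, h4]
    rfl
  · -- BandHyp for the new band
    refine ⟨hm, by omega, ?_⟩
    rintro y ⟨a, ha, rfl⟩
    obtain ⟨ha1, ha2, ha3, ha4⟩ := H.hA a ha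
    have hfa : ¬ m ∣ f a := hnm a ha3 (by omega) ha4
    have haM : a ≠ m + 1 := fun hcc => hm1 (hcc ▸ ha)
    by_cases hM1 : a = M + 1
    · have hMnem : M ≠ m := by
        intro hcc
        exact haM (by omega)
      have hM2m : 2*m ≤ M := by
        have h5 : 0 < M - m := by omega
        have h6 : m ∣ M - m := Nat.dvd_sub hMdvd dvd_rfl
        have := Nat.le_of_dvd h5 h6
        omega
      simp only [hfdef, if_pos hM1]
      refine ⟨by omega, by omega, by omega, ?_⟩
      have := hnm a ha3 (by omega) ha4
      simpa [hfdef, if_pos hM1] using this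
    · simp only [hfdef, if_neg hM1]
      refine ⟨by omega, by omega, by omega, ?_⟩
      have := hnm a ha3 (by omega) ha4
      simpa [hfdef, if_neg hM1] using this
  · -- the pair count is preserved
    have himg : (fun p : ℕ × ℕ => (f p.1, f p.2)) '' pairsSet m c A = pairsSet m (c-1) (f '' A) := by
      ext ⟨y, z⟩
      constructor
      · rintro ⟨⟨a, b⟩, ⟨haA, hab, hbc, hbnd, hbA⟩, heq⟩
        simp only [Prod.mk.injEq] at heq
        obtain ⟨heq1, heq2⟩ := heq
        obtain ⟨ha1, ha2, ha3⟩ := hAband a haA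
        have hbband : c ≤ b + m ∧ b ≤ c - 1 ∧ ¬ m ∣ b := ⟨by omega, by omega, hbnd⟩
        subst heq1; subst heq2
        refine ⟨⟨a, haA, rfl⟩, ?_, ?_, ?_, ?_⟩
        · rw [← hlt a b ha1 ha2 ha3 hbband.1 hbband.2.1 hbband.2.2]; exact hab
        · -- f b < c - 1
          by_cases hb1 : b = M + 1
          · simp only [hfdef, if_pos hb1]; omega
          · simp only [hfdef, if_neg hb1]; omega
        · exact hnm b hbband.1 hbband.2.1 hbband.2.2
        · rintro ⟨a', ha'A, heq'⟩
          obtain ⟨ha'1, ha'2, ha'3⟩ := hAband a' ha'A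
          have := hfinj a' b ha'1 ha'2 ha'3 hbband.1 hbband.2.1 hbband.2.2 heq'
          rw [this] at ha'A
          exact hbA ha'A
      · rintro ⟨⟨a, haA, rfl⟩, hyz, hzc, hznd, hzA⟩
        obtain ⟨ha1, ha2, ha3⟩ := hAband a haA
        -- construct the preimage b of z
        set b := if z = M - 1 then M + 1 else z + 1 with hbdef
        have hzM : z ≠ M := fun hcc => hznd (hcc ▸ hMdvd)
        have hzge : c - 1 ≤ z + m := by
          -- z > f a ≥ c - 1 - m
          have : c - 1 ≤ f a + m := by
            by_cases hM1 : a = M + 1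
            · simp only [hfdef, if_pos hM1]; omega
            · simp only [hfdef, if_neg hM1]; omega
          omega
        have hbband : c ≤ b + m ∧ b ≤ c - 1 ∧ ¬ m ∣ b := by
          by_cases hz1 : z = M - 1
          · simp only [hbdef, if_pos hz1]
            refine ⟨by omega, by omega, ?_⟩
            intro hdd
            have : m ∣ M + 1 - M := Nat.dvd_sub hdd hMdvd
            have he : M + 1 - M = 1 := by omega
            rw [he] at this
            have := Nat.le_of_dvd (by omega) this
            omega
          · simp only [hbdef, if_neg hz1]
            refine ⟨by omega, by omega, ?_⟩
            intro hdd
            rcases Nat.lt_or_ge (z+1) (c-1) with hlt' | hge'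
            · have h4 : z + 1 = M := huniq (z+1) hdd (by omega) (by omega)
              exact hz1 (by omega)
            · have he : z + 1 = c - 1 := by omega
              exact hnd (he ▸ hdd)
        have hfb : f b = z := by
          by_cases hz1 : z = M - 1
          · simp only [hbdef, if_pos hz1, hfdef, if_pos rfl]
            omega
          · have hbne : z + 1 ≠ M + 1 := by omega
            simp only [hbdef, if_neg hz1, hfdef, if_neg hbne]
            omega
        refine ⟨(a, b), ⟨haA, ?_, ?_, ?_, ?_⟩, ?_⟩
        · rw [hlt a b ha1 ha2 ha3 hbband.1 hbband.2.1 hbband.2.2]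
          rw [hfb]
          exact hyz
        · omega
        · exact hbband.2.2
        · intro hbA'
          exact hzA ⟨b, hbA', hfb⟩
        · rw [show ((fun p : ℕ × ℕ => (f p.1, f p.2)) (a,b)) = (f a, f b) from rfl, hfb]
    have hinj : Set.InjOn (fun p : ℕ × ℕ => (f p.1, f p.2)) (pairsSet m c A) := by
      rintro ⟨a, b⟩ ⟨haA, hab, hbc, hbnd, hbA⟩ ⟨a', b'⟩ ⟨ha'A, hab', hbc', hbnd', hbA'⟩ heq
      simp only [Prod.mk.injEq] at heq
      obtain ⟨ha1, ha2, ha3⟩ := hAband a haA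
      obtain ⟨ha1', ha2', ha3'⟩ := hAband a' ha'A
      have hb : c ≤ b + m ∧ b ≤ c - 1 ∧ ¬ m ∣ b := ⟨by omega, by omega, hbnd⟩
      have hb' : c ≤ b' + m ∧ b' ≤ c - 1 ∧ ¬ m ∣ b' := ⟨by omega, by omega, hbnd'⟩
      have e1 := hfinj a a' ha1 ha2 ha3 ha1' ha2' ha3' heq.1
      have e2 := hfinj b b' hb.1 hb.2.1 hb.2.2 hb'.1 hb'.2.1 hb'.2.2 heq.2
      simp only [Prod.mk.injEq]
      exact ⟨e1, e2⟩
    rw [← himg, Set.ncard_image_of_injOn hinj]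
    exact hpairs

/-- between strict multiples there is nothing divisible -/
lemma not_dvd_of_between {m v : ℕ} (h1 : m < v) (h2 : v < 2*m) : ¬ m ∣ v := by
  intro hd
  have h3 : 0 < v - m := by omega
  have h4 : m ∣ v - m := Nat.dvd_sub hd dvd_rfl
  have := Nat.le_of_dvd h3 h4
  omega

lemma slide_singleton {k a : ℕ} (hk : 2 ≤ k) (ha : a < k) (ha2 : 2 ≤ a) :
    slide k a = a - 1 := by
  have hnd : ¬ k ∣ a := by
    intro hd
    have := Nat.le_of_dvd (by omega) hd
    omega
  have hmod : a % k = a := Nat.mod_eq_of_lt ha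
  exact slide_of_other hnd (by omega)

/-- decomposition of a band semigroup with c ≤ 2m into explicit pieces -/
lemma band_decomp {m c : ℕ} {A : Set ℕ} (H : BandHyp m c A) (hc : c ≤ 2*m) :
    bandSet m c A = {0} ∪ {m} ∪ A ∪ Set.Ici c := by
  have hm := H.hm
  ext s
  simp only [bandSet, Set.mem_union, Set.mem_singleton_iff, Set.mem_Ici, Set.mem_setOf_eq]
  constructor
  · rintro ((hd | hA') | hI)
    · by_cases h0 : s = 0
      · exact Or.inl (Or.inl (Or.inl h0))
      · by_cases h1 : s = m
        · exact Or.inl (Or.inl (Or.inr h1))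
        · have hsm : m ≤ s := Nat.le_of_dvd (by omega) hd
          have h3 : 0 < s - m := by omega
          have h4 : m ∣ s - m := Nat.dvd_sub hd dvd_rfl
          have := Nat.le_of_dvd h3 h4
          exact Or.inr (by omega)
    · exact Or.inl (Or.inr hA')
    · exact Or.inr hI
  · rintro (((h0 | h1) | hA') | hI)
    · exact Or.inl (Or.inl (h0 ▸ dvd_zero m))
    · exact Or.inl (Or.inl (h1 ▸ dvd_rfl))
    · exact Or.inl (Or.inr hA')
    · exact Or.inr hI

/-- similarly for the target band with multiplicity m-1 -/
lemma band_decomp' {m' c' : ℕ} (A' : Set ℕ) (hm' : 2 ≤ m') (hc' : c' ≤ 2*m') :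
    bandSet m' c' A' = {0} ∪ {m'} ∪ A' ∪ Set.Ici c' := by
  ext s
  simp only [bandSet, Set.mem_union, Set.mem_singleton_iff, Set.mem_Ici, Set.mem_setOf_eq]
  constructor
  · rintro ((hd | hA') | hI)
    · by_cases h0 : s = 0
      · exact Or.inl (Or.inl (Or.inl h0))
      · by_cases h1 : s = m'
        · exact Or.inl (Or.inl (Or.inr h1))
        · have hsm : m' ≤ s := Nat.le_of_dvd (by omega) hd
          have h3 : 0 < s - m' := by omega
          have h4 : m' ∣ s - m' := Nat.dvd_sub hd dvd_rfl
          have := Nat.le_of_dvd h3 h4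
          exact Or.inr (by omega)
    · exact Or.inl (Or.inr hA')
    · exact Or.inr hI
  · rintro (((h0 | h1) | hA') | hI)
    · exact Or.inl (Or.inl (h0 ▸ dvd_zero m'))
    · exact Or.inl (Or.inl (h1 ▸ dvd_rfl))
    · exact Or.inl (Or.inr hA')
    · exact Or.inr hI

/-- image of the case-2 semigroup under slide by K = max A -/
lemma case2_image {m c K : ℕ} {A : Set ℕ} (H : BandHyp m c A) (hm1A : m + 1 ∈ A)
    (hcle : c ≤ 2*m - 1) (hK : K ∈ A) (hKmax : ∀ a ∈ A, a ≤ K) (hKne : m + 2 ≤ K) :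
    slide K '' bandSet m c A =
      {0} ∪ {m - 1} ∪ ((fun a => a - 1) '' (A \ {K})) ∪ {K} ∪ Set.Ici (c - 1) := by
  have hm := H.hm
  obtain ⟨hK1, hK2, hK3, hK4⟩ := H.hA K hK
  have hc3 : m + 3 ≤ c := by
    have := (H.hA (m+1) hm1A).2.1
    omega
  rw [band_decomp H (by omega)]
  have hA2 : A = (A \ {K}) ∪ {K} := by
    ext a
    simp only [Set.mem_union, Set.mem_diff, Set.mem_singleton_iff]
    constructor
    · intro ha
      by_cases h : a = K
      · exact Or.inr h
      · exact Or.inl ⟨ha, h⟩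
    · rintro (⟨ha, _⟩ | h)
      · exact ha
      · exact h ▸ hK
  rw [Set.image_union, Set.image_union, Set.image_union]
  have h0 : slide K '' {0} = {0} := by
    rw [Set.image_singleton, slide_of_dvd (dvd_zero K)]
  have h1 : slide K '' {m} = {m - 1} := by
    rw [Set.image_singleton, slide_singleton (by omega) (by omega) (by omega)]
  have h2 : slide K '' (A \ {K}) = (fun a => a - 1) '' (A \ {K}) := by
    apply Set.image_congr
    rintro a ⟨haA, haK⟩
    obtain ⟨ha1, ha2, ha3, ha4⟩ := H.hA a haA
    have : a < K := by
      have := hKmax a haA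
      simp only [Set.mem_singleton_iff] at haK
      omega
    exact slide_singleton (by omega) this (by omega)
  have h3 : slide K '' {K} = {K} := by
    rw [Set.image_singleton, slide_of_dvd dvd_rfl]
  have h4 : slide K '' Set.Ici c = Set.Ici (c - 1) := by
    apply slide_image_Ici (by omega) (by omega)
    exact not_dvd_of_between (by omega) (by omega)
  have hSA : slide K '' A = (fun a => a - 1) '' (A \ {K}) ∪ {K} := by
    conv_lhs => rw [hA2]
    rw [Set.image_union, h2, h3]
  rw [h0, h1, hSA, h4]
  simp only [Set.union_assoc]

lemma pairsSet_finite (m c : ℕ) (A : Set ℕ) : (pairsSet m c A).Finite := by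
  apply Set.Finite.subset ((Set.finite_Iio c).prod (Set.finite_Iio c))
  rintro ⟨a, b⟩ ⟨_, hab, hbc, _, _⟩
  exact ⟨by simp only [Set.mem_Iio]; omega, by simp only [Set.mem_Iio]; omega⟩

/-- Case B2a : K ≤ c - 3. -/
lemma case2B2a {m c K : ℕ} {A : Set ℕ} (H : BandHyp m c A) (hm1A : m + 1 ∈ A)
    (hcle : c ≤ 2*m - 1) (hK : K ∈ A) (hKmax : ∀ a ∈ A, a ≤ K) (hKne : m + 2 ≤ K)
    (hKc : K + 3 ≤ c)
    (hpairs : (pairsSet m c A).ncard + 1 = m - 1) :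
    ∃ B : Set ℕ, slide K '' bandSet m c A = bandSet (m-1) (c-1) B ∧
      BandHyp (m-1) (c-1) B ∧ (pairsSet (m-1) (c-1) B).ncard + 1 = (m-1) - 1 := by
  have hm := H.hm
  obtain ⟨hK1, hK2, hK3, hK4⟩ := H.hA K hK
  have hc3 : m + 3 ≤ c := by have := (H.hA (m+1) hm1A).2.1; omega
  have hm6 : 6 ≤ m := by omega
  set B : Set ℕ := ((fun a => a - 1) '' (A \ {K})) ∪ {K} with hBdef
  have hAfact : ∀ a ∈ A, m + 1 ≤ a ∧ a + 2 ≤ c ∧ c ≤ a + m ∧ a ≤ K := by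
    intro a ha
    obtain ⟨h1, h2, h3, _⟩ := H.hA a ha
    exact ⟨by omega, h2, h3, hKmax a ha⟩
  have hAnd : ∀ a ∈ A, ¬ m ∣ a := fun a ha => (H.hA a ha).2.2.2
  have hBmem : ∀ a, a ∈ A → a ≠ K → a - 1 ∈ B := fun a h1 h2 => Or.inl ⟨a, ⟨h1, h2⟩, rfl⟩
  have hBK : K ∈ B := Or.inr rfl
  have hBelim : ∀ y ∈ B, (∃ a, a ∈ A ∧ a ≠ K ∧ a - 1 = y) ∨ y = K := by
    rintro y (⟨a, ⟨h1, h2⟩, h3⟩ | h)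
    · exact Or.inl ⟨a, h1, h2, h3⟩
    · exact Or.inr h
  refine ⟨B, ?_, ?_, ?_⟩
  · rw [case2_image H hm1A hcle hK hKmax hKne,
      band_decomp' B (by omega) (by omega), hBdef]
    simp only [Set.union_assoc]
  · refine ⟨by omega, by omega, ?_⟩
    intro y hy
    rcases hBelim y hy with ⟨a, haA, haK, hay⟩ | rfl
    · obtain ⟨h1, h2, h3, h4⟩ := hAfact a haA
      refine ⟨by omega, by omega, by omega, ?_⟩
      rw [← hay]
      exact not_dvd_of_between (by omega) (by omega)
    · exact ⟨by omega, by omega, by omega, not_dvd_of_between (by omega) (by omega)⟩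
  · -- pair count
    have hp₀mem : (K, K+1) ∈ pairsSet m c A :=
      ⟨hK, by omega, by omega, not_dvd_of_between (by omega) (by omega),
        fun hc' => by have := hKmax _ hc'; omega⟩
    set σ : ℕ → ℕ := fun a => if a = K then K else a - 1 with hσ
    set τ : ℕ → ℕ := fun b => if b = K + 1 then K - 1 else b - 1 with hτ
    have hσv : ∀ a, a ≠ K → σ a = a - 1 := fun a h => if_neg h
    have hσK : σ K = K := if_pos rfl
    have hτv : ∀ b, b ≠ K + 1 → τ b = b - 1 := fun b h => if_neg h
    have hτK : τ (K+1) = K - 1 := if_pos rfl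
    have hgapfact : ∀ a ∈ A, ∀ b, a < b → b < c → b ∉ A → m + 2 ≤ b ∧ b ≠ K := by
      intro a ha b h1 h2 h3
      have := (hAfact a ha).1
      exact ⟨by omega, fun hc' => h3 (hc' ▸ hK)⟩
    have himg : (fun p : ℕ × ℕ => (σ p.1, τ p.2)) '' (pairsSet m c A \ {(K, K+1)}) =
        pairsSet (m-1) (c-1) B := by
      ext ⟨y, z⟩
      constructor
      · rintro ⟨⟨a, b⟩, ⟨⟨haA, hab, hbc, hbnd, hbA⟩, hne⟩, heq⟩
        have heq1 : σ a = y := congrArg Prod.fst heq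
        have heq2 : τ b = z := congrArg Prod.snd heq
        obtain ⟨ha1, ha2, ha3, ha4⟩ := hAfact a haA
        obtain ⟨hb1, hb2⟩ := hgapfact a haA b hab hbc hbA
        have hne' : ¬(a = K ∧ b = K + 1) := by
          rintro ⟨e1, e2⟩
          exact hne (by rw [e1, e2]; rfl)
        refine ⟨?_, ?_, ?_, ?_, ?_⟩
        · by_cases haK : a = K
          · rw [← heq1, haK, hσK]; exact hBK
          · rw [← heq1, hσv a haK]; exact hBmem a haA haK
        · by_cases haK : a = K <;> by_cases hbK : b = K + 1
          · exact absurd ⟨haK, hbK⟩ hne'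
          · rw [← heq1, ← heq2, haK, hσK, hτv b hbK]; omega
          · rw [← heq1, ← heq2, hσv a haK, hbK, hτK]; omega
          · rw [← heq1, ← heq2, hσv a haK, hτv b hbK]; omega
        · by_cases hbK : b = K + 1
          · rw [← heq2, hbK, hτK]; omega
          · rw [← heq2, hτv b hbK]; omega
        · by_cases hbK : b = K + 1
          · rw [← heq2, hbK, hτK]
            exact not_dvd_of_between (by omega) (by omega)
          · rw [← heq2, hτv b hbK]
            exact not_dvd_of_between (by omega) (by omega)
        · intro hzB
          rcases hBelim z hzB with ⟨a', ha'A, ha'K, hay'⟩ | hzK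
          · obtain ⟨hc1, _, _, hc4⟩ := hAfact a' ha'A
            by_cases hbK : b = K + 1
            · rw [← heq2, hbK, hτK] at hay'
              exact ha'K (by omega)
            · rw [← heq2, hτv b hbK] at hay'
              have : b = a' := by omega
              exact hbA (this ▸ ha'A)
          · by_cases hbK : b = K + 1
            · rw [← heq2, hbK, hτK] at hzK; omega
            · rw [← heq2, hτv b hbK] at hzK
              exact hbK (by omega)
      · rintro ⟨hyB, hyz, hzc, hznd, hzB⟩
        have hyb : m ≤ y := by
          rcases hBelim y hyB with ⟨a, haA, _, hay⟩ | hyK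
          · have := (hAfact a haA).1; omega
          · omega
        have hzm : m + 1 ≤ z := by omega
        have hzK : z ≠ K := fun hc' => hzB (hc' ▸ hBK)
        by_cases hz1 : z = K - 1
        · rcases hBelim y hyB with ⟨a, haA, haK, hay⟩ | hyK
          · obtain ⟨ha1, ha2, ha3, ha4⟩ := hAfact a haA
            have haltK : a < K := by omega
            refine ⟨(a, K+1), ⟨⟨haA, by omega, by omega,
              not_dvd_of_between (by omega) (by omega),
              fun hc' => by have := hKmax _ hc'; omega⟩, ?_⟩, ?_⟩
            · intro hcon
              exact haK (congrArg Prod.fst hcon)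
            · have e1 : σ a = y := by rw [hσv a haK]; omega
              have e2 : τ (K+1) = z := by rw [hτK]; omega
              show (σ a, τ (K+1)) = (y, z)
              rw [e1, e2]
          · have hyK2 : K = y := hyK.symm
            subst hyK2
            omega
        · have hb1 : z + 1 ∉ A := by
            intro hc'
            by_cases h' : z + 1 = K
            · exact hz1 (by omega)
            · apply hzB
              have := hBmem (z+1) hc' h'
              have he : z + 1 - 1 = z := by omega
              rwa [he] at this
          have hb2 : ¬ m ∣ (z + 1) := not_dvd_of_between (by omega) (by omega)
          have hzz : z + 1 ≠ K + 1 := by omega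
          rcases hBelim y hyB with ⟨a, haA, haK, hay⟩ | hyK
          · obtain ⟨ha1, ha2, ha3, ha4⟩ := hAfact a haA
            refine ⟨(a, z+1), ⟨⟨haA, by omega, by omega, hb2, hb1⟩, ?_⟩, ?_⟩
            · intro hcon
              exact haK (congrArg Prod.fst hcon)
            · have e1 : σ a = y := by rw [hσv a haK]; omega
              have e2 : τ (z+1) = z := by rw [hτv _ hzz]; omega
              show (σ a, τ (z+1)) = (y, z)
              rw [e1, e2]
          · have hyK2 : K = y := hyK.symm
            subst hyK2
            refine ⟨(K, z+1), ⟨⟨hK, by omega, by omega, hb2, hb1⟩, ?_⟩, ?_⟩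
            · intro hcon
              have : z + 1 = K + 1 := congrArg Prod.snd hcon
              exact hzz this
            · have e2 : τ (z+1) = z := by rw [hτv _ hzz]; omega
              show (σ K, τ (z+1)) = (K, z)
              rw [hσK, e2]
    have hinj : Set.InjOn (fun p : ℕ × ℕ => (σ p.1, τ p.2)) (pairsSet m c A \ {(K, K+1)}) := by
      rintro ⟨a, b⟩ ⟨⟨haA, hab, hbc, hbnd, hbA⟩, _⟩ ⟨a', b'⟩ ⟨⟨ha'A, hab', hbc', hbnd', hbA'⟩, _⟩ heq
      have heq1 : σ a = σ a' := congrArg Prod.fst heq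
      have heq2 : τ b = τ b' := congrArg Prod.snd heq
      obtain ⟨ha1, ha2, ha3, ha4⟩ := hAfact a haA
      obtain ⟨hb1, hb2, hb3, hb4⟩ := hAfact a' ha'A
      have hKb : b ≠ K := fun hc' => hbA (hc' ▸ hK)
      have hKb' : b' ≠ K := fun hc' => hbA' (hc' ▸ hK)
      have e1 : a = a' := by
        by_cases h1 : a = K <;> by_cases h2 : a' = K
        · omega
        · rw [h1, hσK, hσv a' h2] at heq1; omega
        · rw [h2, hσK, hσv a h1] at heq1; omega
        · rw [hσv a h1, hσv a' h2] at heq1; omega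
      have e2 : b = b' := by
        by_cases h1 : b = K + 1 <;> by_cases h2 : b' = K + 1
        · omega
        · rw [h1, hτK, hτv b' h2] at heq2; omega
        · rw [h2, hτK, hτv b h1] at heq2; omega
        · rw [hτv b h1, hτv b' h2] at heq2; omega
      rw [e1, e2]
    have hfin := pairsSet_finite m c A
    have h1 : (pairsSet (m-1) (c-1) B).ncard = (pairsSet m c A \ {(K, K+1)}).ncard := by
      rw [← himg, Set.ncard_image_of_injOn hinj]
    rw [h1, Set.ncard_diff_singleton_of_mem hp₀mem]
    omega

/-- Case B2b : K = c - 2. -/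
lemma case2B2b {m c K : ℕ} {A : Set ℕ} (H : BandHyp m c A) (hm1A : m + 1 ∈ A)
    (hcle : c ≤ 2*m - 1) (hK : K ∈ A) (hKmax : ∀ a ∈ A, a ≤ K) (hKne : m + 2 ≤ K)
    (hKc2 : K + 2 = c) (hnd : ¬ m ∣ (c - 1))
    (hpairs : (pairsSet m c A).ncard + 1 = m - 1) :
    ∃ B : Set ℕ, slide K '' bandSet m c A = bandSet (m-1) (c-2) B ∧
      BandHyp (m-1) (c-2) B ∧ (pairsSet (m-1) (c-2) B).ncard + 1 = (m-1) - 1 := by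
  have hm := H.hm
  obtain ⟨hK1, hK2, hK3, hK4⟩ := H.hA K hK
  have hc3 : m + 3 ≤ c := by have := (H.hA (m+1) hm1A).2.1; omega
  have hc4 : m + 4 ≤ c := by omega
  have hm5 : 5 ≤ m := by omega
  set B : Set ℕ := (fun a => a - 1) '' (A \ {K}) with hBdef
  have hAfact : ∀ a ∈ A, m + 1 ≤ a ∧ a + 2 ≤ c ∧ c ≤ a + m ∧ a ≤ K := by
    intro a ha
    obtain ⟨h1, h2, h3, _⟩ := H.hA a ha
    exact ⟨by omega, h2, h3, hKmax a ha⟩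
  have hBmem : ∀ a, a ∈ A → a ≠ K → a - 1 ∈ B := fun a h1 h2 => ⟨a, ⟨h1, h2⟩, rfl⟩
  have hBelim : ∀ y ∈ B, ∃ a, a ∈ A ∧ a ≠ K ∧ a - 1 = y := by
    rintro y ⟨a, ⟨h1, h2⟩, h3⟩
    exact ⟨a, h1, h2, h3⟩
  refine ⟨B, ?_, ?_, ?_⟩
  · rw [case2_image H hm1A hcle hK hKmax hKne,
      band_decomp' B (by omega) (by omega), hBdef]
    have hKI : ({K} : Set ℕ) ∪ Set.Ici (c-1) = Set.Ici (c-2) := by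
      ext t
      simp only [Set.mem_union, Set.mem_singleton_iff, Set.mem_Ici]
      omega
    rw [Set.union_assoc, Set.union_assoc, Set.union_assoc, hKI, ← Set.union_assoc,
      ← Set.union_assoc, Set.union_assoc]
  · refine ⟨by omega, by omega, ?_⟩
    intro y hy
    obtain ⟨a, haA, haK, hay⟩ := hBelim y hy
    obtain ⟨h1, h2, h3, h4⟩ := hAfact a haA
    refine ⟨by omega, by omega, by omega, ?_⟩
    rw [← hay]
    exact not_dvd_of_between (by omega) (by omega)
  · -- pair count
    have hcA : c - 1 ∉ A := by
      intro hc'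
      have := (hAfact _ hc').2.1
      omega
    have hp₀mem : (K, c-1) ∈ pairsSet m c A :=
      ⟨hK, by omega, by omega, hnd, hcA⟩
    set τ : ℕ → ℕ := fun b => if b = c - 1 then K - 1 else b - 1 with hτ
    have hτv : ∀ b, b ≠ c - 1 → τ b = b - 1 := fun b h => if_neg h
    have hτK : τ (c-1) = K - 1 := if_pos rfl
    have himg : (fun p : ℕ × ℕ => (p.1 - 1, τ p.2)) '' (pairsSet m c A \ {(K, c-1)}) =
        pairsSet (m-1) (c-2) B := by
      ext ⟨y, z⟩
      constructor
      · rintro ⟨⟨a, b⟩, ⟨⟨haA, hab, hbc, hbnd, hbA⟩, hne⟩, heq⟩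
        have heq1 : a - 1 = y := congrArg Prod.fst heq
        have heq2 : τ b = z := congrArg Prod.snd heq
        obtain ⟨ha1, ha2, ha3, ha4⟩ := hAfact a haA
        have haK : a ≠ K := by
          intro e1
          have hbce : b = c - 1 := by omega
          exact hne (by rw [e1, hbce]; rfl)
        have hb1 : m + 2 ≤ b := by omega
        refine ⟨?_, ?_, ?_, ?_, ?_⟩
        · rw [← heq1]; exact hBmem a haA haK
        · by_cases hbK : b = c - 1
          · rw [← heq1, ← heq2, hbK, hτK]; omega
          · rw [← heq1, ← heq2, hτv b hbK]; omega
        · by_cases hbK : b = c - 1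
          · rw [← heq2, hbK, hτK]; omega
          · rw [← heq2, hτv b hbK]; omega
        · by_cases hbK : b = c - 1
          · rw [← heq2, hbK, hτK]
            exact not_dvd_of_between (by omega) (by omega)
          · rw [← heq2, hτv b hbK]
            exact not_dvd_of_between (by omega) (by omega)
        · intro hzB
          obtain ⟨a', ha'A, ha'K, hay'⟩ := hBelim z hzB
          obtain ⟨hd1, _, _, hd4⟩ := hAfact a' ha'A
          by_cases hbK : b = c - 1
          · rw [← heq2, hbK, hτK] at hay'
            exact ha'K (by omega)
          · rw [← heq2, hτv b hbK] at hay'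
            have : b = a' := by omega
            exact hbA (this ▸ ha'A)
      · rintro ⟨hyB, hyz, hzc, hznd, hzB⟩
        obtain ⟨a, haA, haK, hay⟩ := hBelim y hyB
        obtain ⟨ha1, ha2, ha3, ha4⟩ := hAfact a haA
        have hyz' : y < z := hyz
        have hzc' : z < c - 2 := hzc
        have hzm : m + 1 ≤ z := by omega
        by_cases hz1 : z = K - 1
        · refine ⟨(a, c-1), ⟨⟨haA, by omega, by omega, hnd, hcA⟩, ?_⟩, ?_⟩
          · intro hcon
            exact haK (congrArg Prod.fst hcon)
          · have e2 : τ (c-1) = z := by rw [hτK]; omega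
            show (a - 1, τ (c-1)) = (y, z)
            rw [e2, hay]
        · have hb1 : z + 1 ∉ A := by
            intro hc'
            by_cases h' : z + 1 = K
            · exact hz1 (by omega)
            · apply hzB
              have := hBmem (z+1) hc' h'
              have he : z + 1 - 1 = z := by omega
              rwa [he] at this
          have hb2 : ¬ m ∣ (z + 1) := not_dvd_of_between (by omega) (by omega)
          have hzz : z + 1 ≠ c - 1 := by omega
          refine ⟨(a, z+1), ⟨⟨haA, by omega, by omega, hb2, hb1⟩, ?_⟩, ?_⟩
          · intro hcon
            have : z + 1 = c - 1 := congrArg Prod.snd hcon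
            exact hzz this
          · have e2 : τ (z+1) = z := by rw [hτv _ hzz]; omega
            show (a - 1, τ (z+1)) = (y, z)
            rw [e2, hay]
    have hinj : Set.InjOn (fun p : ℕ × ℕ => (p.1 - 1, τ p.2)) (pairsSet m c A \ {(K, c-1)}) := by
      rintro ⟨a, b⟩ ⟨⟨haA, hab, hbc, hbnd, hbA⟩, _⟩ ⟨a', b'⟩ ⟨⟨ha'A, hab', hbc', hbnd', hbA'⟩, _⟩ heq
      have heq1 : a - 1 = a' - 1 := congrArg Prod.fst heq
      have heq2 : τ b = τ b' := congrArg Prod.snd heq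
      obtain ⟨ha1, _, _, _⟩ := hAfact a haA
      obtain ⟨hb1, _, _, _⟩ := hAfact a' ha'A
      have hKb : b ≠ K := fun hc' => hbA (hc' ▸ hK)
      have hKb' : b' ≠ K := fun hc' => hbA' (hc' ▸ hK)
      have e1 : a = a' := by omega
      have e2 : b = b' := by
        by_cases h1 : b = c - 1 <;> by_cases h2 : b' = c - 1
        · omega
        · rw [h1, hτK, hτv b' h2] at heq2; omega
        · rw [h2, hτK, hτv b h1] at heq2; omega
        · rw [hτv b h1, hτv b' h2] at heq2; omega
      rw [e1, e2]
    have hfin := pairsSet_finite m c A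
    have h1 : (pairsSet (m-1) (c-2) B).ncard = (pairsSet m c A \ {(K, c-1)}).ncard := by
      rw [← himg, Set.ncard_image_of_injOn hinj]
    rw [h1, Set.ncard_diff_singleton_of_mem hp₀mem]
    omega

/-- if c ≤ 2m - 1 then A has an element other than m+1. -/
lemma smallA {m c : ℕ} {A : Set ℕ} (H : BandHyp m c A) (hm1A : m + 1 ∈ A)
    (hcle : c ≤ 2*m - 1) (hpairs : (pairsSet m c A).ncard + 1 = m - 1) :
    ∃ a ∈ A, a ≠ m + 1 := by
  have hm := H.hm
  have hc3 : m + 3 ≤ c := by have := (H.hA (m+1) hm1A).2.1; omega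
  by_contra hcon
  push_neg at hcon
  have himg : pairsSet m c A = (fun b => ((m+1 : ℕ), b)) '' Set.Icc (m+2) (c-1) := by
    ext ⟨a, b⟩
    constructor
    · rintro ⟨haA, hab, hbc, hbnd, hbA⟩
      have ha1 : a = m + 1 := hcon a haA
      have hb2 : b ≠ m + 1 := fun hcc => hbA (hcc ▸ hm1A)
      exact ⟨b, ⟨by omega, by omega⟩, by rw [ha1]⟩
    · rintro ⟨b', ⟨h1, h2⟩, heq⟩
      have e1 : m + 1 = a := congrArg Prod.fst heq
      have e2 : b' = b := congrArg Prod.snd heq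
      refine ⟨?_, by omega, by omega, ?_, ?_⟩
      · rw [← e1]; exact hm1A
      · rw [← e2]; exact not_dvd_of_between (by omega) (by omega)
      · rw [← e2]
        intro hcc
        have := hcon b' hcc
        omega
  have hcard : (pairsSet m c A).ncard = c - m - 2 := by
    rw [himg, Set.ncard_image_of_injective _ (fun x y hxy => congrArg Prod.snd hxy),
      ncard_Icc]
    omega
  omega

/-- in the case c = 2m, non-exceptional A must be {m+1} ∪ [j, 2m-2]. -/
lemma B1_structure {m : ℕ} {A : Set ℕ} (H : BandHyp m (2*m) A) (hm1A : m + 1 ∈ A)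
    (hpairs : (pairsSet m (2*m) A).ncard + 1 = m - 1)
    (hex : ∃ a ∈ A, a ≠ m + 1) :
    ∃ j, m + 2 ≤ j ∧ j ≤ 2*m - 2 ∧ 4 ≤ m ∧ A = {m+1} ∪ Set.Icc j (2*m-2) := by
  have hm := H.hm
  obtain ⟨a₀, ha₀A, ha₀ne⟩ := hex
  have hAIcc : A ⊆ Set.Icc (m+1) (2*m-2) := by
    intro a ha
    obtain ⟨h1, h2, _, _⟩ := H.hA a ha
    exact ⟨by omega, by omega⟩
  have hAIcc' : A ⊆ Set.Icc (m+1) (2*m-1) := fun a ha => by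
    have := hAIcc ha; exact ⟨this.1, by have := this.2; omega⟩
  have hAfin : A.Finite := (Set.finite_Icc _ _).subset hAIcc
  set G : Set ℕ := Set.Icc (m+1) (2*m-1) \ A with hGdef
  have hGfin : G.Finite := (Set.finite_Icc _ _).diff
  have hGcard : G.ncard = (m-1) - A.ncard := by
    rw [hGdef, Set.ncard_diff hAIcc' hAfin, ncard_Icc]
    omega
  have hAcard1 : 1 ≤ A.ncard := by
    rw [Nat.one_le_iff_ne_zero]
    intro hcc
    rw [Set.ncard_eq_zero hAfin] at hcc
    rw [hcc] at hm1A
    exact hm1A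
  have hAcardle : A.ncard ≤ m - 1 := by
    have := Set.ncard_le_ncard hAIcc' (Set.finite_Icc _ _)
    rw [ncard_Icc] at this
    omega
  -- key claim
  have hkey : ∀ a ∈ A, a ≠ m + 1 → ∀ b ∈ G, b ≠ 2*m - 1 → ¬ a < b := by
    intro a haA hane b hbG hbne hab
    obtain ⟨⟨hb1, hb2⟩, hb3⟩ := hbG
    have hbm1 : b ≠ m + 1 := fun hcc => hb3 (hcc ▸ hm1A)
    obtain ⟨ha1, ha2⟩ := hAIcc haA
    set P : Set (ℕ × ℕ) := ((fun b => ((m+1:ℕ), b)) '' G) ∪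
      ((fun a => (a, 2*m-1)) '' (A \ {m+1})) ∪ {(a, b)} with hPdef
    have hsub : P ⊆ pairsSet m (2*m) A := by
      rintro ⟨u, v⟩ ((⟨b', ⟨⟨h1, h2⟩, h3⟩, heq⟩ | ⟨a', ⟨h1, h2⟩, heq⟩) | heq)
      · have e1 : m + 1 = u := congrArg Prod.fst heq
        have e2 : b' = v := congrArg Prod.snd heq
        have hbne' : b' ≠ m + 1 := fun hcc => h3 (hcc ▸ hm1A)
        refine ⟨by rw [← e1]; exact hm1A, by omega, by omega, ?_, ?_⟩
        · rw [← e2]; exact not_dvd_of_between (by omega) (by omega)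
        · rw [← e2]; exact h3
      · have e1 : a' = u := congrArg Prod.fst heq
        have e2 : (2*m-1 : ℕ) = v := congrArg Prod.snd heq
        obtain ⟨h4, h5⟩ := hAIcc h1
        refine ⟨by rw [← e1]; exact h1, by omega, by omega, ?_, ?_⟩
        · rw [← e2]; exact not_dvd_of_between (by omega) (by omega)
        · rw [← e2]
          intro hcc
          have := (hAIcc hcc).2
          omega
      · have e1 : u = a := congrArg Prod.fst heq
        have e2 : v = b := congrArg Prod.snd heq
        subst e1; subst e2
        exact ⟨haA, hab, by omega, not_dvd_of_between (by omega) (by omega), hb3⟩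
    have hinj1 : Set.InjOn (fun b => ((m+1:ℕ), b)) G :=
      fun x _ y _ h => congrArg Prod.snd h
    have hinj2 : Set.InjOn (fun a => (a, 2*m-1)) (A \ {m+1}) :=
      fun x _ y _ h => congrArg Prod.fst h
    have hAm1fin : (A \ {m+1}).Finite := hAfin.diff
    have hd1 : Disjoint ((fun b => ((m+1:ℕ), b)) '' G) ((fun a => (a, 2*m-1)) '' (A \ {m+1})) := by
      rw [Set.disjoint_left]
      rintro ⟨u, v⟩ ⟨b', _, heq⟩ ⟨a', ⟨_, h2⟩, heq'⟩
      have e1 : m + 1 = u := congrArg Prod.fst heq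
      have e2 : a' = u := congrArg Prod.fst heq'
      have : a' = m + 1 := by omega
      exact h2 this
    have hd2 : Disjoint (((fun b => ((m+1:ℕ), b)) '' G) ∪
        ((fun a => (a, 2*m-1)) '' (A \ {m+1}))) {(a, b)} := by
      rw [Set.disjoint_right]
      rintro ⟨u, v⟩ heq hmem
      have e1 : u = a := congrArg Prod.fst heq
      have e2 : v = b := congrArg Prod.snd heq
      subst e1; subst e2
      rcases hmem with ⟨b', _, heq'⟩ | ⟨a', ⟨_, h2⟩, heq'⟩
      · have e3 : m + 1 = u := congrArg Prod.fst heq'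
        exact hane (by omega)
      · have e4 : (2*m-1:ℕ) = v := congrArg Prod.snd heq'
        exact hbne (by omega)
    have hcardP : P.ncard = m - 1 := by
      rw [hPdef, Set.ncard_union_eq hd2 (((hGfin.image _).union (hAm1fin.image _)))
        (Set.finite_singleton _),
        Set.ncard_union_eq hd1 (hGfin.image _) (hAm1fin.image _),
        Set.ncard_image_of_injOn hinj1, Set.ncard_image_of_injOn hinj2,
        Set.ncard_singleton, hGcard,
        Set.ncard_diff_singleton_of_mem hm1A]
      omega
    have hle := Set.ncard_le_ncard hsub (pairsSet_finite m (2*m) A)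
    omega
  -- extract the interval
  have hne2 : (A \ {m+1}).Nonempty := ⟨a₀, ha₀A, ha₀ne⟩
  set j := sInf (A \ {m+1}) with hjdef
  obtain ⟨hjA, hjne⟩ := Nat.sInf_mem hne2
  have hjne' : j ≠ m + 1 := hjne
  have hjmin : ∀ a ∈ A, a ≠ m+1 → j ≤ a := fun a h1 h2 => Nat.sInf_le ⟨h1, h2⟩
  obtain ⟨hj1, hj2⟩ := hAIcc hjA
  have hj3 : m + 2 ≤ j := by omega
  refine ⟨j, hj3, by omega, by omega, ?_⟩
  ext v
  simp only [Set.mem_union, Set.mem_singleton_iff, Set.mem_Icc]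
  constructor
  · intro hv
    by_cases h' : v = m + 1
    · exact Or.inl h'
    · exact Or.inr ⟨hjmin v hv h', (hAIcc hv).2⟩
  · rintro (rfl | ⟨h1, h2⟩)
    · exact hm1A
    · by_contra hvA
      have hvG : v ∈ G := ⟨⟨by omega, by omega⟩, hvA⟩
      rcases Nat.lt_or_ge j v with h' | h'
      · exact hkey j hjA hjne' v hvG (by omega) h'
      · have : v = j := by omega
        rw [this] at hvA
        exact hvA hjA

/-- The B1 slide: c = 2m, slide by K = 2m - 2. -/
lemma case2B1 {m j : ℕ} {A : Set ℕ} (H : BandHyp m (2*m) A) (hm4 : 4 ≤ m)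
    (hj1 : m + 2 ≤ j) (hj2 : j ≤ 2*m - 2)
    (hA : A = {m+1} ∪ Set.Icc j (2*m-2)) :
    ∃ B : Set ℕ, slide (2*m-2) '' bandSet m (2*m) A = bandSet (m-1) (2*m-2) B ∧
      BandHyp (m-1) (2*m-2) B ∧ (pairsSet (m-1) (2*m-2) B).ncard + 1 = (m-1) - 1 := by
  set B : Set ℕ := {m} ∪ Set.Icc (j-1) (2*m-4) with hBdef
  refine ⟨B, ?_, ?_, ?_⟩
  · rw [band_decomp H (by omega), band_decomp' B (by omega) (by omega), hA]
    have hsplit : Set.Icc j (2*m-2) = Set.Icc j (2*m-3) ∪ {2*m-2} := by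
      ext t
      simp only [Set.mem_union, Set.mem_Icc, Set.mem_singleton_iff]
      omega
    rw [hsplit]
    simp only [Set.image_union]
    have h0 : slide (2*m-2) '' {0} = {0} := by
      rw [Set.image_singleton, slide_of_dvd (dvd_zero _)]
    have h1 : slide (2*m-2) '' {m} = {m-1} := by
      rw [Set.image_singleton, slide_singleton (by omega) (by omega) (by omega)]
    have h2 : slide (2*m-2) '' {m+1} = {m} := by
      rw [Set.image_singleton, slide_singleton (by omega) (by omega) (by omega)]
      norm_num
    have h3 : slide (2*m-2) '' Set.Icc j (2*m-3) = Set.Icc (j-1) (2*m-4) := by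
      ext y
      constructor
      · rintro ⟨t, ⟨ht1, ht2⟩, rfl⟩
        rw [slide_singleton (by omega) (by omega) (by omega)]
        exact ⟨by omega, by omega⟩
      · rintro ⟨hy1, hy2⟩
        refine ⟨y + 1, ⟨by omega, by omega⟩, ?_⟩
        rw [slide_singleton (by omega) (by omega) (by omega)]
        omega
    have h4 : slide (2*m-2) '' {2*m-2} = {2*m-2} := by
      rw [Set.image_singleton, slide_of_dvd dvd_rfl]
    have h5 : slide (2*m-2) '' Set.Ici (2*m) = Set.Ici (2*m-1) := by
      have := slide_image_Ici (k := 2*m-2) (c := 2*m) (by omega) (by omega)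
        (not_dvd_of_between (by omega) (by omega))
      rw [this]
    rw [h0, h1, h2, h3, h4, h5]
    have hIci : ({2*m-2} : Set ℕ) ∪ Set.Ici (2*m-1) = Set.Ici (2*m-2) := by
      ext t
      simp only [Set.mem_union, Set.mem_singleton_iff, Set.mem_Ici]
      omega
    rw [hBdef]
    ext t
    simp only [Set.mem_union, Set.mem_singleton_iff, Set.mem_Icc, Set.mem_Ici]
    omega
  · refine ⟨by omega, by omega, ?_⟩
    rintro y (rfl | ⟨hy1, hy2⟩)
    · exact ⟨by omega, by omega, by omega, not_dvd_of_between (by omega) (by omega)⟩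
    · exact ⟨by omega, by omega, by omega, not_dvd_of_between (by omega) (by omega)⟩
  · have himg : pairsSet (m-1) (2*m-2) B =
        ((fun b => ((m:ℕ), b)) '' Set.Icc (m+1) (j-2)) ∪
        ((fun a => (a, 2*m-3)) '' B) := by
      ext ⟨y, z⟩
      constructor
      · rintro ⟨hyB, hyz, hzc, hznd, hzB⟩
        have hyz' : y < z := hyz
        have hzc' : z < 2*m-2 := hzc
        have hym : m ≤ y := by
          rcases hyB with rfl | ⟨h1, h2⟩
          · omega
          · omega
        have hzB' : ¬(z = m ∨ (j - 1 ≤ z ∧ z ≤ 2*m-4)) := by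
          intro h'
          apply hzB
          rcases h' with h' | h'
          · exact Or.inl h'
          · exact Or.inr ⟨h'.1, h'.2⟩
        push_neg at hzB'
        by_cases hz : z = 2*m-3
        · exact Or.inr ⟨y, hyB, by rw [hz]⟩
        · have hzj : z ≤ j - 2 := by omega
          have hyeq : y = m := by
            rcases hyB with rfl | ⟨h1, h2⟩
            · rfl
            · omega
          exact Or.inl ⟨z, ⟨by omega, hzj⟩, by rw [hyeq]⟩
      · rintro (⟨b', ⟨h1, h2⟩, heq⟩ | ⟨a', ha', heq⟩)
        · have e1 : m = y := congrArg Prod.fst heq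
          have e2 : b' = z := congrArg Prod.snd heq
          refine ⟨by rw [← e1]; exact Or.inl rfl, by omega, by omega, ?_, ?_⟩
          · rw [← e2]; exact not_dvd_of_between (by omega) (by omega)
          · rw [← e2]
            rintro (h' | ⟨h3, h4⟩)
            · have : b' = m := h'
              omega
            · omega
        · have e1 : a' = y := congrArg Prod.fst heq
          have e2 : (2*m-3:ℕ) = z := congrArg Prod.snd heq
          have ha'f : a' = m ∨ (j - 1 ≤ a' ∧ a' ≤ 2*m-4) := by
            rcases ha' with h' | ⟨h3, h4⟩
            · exact Or.inl h'
            · exact Or.inr ⟨h3, h4⟩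
          refine ⟨by rw [← e1]; exact ha', by omega, by omega, ?_, ?_⟩
          · rw [← e2]; exact not_dvd_of_between (by omega) (by omega)
          · rw [← e2]
            rintro (h' | ⟨h3, h4⟩)
            · have : (2*m-3:ℕ) = m := h'
              omega
            · omega
    have hinj1 : Set.InjOn (fun b => ((m:ℕ), b)) (Set.Icc (m+1) (j-2)) :=
      fun x _ y _ h => congrArg Prod.snd h
    have hinj2 : Set.InjOn (fun a => (a, (2*m-3:ℕ))) B :=
      fun x _ y _ h => congrArg Prod.fst h
    have hBfin : B.Finite := ((Set.finite_singleton _).union (Set.finite_Icc _ _))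
    have hBcard : B.ncard = 2*m - 1 - j := by
      rw [hBdef, Set.ncard_union_eq ?_ (Set.finite_singleton _) (Set.finite_Icc _ _),
        Set.ncard_singleton, ncard_Icc]
      · omega
      · rw [Set.disjoint_left]
        rintro t rfl ⟨h1, h2⟩
        omega
    have hd : Disjoint ((fun b => ((m:ℕ), b)) '' Set.Icc (m+1) (j-2))
        ((fun a => (a, 2*m-3)) '' B) := by
      rw [Set.disjoint_left]
      rintro ⟨u, v⟩ ⟨b', ⟨_, h2⟩, heq⟩ ⟨a', _, heq'⟩
      have e2 : b' = v := congrArg Prod.snd heq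
      have e4 : (2*m-3:ℕ) = v := congrArg Prod.snd heq'
      omega
    rw [himg, Set.ncard_union_eq hd ((Set.finite_Icc _ _).image _) (hBfin.image _),
      Set.ncard_image_of_injOn hinj1, Set.ncard_image_of_injOn hinj2, ncard_Icc, hBcard]
    omega


lemma excep3 : slide 4 '' bandSet 3 6 {4} = bandSet 2 4 ∅ := by
  have H : BandHyp 3 6 {4} := by
    refine ⟨by omega, by omega, ?_⟩
    rintro a rfl
    refine ⟨by omega, by omega, by omega, by omega⟩
  rw [band_decomp H (by omega)]
  simp only [Set.image_union]
  have h0 : slide 4 '' {0} = {0} := by rw [Set.image_singleton, slide_of_dvd (dvd_zero _)]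
  have h1 : slide 4 '' {3} = {2} := by
    rw [Set.image_singleton, slide_singleton (by omega) (by omega) (by omega)]
  have h2 : slide 4 '' ({4} : Set ℕ) = {4} := by
    rw [Set.image_singleton, slide_of_dvd dvd_rfl]
  have h3 : slide 4 '' Set.Ici 6 = Set.Ici 5 := by
    have := slide_image_Ici (k := 4) (c := 6) (by omega) (by omega) (by omega)
    norm_num at this
    exact this
  rw [h0, h1, h2, h3]
  ext t
  simp only [bandSet, Set.mem_union, Set.mem_singleton_iff, Set.mem_Ici, Set.mem_setOf_eq,
    Set.mem_empty_iff_false, or_false, false_or]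
  omega

lemma finish {S : Set ℕ} (hS : IsNumericalSemigroup S) (h : ew S + 1 = genus S)
    {k m' c' : ℕ} {B : Set ℕ} (hk2 : 2 ≤ k) (h1S : 1 ∉ S)
    (himg : slide k '' S = bandSet m' c' B) (hB : BandHyp m' c' B)
    (hp : (pairsSet m' c' B).ncard + 1 = m' - 1) :
    IsNumericalSemigroup (slide k '' S) ∧ Secundive (slide k '' S) ∧
      genus (slide k '' S) = genus S - 1 ∧ ew (slide k '' S) = genus S - 2 := by
  have hgen : genus (slide k '' S) + 1 = genus S := genus_slide hk2 h1S hS.2.1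
  have hewT : ew (slide k '' S) + 1 = genus (slide k '' S) := by
    rw [himg]; exact hB.ew_genus hp
  refine ⟨by rw [himg]; exact hB.ns, by rw [himg]; exact hB.secundive, by omega, by omega⟩

end NS

theorem stmt18 (S : Set ℕ) (hS : IsNumericalSemigroup S)
    (h : ew S + 1 = genus S) :
    (∃ m : ℕ, 4 ≤ m ∧ S = {0, m, m + 1} ∪ {n : ℕ | 2 * m ≤ n}) ∨
    ∃ k ∈ S, IsNumericalSemigroup (slide k '' S) ∧
      Secundive (slide k '' S) ∧
      genus (slide k '' S) = genus S - 1 ∧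
      ew (slide k '' S) = genus S - 2 := by
  classical
  open NS in
  have hgne : {n : ℕ | n ∉ S}.Nonempty := by
    rw [Set.nonempty_iff_ne_empty]
    intro hc
    have : genus S = 0 := by rw [genus, hc, Set.ncard_empty]
    omega
  have h1S : 1 ∉ S := by
    intro h1
    have hall : ∀ n, n ∈ S := by
      intro n
      induction n with
      | zero => exact hS.1
      | succ u ih => exact hS.2.2 u ih 1 h1
    obtain ⟨g₀, hg₀⟩ := hgne
    exact hg₀ (hall g₀)
  obtain ⟨F, hF, hFmax⟩ : ∃ F, F ∉ S ∧ ∀ b, b ∉ S → b ≤ F := by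
    have htne : (hS.2.1.toFinset).Nonempty := by
      rwa [Set.Finite.toFinset_nonempty]
    refine ⟨hS.2.1.toFinset.max' htne, ?_, ?_⟩
    · have := hS.2.1.toFinset.max'_mem htne
      rwa [Set.Finite.mem_toFinset] at this
    · intro b hb
      exact hS.2.1.toFinset.le_max' b (by rwa [Set.Finite.mem_toFinset])
  have hFS : ∀ s, F < s → s ∈ S := by
    intro s hs
    by_contra hc
    have := hFmax s hc
    omega
  have hF1 : 1 ≤ F := hFmax 1 h1S
  have hSposne : {s | s ∈ S ∧ 0 < s}.Nonempty := ⟨F+1, hFS _ (by omega), by omega⟩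
  set m := sInf {s | s ∈ S ∧ 0 < s} with hmdef
  have hmS : m ∈ S := (Nat.sInf_mem hSposne).1
  have hm0 : 0 < m := (Nat.sInf_mem hSposne).2
  have hmin : ∀ s ∈ S, 0 < s → m ≤ s := fun s hh1 hh2 => Nat.sInf_le ⟨hh1, hh2⟩
  have hm2 : 2 ≤ m := by
    have hne1 : m ≠ 1 := fun hcc => h1S (hcc ▸ hmS)
    omega
  have hmul : ∀ i : ℕ, m * i ∈ S := by
    intro i
    induction i with
    | zero => simpa using hS.1
    | succ n ih =>
      have := hS.2.2 _ ih _ hmS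
      rw [Nat.mul_succ]
      exact this
  have hdvdS : ∀ s, m ∣ s → s ∈ S := by
    rintro s ⟨i, rfl⟩
    exact hmul i
  have hdec := decomp hS m hmS hm2 hmin
  have hg1 : 1 ≤ genus S := by omega
  have hE : (Eset S m).ncard + 1 = m - 1 := by omega
  by_cases hFm : F < m + 1
  · -- degenerate : m = 2, S = {0} ∪ [2, ∞)
    have hEempty : Eset S m = ∅ := by
      ext ⟨a, b⟩
      simp only [Eset, Set.mem_setOf_eq, Set.mem_empty_iff_false, iff_false]
      rintro ⟨hma, hab, hgen, hb⟩
      have := hFmax b hb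
      omega
    have hm2' : m = 2 := by
      rw [hEempty, Set.ncard_empty] at hE
      omega
    have h2S : (2:ℕ) ∈ S := hm2' ▸ hmS
    have hFne2 : F ≠ 2 := fun hcc => hF (hcc ▸ h2S)
    have hFle1 : F ≤ 1 := by omega
    right
    refine ⟨2, h2S, ?_⟩
    have hTuniv : slide 2 '' S = Set.univ := by
      ext y
      simp only [Set.mem_univ, iff_true]
      rw [mem_slide_image (by omega) h1S]
      by_cases hy : phi 2 y = 0
      · rw [hy]; exact hS.1
      · have hy1 : phi 2 y ≠ 1 := phi_ne_one (by omega) y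
        exact hFS _ (by omega)
    have hgenS : genus S = 1 := by
      have hgap1 : {n : ℕ | n ∉ S} = {1} := by
        ext n
        simp only [Set.mem_setOf_eq, Set.mem_singleton_iff]
        constructor
        · intro hn
          have h1' := hFmax n hn
          have h0' : n ≠ 0 := fun hcc => hn (hcc ▸ hS.1)
          omega
        · rintro rfl
          exact h1S
      rw [genus, hgap1, Set.ncard_singleton]
    rw [hTuniv, hgenS]
    refine ⟨⟨trivial, by simp, fun a _ b _ => trivial⟩, ?_, ?_, ?_⟩
    · intro f n₁ n₂ hf _ _ _ _ _
      exact absurd trivial hf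
    · show genus Set.univ = 0
      have : {n : ℕ | n ∉ (Set.univ : Set ℕ)} = ∅ := by simp
      rw [genus, this, Set.ncard_empty]
    · show ew Set.univ = 0
      have : {p : ℕ × ℕ | p.1 < p.2 ∧ IsGenerator Set.univ p.1 ∧ p.2 ∉ Set.univ} = ∅ := by
        ext p
        simp
      rw [ew, this, Set.ncard_empty]
  · push_neg at hFm
    have hstar := star hS hm2 hmS hmin hF hFmax hE
    set A := {a : ℕ | a ∈ S ∧ ¬ m ∣ a ∧ a ≤ F} with hAdef
    have hband : BandHyp m (F+1) A := by
      refine ⟨hm2, by omega, ?_⟩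
      rintro a ⟨haS, hand, haF⟩
      have ha0 : 0 < a := by
        rcases Nat.eq_zero_or_pos a with h'|h'
        · exfalso; apply hand; rw [h']; exact dvd_zero m
        · exact h'
      have h1' := hmin a haS ha0
      have hma : m < a := by
        rcases eq_or_lt_of_le h1' with h'|h'
        · exfalso; apply hand; rw [← h']
        · exact h'
      have hane : a ≠ F := fun hcc => hF (hcc ▸ haS)
      have hst := hstar a haS hand
      exact ⟨hma, by omega, by omega, hand⟩
    have hSband : S = bandSet m (F+1) A := by
      ext s
      simp only [bandSet, Set.mem_union, Set.mem_setOf_eq, Set.mem_Ici]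
      constructor
      · intro hs
        by_cases hd : m ∣ s
        · exact Or.inl (Or.inl hd)
        · by_cases hsF : s ≤ F
          · exact Or.inl (Or.inr ⟨hs, hd, hsF⟩)
          · exact Or.inr (by omega)
      · rintro ((hd | ⟨hs, _, _⟩) | hs)
        · exact hdvdS s hd
        · exact hs
        · exact hFS s (by omega)
    have hnd : ¬ m ∣ ((F+1) - 1) := by
      intro hd
      simp only [Nat.add_sub_cancel] at hd
      exact hF (hdvdS F hd)
    have hpairs : (pairsSet m (F+1) A).ncard + 1 = m - 1 := by
      rw [hSband] at hE
      rwa [hband.eset_eq] at hE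
    by_cases hm1 : m + 1 ∈ A
    · -- case 2
      have hcle : F + 1 ≤ 2*m := by
        have h2' := hstar (m+1) hm1.1 hm1.2.1
        by_contra hcon
        push_neg at hcon
        have hFeq : F = 2*m := by omega
        apply hnd
        simp only [Nat.add_sub_cancel]
        exact hFeq ▸ (⟨2, by ring⟩ : m ∣ 2*m)
      rcases eq_or_lt_of_le hcle with hc2m | hc2m'
      · rw [hc2m] at hband hpairs hSband
        by_cases hex : ∃ a ∈ A, a ≠ m + 1
        · obtain ⟨j, hj1, hj2, hm4, hAeq⟩ := B1_structure hband hm1 hpairs hex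
          have h2m2A : 2*m - 2 ∈ A := by
            rw [hAeq]
            exact Or.inr ⟨by omega, by omega⟩
          obtain ⟨B, himg, hB, hp⟩ := case2B1 hband hm4 hj1 hj2 hAeq
          right
          exact ⟨2*m-2, h2m2A.1, finish hS h (by omega) h1S (by rw [hSband]; exact himg) hB hp⟩
        · push_neg at hex
          have hA1 : A = {m+1} := by
            ext a
            simp only [Set.mem_singleton_iff]
            exact ⟨fun ha => hex a ha, fun ha => ha ▸ hm1⟩
          have hm3 : 3 ≤ m := by
            have := (hband.hA _ hm1).2.1
            omega
          by_cases hm4 : 4 ≤ m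
          · left
            refine ⟨m, hm4, ?_⟩
            rw [hSband, band_decomp hband (le_refl _), hA1]
            ext t
            simp only [Set.mem_union, Set.mem_singleton_iff, Set.mem_Ici,
              Set.mem_insert_iff, Set.mem_setOf_eq]
            tauto
          · have hm3' : m = 3 := by omega
            right
            refine ⟨4, ?_, ?_⟩
            · have h4A : (4:ℕ) ∈ A := by
                rw [hA1]
                simp only [Set.mem_singleton_iff]
                omega
              exact h4A.1
            · have himg : slide 4 '' S = bandSet 2 4 ∅ := by
                rw [hSband, hA1, hm3']
                show slide 4 '' bandSet 3 6 {4} = bandSet 2 4 ∅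
                exact excep3
              have hB : BandHyp 2 4 ∅ := by
                refine ⟨by omega, by omega, ?_⟩
                rintro a ha
                exact absurd ha (Set.notMem_empty a)
              have hp : (pairsSet 2 4 (∅ : Set ℕ)).ncard + 1 = 2 - 1 := by
                have : pairsSet 2 4 (∅ : Set ℕ) = ∅ := by
                  ext ⟨a, b⟩
                  simp [pairsSet]
                rw [this, Set.ncard_empty]
              exact finish hS h (by omega) h1S himg hB hp
      · have hcle' : F + 1 ≤ 2*m - 1 := by omega
        obtain ⟨a₀, ha₀A, hne₀⟩ := smallA hband hm1 hcle' hpairs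
        have hbddA : BddAbove A := ⟨F, fun a ha => ha.2.2⟩
        have hAne : A.Nonempty := ⟨m+1, hm1⟩
        set K := sSup A with hKdef
        have hKA : K ∈ A := Nat.sSup_mem hAne hbddA
        have hKmax : ∀ a ∈ A, a ≤ K := fun a ha => le_csSup hbddA ha
        have hKne : m + 2 ≤ K := by
          have h1' := hKmax a₀ ha₀A
          have h2' := (hband.hA a₀ ha₀A).1
          omega
        have hkS : K ∈ S := hKA.1
        by_cases hKc : K + 3 ≤ F + 1
        · obtain ⟨B, himg, hB, hp⟩ := case2B2a hband hm1 hcle' hKA hKmax hKne hKc hpairs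
          right
          exact ⟨K, hkS, finish hS h (by omega) h1S (by rw [hSband]; exact himg) hB hp⟩
        · have hKc2 : K + 2 = F + 1 := by
            have := (hband.hA K hKA).2.1
            omega
          obtain ⟨B, himg, hB, hp⟩ := case2B2b hband hm1 hcle' hKA hKmax hKne hKc2 hnd hpairs
          right
          exact ⟨K, hkS, finish hS h (by omega) h1S (by rw [hSband]; exact himg) hB hp⟩
    · obtain ⟨B, himg, hB, hp⟩ := case1 hband (by omega) hnd hm1 hpairs
      right
      exact ⟨m, hmS, finish hS h hm2 h1S (by rw [hSband]; exact himg) hB hp⟩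
end
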